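/- arXiv:2107.03514 — 9 statements merged into one kernel-verified Lean document; each statement's English description precedes it below -/
import Mathlib

section
/- Let n ≥ 2 and 1 ≤ k ≤ n be integers and set l_k = ((n-k)/n)^(1/k). Then there exists a twice continuously differentiable function f : ℝ → ℝ, defined for all t ∈ ℝ, satisfying the ODE k·f''(t)/(f(t)^(k-1)·(1-f'(t)²)^(k/2+1)) + (n-k)/(f(t)^k·(1-f'(t)²)^(k/2)) = n for all t, with the following properties: (1) 0 < f'(t) < 1 and f''(t) > 0 for all t ∈ ℝ; (2) lim_{t→-∞} f(t) = l_k; (3) max{l_k, t} < f(t) < √(1+t²) for all t; (4) there exist constants C > 0 and T > 0, depending only on n and k, such that |f(t) - √(1+t²)| < C·t^(-n-1) whenever t > T. -/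
open Filter Real

/-- `lk n k = ((n-k)/n)^(1/k)`. -/
noncomputable def lk (n k : ℕ) : ℝ := (((n : ℝ) - k) / n) ^ ((1 : ℝ) / k)

/-- An admissible semitrough profile for `(n, k)`: a `C²` function `f : ℝ → ℝ`
satisfying the constant `σ_k` curvature ODE together with the qualitative
properties (1)–(4). -/
def IsAdmissibleProfile (n k : ℕ) (f : ℝ → ℝ) : Prop :=
  ContDiff ℝ 2 f ∧
  (∀ t : ℝ,
      (k : ℝ) * deriv (deriv f) t /
          (f t ^ (k - 1) * (1 - deriv f t ^ 2) ^ ((k : ℝ) / 2 + 1)) +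
        ((n : ℝ) - k) / (f t ^ k * (1 - deriv f t ^ 2) ^ ((k : ℝ) / 2)) = n) ∧
  (∀ t : ℝ, 0 < deriv f t ∧ deriv f t < 1 ∧ 0 < deriv (deriv f) t) ∧
  Tendsto f atBot (nhds (lk n k)) ∧
  (∀ t : ℝ, max (lk n k) t < f t ∧ f t < Real.sqrt (1 + t ^ 2)) ∧
  (∃ C > (0 : ℝ), ∃ T > (0 : ℝ), ∀ t > T,
      |f t - Real.sqrt (1 + t ^ 2)| < C * t ^ (-(n : ℝ) - 1))

open Topology

namespace ST

noncomputable def A (n k : ℕ) : ℝ := n / (k * lk n k ^ (n - k))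

noncomputable def hh (n k : ℕ) (x : ℝ) : ℝ := A n k * x ^ (n - k) / (1 + A n k * x ^ n)

noncomputable def hd (n k : ℕ) (x : ℝ) : ℝ :=
  (A n k * (((n : ℝ) - k) * x ^ (n - k - 1)) * (1 + A n k * x ^ n)
    - A n k * x ^ (n - k) * (A n k * ((n : ℝ) * x ^ (n - 1)))) / (1 + A n k * x ^ n) ^ 2

noncomputable def gg (n k : ℕ) (x : ℝ) : ℝ := Real.sqrt (1 - hh n k x ^ ((2 : ℝ) / k))

noncomputable def gd (n k : ℕ) (x : ℝ) : ℝ :=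
  (-(hd n k x * ((2 : ℝ) / k) * hh n k x ^ ((2 : ℝ) / k - 1))) / (2 * gg n k x)

section basic

variable {n k : ℕ} (hn : 2 ≤ n) (hk1 : 1 ≤ k) (hkn : k ≤ n)
include hn hk1 hkn
set_option linter.unusedSectionVars false

lemma nR_pos : (0:ℝ) < n := by exact_mod_cast Nat.lt_of_lt_of_le Nat.zero_lt_two hn

lemma kR_pos : (0:ℝ) < k := by exact_mod_cast hk1

lemma base_nonneg : (0:ℝ) ≤ ((n : ℝ) - k) / n := by
  apply div_nonneg _ (nR_pos hn hk1 hkn).le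
  have : (k:ℝ) ≤ n := by exact_mod_cast hkn
  linarith

lemma base_lt_one : ((n : ℝ) - k) / n < 1 := by
  rw [div_lt_one (nR_pos hn hk1 hkn)]
  have := kR_pos hn hk1 hkn
  linarith

lemma lk_nonneg : 0 ≤ lk n k := Real.rpow_nonneg (base_nonneg hn hk1 hkn) _

lemma lk_lt_one : lk n k < 1 :=
  Real.rpow_lt_one (base_nonneg hn hk1 hkn) (base_lt_one hn hk1 hkn)
    (by positivity)

lemma lk_pow_k : lk n k ^ k = ((n : ℝ) - k) / n := by
  rw [lk, ← Real.rpow_natCast (_ ^ _) k, ← Real.rpow_mul (base_nonneg hn hk1 hkn),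
    one_div, inv_mul_cancel₀ (by exact_mod_cast hk1.trans_lt' Nat.zero_lt_one |>.ne' : (k:ℝ) ≠ 0), Real.rpow_one]

lemma lk_pow_nk_pos : 0 < lk n k ^ (n - k) := by
  rcases eq_or_lt_of_le hkn with h | h
  · simp [h]
  · apply pow_pos
    rw [lk]
    apply Real.rpow_pos_of_pos
    apply div_pos _ (nR_pos hn hk1 hkn)
    have : (k:ℝ) < n := by exact_mod_cast h
    linarith

lemma A_pos : 0 < A n k :=
  div_pos (nR_pos hn hk1 hkn) (mul_pos (kR_pos hn hk1 hkn) (lk_pow_nk_pos hn hk1 hkn))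

lemma A_mul_lk_pow_nk : A n k * lk n k ^ (n - k) = (n : ℝ) / k := by
  have h1 := (lk_pow_nk_pos hn hk1 hkn).ne'
  have h2 := (kR_pos hn hk1 hkn).ne'
  rw [A, div_mul_eq_mul_div, mul_comm (k:ℝ), ← div_div, mul_div_assoc, div_self h1, mul_one]

lemma A_mul_lk_pow_n : A n k * lk n k ^ n = ((n : ℝ) - k) / k := by
  have hsplit : lk n k ^ n = lk n k ^ k * lk n k ^ (n - k) := by
    rw [← pow_add, Nat.add_sub_cancel' hkn]
  rw [hsplit, ← mul_assoc, mul_comm (A n k), mul_assoc, A_mul_lk_pow_nk hn hk1 hkn,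
    lk_pow_k hn hk1 hkn]
  field_simp


/-- auxiliary polynomial `ψ x = A x^(n-k) - A x^n`. -/
lemma ps_at_lk : A n k * lk n k ^ (n - k) - A n k * lk n k ^ n = 1 := by
  rw [A_mul_lk_pow_nk hn hk1 hkn, A_mul_lk_pow_n hn hk1 hkn]
  field_simp
  ring

lemma hasDerivAt_ps (x : ℝ) :
    HasDerivAt (fun y : ℝ => A n k * y ^ (n - k) - A n k * y ^ n)
      (A n k * (((n:ℕ) - k : ℕ) * x ^ (n - k - 1)) - A n k * ((n:ℝ) * x ^ (n - 1))) x := by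
  have h1 : HasDerivAt (fun y : ℝ => y ^ (n - k)) (((n - k : ℕ):ℝ) * x ^ (n - k - 1)) x :=
    hasDerivAt_pow _ _
  have h2 : HasDerivAt (fun y : ℝ => y ^ n) (((n:ℕ):ℝ) * x ^ (n - 1)) x := hasDerivAt_pow _ _
  exact ((h1.const_mul (A n k)).sub (h2.const_mul (A n k)))

lemma psd_neg {x : ℝ} (hx : lk n k < x) :
    A n k * (((n:ℕ) - k : ℕ) * x ^ (n - k - 1)) - A n k * ((n:ℝ) * x ^ (n - 1)) < 0 := by
  have hA := A_pos hn hk1 hkn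
  have hx0 : 0 < x := lt_of_le_of_lt (lk_nonneg hn hk1 hkn) hx
  rcases eq_or_lt_of_le hkn with h | h
  · subst h
    simp only [Nat.sub_self, Nat.cast_zero, zero_mul, mul_zero, zero_sub, neg_neg, neg_lt_zero]
    positivity
  · have hnk1 : 1 ≤ n - k := Nat.le_sub_of_add_le (by omega)
    have hfac : x ^ (n - 1) = x ^ (n - k - 1) * x ^ k := by
      rw [← pow_add]; congr 1; omega
    rw [hfac]
    have hcast : (((n:ℕ) - k : ℕ):ℝ) = (n:ℝ) - k := by
      push_cast [Nat.cast_sub hkn]; ring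
    rw [hcast]
    have hkey : (n:ℝ) - k < (n:ℝ) * x ^ k := by
      have hLk : (n:ℝ) * lk n k ^ k = (n:ℝ) - k := by
        rw [lk_pow_k hn hk1 hkn]; field_simp
      rw [← hLk]
      have : lk n k ^ k < x ^ k := by
        apply pow_lt_pow_left₀ hx (lk_nonneg hn hk1 hkn)
        omega
      nlinarith [nR_pos hn hk1 hkn]
    have hxp : 0 < x ^ (n - k - 1) := pow_pos hx0 _
    nlinarith [mul_pos hA hxp]

lemma ps_lt_one {x : ℝ} (hx : lk n k < x) :
    A n k * x ^ (n - k) - A n k * x ^ n < 1 := by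
  have hanti : StrictAntiOn (fun y : ℝ => A n k * y ^ (n - k) - A n k * y ^ n)
      (Set.Ici (lk n k)) := by
    apply strictAntiOn_of_deriv_neg (convex_Ici _)
    · exact (Continuous.continuousOn (by continuity))
    · intro y hy
      rw [interior_Ici] at hy
      rw [(hasDerivAt_ps hn hk1 hkn y).deriv]
      exact psd_neg hn hk1 hkn hy
  have := hanti (Set.self_mem_Ici) (Set.mem_Ici.mpr hx.le) hx
  simpa [ps_at_lk hn hk1 hkn] using this

lemma one_add_pos {x : ℝ} (hx : 0 ≤ x) : 0 < 1 + A n k * x ^ n := by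
  have hA := A_pos hn hk1 hkn
  positivity

lemma hh_pos {x : ℝ} (hx : lk n k < x) : 0 < hh n k x := by
  have hx0 : 0 < x := lt_of_le_of_lt (lk_nonneg hn hk1 hkn) hx
  have hA := A_pos hn hk1 hkn
  rw [hh]
  exact div_pos (by positivity) (one_add_pos hn hk1 hkn hx0.le)

lemma hh_lt_one {x : ℝ} (hx : lk n k < x) : hh n k x < 1 := by
  have hx0 : 0 < x := lt_of_le_of_lt (lk_nonneg hn hk1 hkn) hx
  rw [hh, div_lt_one (one_add_pos hn hk1 hkn hx0.le)]
  have := ps_lt_one hn hk1 hkn hx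
  linarith

lemma w_pos {x : ℝ} (hx : lk n k < x) : 0 < hh n k x ^ ((2:ℝ)/k) :=
  Real.rpow_pos_of_pos (hh_pos hn hk1 hkn hx) _

lemma w_lt_one {x : ℝ} (hx : lk n k < x) : hh n k x ^ ((2:ℝ)/k) < 1 :=
  Real.rpow_lt_one (hh_pos hn hk1 hkn hx).le (hh_lt_one hn hk1 hkn hx)
    (by have := kR_pos hn hk1 hkn; positivity)

lemma gg_pos {x : ℝ} (hx : lk n k < x) : 0 < gg n k x := by
  rw [gg]
  have := w_lt_one hn hk1 hkn hx
  exact Real.sqrt_pos.mpr (by linarith)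

lemma gg_lt_one {x : ℝ} (hx : lk n k < x) : gg n k x < 1 := by
  rw [gg]
  have h1 := w_pos hn hk1 hkn hx
  have : (1:ℝ) = Real.sqrt 1 := by simp
  rw [this]
  exact Real.sqrt_lt_sqrt (by have := w_lt_one hn hk1 hkn hx; linarith) (by linarith)

lemma gg_sq {x : ℝ} (hx : lk n k < x) : gg n k x ^ 2 = 1 - hh n k x ^ ((2:ℝ)/k) := by
  rw [gg, sq_sqrt]
  have := w_lt_one hn hk1 hkn hx
  linarith


lemma hasDerivAt_hh {x : ℝ} (hx : 0 < x) : HasDerivAt (hh n k) (hd n k x) x := by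
  have hden : (1 + A n k * x ^ n) ≠ 0 := (one_add_pos hn hk1 hkn hx.le).ne'
  have h1 : HasDerivAt (fun y : ℝ => A n k * y ^ (n - k))
      (A n k * (((n - k : ℕ):ℝ) * x ^ (n - k - 1))) x :=
    (hasDerivAt_pow _ _).const_mul _
  have h2 : HasDerivAt (fun y : ℝ => 1 + A n k * y ^ n)
      (A n k * (((n:ℕ):ℝ) * x ^ (n - 1))) x :=
    ((hasDerivAt_pow _ _).const_mul _).const_add _
  have : HasDerivAt (hh n k) _ x := h1.div h2 hden
  convert this using 1
  rw [hd]
  have hcast : (((n:ℕ) - k : ℕ):ℝ) = (n:ℝ) - k := by push_cast [Nat.cast_sub hkn]; ring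
  rw [hcast]

lemma hd_neg {x : ℝ} (hx : lk n k < x) : hd n k x < 0 := by
  have hA := A_pos hn hk1 hkn
  have hx0 : 0 < x := lt_of_le_of_lt (lk_nonneg hn hk1 hkn) hx
  have hden : (0:ℝ) < (1 + A n k * x ^ n) ^ 2 := by positivity
  rw [hd, div_neg_iff]
  right
  refine ⟨?_, hden⟩
  rcases eq_or_lt_of_le hkn with h | h
  · obtain ⟨j, rfl⟩ : ∃ j, n = j + 1 := ⟨n - 1, by omega⟩
    subst h
    simp only [Nat.sub_self, pow_zero, Nat.add_sub_cancel, Nat.cast_add, Nat.cast_one]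
    have : ((j:ℝ)+1) - ((j:ℝ)+1) = 0 := by ring
    rw [this]
    have hp : 0 < x ^ j := pow_pos hx0 _
    have hD : 0 < 1 + A (j+1) (j+1) * x ^ (j+1) := one_add_pos hn hk1 hkn hx0.le
    have hj : (0:ℝ) < (j:ℝ) + 1 := by positivity
    nlinarith [mul_pos (mul_pos hA hA) (mul_pos hj hp)]
  · obtain ⟨m, rfl⟩ : ∃ m, n = m + 1 + k := ⟨n - k - 1, by omega⟩
    simp only [show m + 1 + k - k - 1 = m from by omega, show m + 1 + k - k = m + 1 from by omega,
      show m + 1 + k - 1 = m + k from by omega]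
    have hkey : ((m:ℝ) + 1) < (k:ℝ) * (A (m+1+k) k * x ^ (m+1+k)) := by
      have hALn : A (m+1+k) k * lk (m+1+k) k ^ (m+1+k) = (((m+1+k:ℕ):ℝ) - k)/k :=
        A_mul_lk_pow_n hn hk1 hkn
      have hxn : lk (m+1+k) k ^ (m+1+k) < x ^ (m+1+k) :=
        pow_lt_pow_left₀ hx (lk_nonneg hn hk1 hkn) (by omega)
      have hk0 := kR_pos hn hk1 hkn
      have h3 : (((m+1+k:ℕ):ℝ) - k)/k < A (m+1+k) k * x ^ (m+1+k) := by
        rw [← hALn]; nlinarith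
      rw [div_lt_iff₀ hk0] at h3
      push_cast at h3 ⊢
      nlinarith
    have hfac : A (m+1+k) k * (((m+1+k:ℕ):ℝ) - k) * x ^ m * (1 + A (m+1+k) k * x ^ (m+1+k))
        - A (m+1+k) k * x ^ (m+1) * (A (m+1+k) k * (((m+1+k:ℕ):ℝ) * x ^ (m + k)))
        = A (m+1+k) k * x ^ m *
          (((m:ℝ)+1) + (((m:ℝ)+1) - ((m:ℝ)+1+k)) * (A (m+1+k) k * x ^ (m+1+k))) := by
      push_cast
      ring
    have hp : 0 < x ^ m := pow_pos hx0 _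
    calc A (m+1+k) k * ((((m+1+k:ℕ):ℝ) - k) * x ^ m) * (1 + A (m+1+k) k * x ^ (m+1+k))
        - A (m+1+k) k * x ^ (m+1) * (A (m+1+k) k * (((m+1+k:ℕ):ℝ) * x ^ (m + k)))
        = A (m+1+k) k * x ^ m *
          (((m:ℝ)+1) - (k:ℝ) * (A (m+1+k) k * x ^ (m+1+k))) := by
          push_cast
          ring
      _ < 0 := mul_neg_of_pos_of_neg (by positivity) (by linarith)

/-- the key algebraic identity `-x h' + (n-k) h = n x^k h²`. -/
lemma ode_alg {x : ℝ} (hx : 0 < x) :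
    -x * hd n k x + ((n:ℝ) - k) * hh n k x = (n:ℝ) * x ^ k * hh n k x ^ 2 := by
  have hden : (1 + A n k * x ^ n) ≠ 0 := (one_add_pos hn hk1 hkn hx.le).ne'
  rw [hd, hh]
  rcases eq_or_lt_of_le hkn with h | h
  · obtain ⟨j, rfl⟩ : ∃ j, n = j + 1 := ⟨n - 1, by omega⟩
    subst h
    simp only [Nat.sub_self, pow_zero, Nat.add_sub_cancel]
    have : ((j:ℝ)+1) - ((j+1:ℕ):ℝ) = 0 := by push_cast; ring
    field_simp
    ring
  · obtain ⟨m, rfl⟩ : ∃ m, n = m + 1 + k := ⟨n - k - 1, by omega⟩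
    simp only [show m + 1 + k - k - 1 = m from by omega, show m + 1 + k - k = m + 1 from by omega,
      show m + 1 + k - 1 = m + k from by omega]
    field_simp
    push_cast
    ring


lemma hasDerivAt_w {x : ℝ} (hx : lk n k < x) :
    HasDerivAt (fun y => hh n k y ^ ((2:ℝ)/k))
      (hd n k x * ((2:ℝ)/k) * hh n k x ^ ((2:ℝ)/k - 1)) x := by
  have hx0 : 0 < x := lt_of_le_of_lt (lk_nonneg hn hk1 hkn) hx
  exact (hasDerivAt_hh hn hk1 hkn hx0).rpow_const (Or.inl (hh_pos hn hk1 hkn hx).ne')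

lemma hasDerivAt_gg {x : ℝ} (hx : lk n k < x) : HasDerivAt (gg n k) (gd n k x) x := by
  have hu : HasDerivAt (fun y => 1 - hh n k y ^ ((2:ℝ)/k))
      (-(hd n k x * ((2:ℝ)/k) * hh n k x ^ ((2:ℝ)/k - 1))) x := by
    simpa using (hasDerivAt_w hn hk1 hkn hx).const_sub 1
  have hne : 1 - hh n k x ^ ((2:ℝ)/k) ≠ 0 := by
    have := w_lt_one hn hk1 hkn hx; linarith
  have := hu.sqrt hne
  exact this

lemma gd_pos {x : ℝ} (hx : lk n k < x) : 0 < gd n k x := by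
  have hhd := hd_neg hn hk1 hkn hx
  have hH := hh_pos hn hk1 hkn hx
  have hg := gg_pos hn hk1 hkn hx
  rw [gd]
  apply div_pos _ (by linarith)
  have hp : 0 < hh n k x ^ ((2:ℝ)/k - 1) := Real.rpow_pos_of_pos hH _
  have hk0 := kR_pos hn hk1 hkn
  nlinarith [mul_pos (mul_pos (neg_pos.2 hhd) (by positivity : (0:ℝ) < 2/(k:ℝ))) hp]

lemma ode_key {x : ℝ} (hx : lk n k < x) :
    (k:ℝ) * (gd n k x * gg n k x) / (x ^ (k-1) * (1 - gg n k x ^ 2) ^ ((k:ℝ)/2+1))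
      + ((n:ℝ) - k) / (x ^ k * (1 - gg n k x ^ 2) ^ ((k:ℝ)/2)) = n := by
  have hx0 : 0 < x := lt_of_le_of_lt (lk_nonneg hn hk1 hkn) hx
  have hH0 := hh_pos hn hk1 hkn hx
  have hw0 := w_pos hn hk1 hkn hx
  have hg0 := gg_pos hn hk1 hkn hx
  have hk0 := kR_pos hn hk1 hkn
  have h1mg : 1 - gg n k x ^ 2 = hh n k x ^ ((2:ℝ)/k) := by
    have := gg_sq hn hk1 hkn hx; linarith
  have hwk : (hh n k x ^ ((2:ℝ)/k)) ^ ((k:ℝ)/2) = hh n k x := by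
    rw [← Real.rpow_mul hH0.le]
    have he : ((2:ℝ)/k) * ((k:ℝ)/2) = 1 := by field_simp
    rw [he, Real.rpow_one]
  have hwk1 : (hh n k x ^ ((2:ℝ)/k)) ^ ((k:ℝ)/2 + 1)
      = hh n k x * hh n k x ^ ((2:ℝ)/k) := by
    rw [← Real.rpow_mul hH0.le]
    have he : ((2:ℝ)/k) * ((k:ℝ)/2 + 1) = 1 + 2/(k:ℝ) := by field_simp
    rw [he, Real.rpow_add hH0, Real.rpow_one]
  have hgd : gd n k x * gg n k x
      = -(hd n k x * ((2:ℝ)/k) * (hh n k x ^ ((2:ℝ)/k) / hh n k x)) / 2 := by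
    rw [gd]
    have h21 : hh n k x ^ ((2:ℝ)/k - 1) = hh n k x ^ ((2:ℝ)/k) / hh n k x := by
      rw [Real.rpow_sub hH0, Real.rpow_one]
    rw [h21]
    field_simp
  have hxk : (x:ℝ) ^ k = x ^ (k-1) * x := by rw [← pow_succ]; congr 1; omega
  have halg := ode_alg hn hk1 hkn hx0
  rw [hxk] at halg
  have hxk1 : (0:ℝ) < x ^ (k-1) := pow_pos hx0 _
  have hhd_eq : hd n k x = (((n:ℝ)-k) * hh n k x - (n:ℝ)*(x^(k-1)*x)* hh n k x^2)/x := by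
    rw [eq_div_iff hx0.ne']
    linarith [halg]
  rw [h1mg, hwk, hwk1, hgd, hxk, hhd_eq]
  field_simp
  ring

lemma continuousOn_inv_gg : ContinuousOn (fun s => (gg n k s)⁻¹) (Set.Ioi (lk n k)) := by
  intro x hx
  exact (((hasDerivAt_gg hn hk1 hkn hx).continuousAt).continuousWithinAt).inv₀
    (gg_pos hn hk1 hkn hx).ne'


end basic

noncomputable def tau (n k : ℕ) (x : ℝ) : ℝ := ∫ s in (1:ℝ)..x, (gg n k s)⁻¹

noncomputable def MM (n k : ℕ) : ℝ := A n k * n * k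

section tau

variable {n k : ℕ} (hn : 2 ≤ n) (hk1 : 1 ≤ k) (hkn : k ≤ n)
include hn hk1 hkn
set_option linter.unusedSectionVars false

lemma hasDerivAt_tau {x : ℝ} (hx : lk n k < x) :
    HasDerivAt (tau n k) (gg n k x)⁻¹ x := by
  apply intervalIntegral.integral_hasDerivAt_right
  · apply ContinuousOn.intervalIntegrable
    apply (continuousOn_inv_gg hn hk1 hkn).mono
    intro y hy
    rcases Set.mem_uIcc.1 hy with h | h
    · exact lt_of_lt_of_le (lk_lt_one hn hk1 hkn) h.1
    · exact lt_of_lt_of_le hx h.1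
  · exact (continuousOn_inv_gg hn hk1 hkn).stronglyMeasurableAtFilter isOpen_Ioi x hx
  · exact (continuousOn_inv_gg hn hk1 hkn).continuousAt (Ioi_mem_nhds hx)

lemma tau_one : tau n k 1 = 0 := intervalIntegral.integral_same

lemma continuousOn_tau : ContinuousOn (tau n k) (Set.Ioi (lk n k)) :=
  fun x hx => ((hasDerivAt_tau hn hk1 hkn hx).continuousAt).continuousWithinAt

lemma strictMonoOn_tau : StrictMonoOn (tau n k) (Set.Ioi (lk n k)) := by
  apply strictMonoOn_of_deriv_pos (convex_Ioi _) (continuousOn_tau hn hk1 hkn)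
  intro x hx
  rw [interior_Ioi] at hx
  rw [(hasDerivAt_tau hn hk1 hkn hx).deriv]
  exact inv_pos.2 (gg_pos hn hk1 hkn hx)

lemma strictMonoOn_zeta : StrictMonoOn (fun x => tau n k x - x) (Set.Ioi (lk n k)) := by
  apply strictMonoOn_of_deriv_pos (convex_Ioi _)
  · exact (continuousOn_tau hn hk1 hkn).sub (continuous_id.continuousOn)
  · intro x hx
    rw [interior_Ioi] at hx
    rw [((hasDerivAt_tau hn hk1 hkn hx).fun_sub (hasDerivAt_id' x)).deriv]
    have h1 := gg_pos hn hk1 hkn hx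
    have h2 := gg_lt_one hn hk1 hkn hx
    have : 1 < (gg n k x)⁻¹ := (one_lt_inv₀ h1).2 h2
    linarith

lemma tau_ge : ∀ x ≥ (1:ℝ), x - 1 ≤ tau n k x := by
  intro x hx
  have h1 : (1:ℝ) ∈ Set.Ioi (lk n k) := lk_lt_one hn hk1 hkn
  have hx' : x ∈ Set.Ioi (lk n k) := lt_of_lt_of_le (lk_lt_one hn hk1 hkn) hx
  rcases eq_or_lt_of_le hx with rfl | hlt
  · simp [tau_one hn hk1 hkn]
  · have := (strictMonoOn_zeta hn hk1 hkn) h1 hx' hlt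
    simp only [tau_one hn hk1 hkn] at this
    linarith

lemma MM_pos : 0 < MM n k := by
  have := A_pos hn hk1 hkn
  have := nR_pos hn hk1 hkn
  have := kR_pos hn hk1 hkn
  rw [MM]; positivity

lemma pow_sub_le_aux (m : ℕ) {a b : ℝ} (hb : 0 ≤ b) (hba : b ≤ a) (ha : a ≤ 1) :
    a ^ m - b ^ m ≤ m * (a - b) := by
  induction m with
  | zero => simp
  | succ i ih =>
    have hia : a ^ i ≤ 1 := pow_le_one₀ (hb.trans hba) ha
    have hbi : 0 ≤ b ^ i := pow_nonneg hb i
    have : a ^ (i+1) - b ^ (i+1) = a * (a ^ i - b ^ i) + b ^ i * (a - b) := by ring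
    rw [this]
    push_cast
    have h1 : a * (a ^ i - b ^ i) ≤ a ^ i - b ^ i := by
      have hd : 0 ≤ a ^ i - b ^ i := by
        have := pow_le_pow_left₀ hb hba i
        linarith
      nlinarith [hb.trans hba]
    have h2 : b ^ i * (a - b) ≤ a - b := by
      have hbi1 : b ^ i ≤ 1 := pow_le_one₀ hb (hba.trans ha)
      nlinarith
    linarith

lemma neg_psd_le {x : ℝ} (hx : lk n k < x) (hx1 : x ≤ 1) :
    -(A n k * (((n:ℕ) - k : ℕ) * x ^ (n - k - 1)) - A n k * ((n:ℝ) * x ^ (n - 1)))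
      ≤ MM n k * (x - lk n k) := by
  have hA := A_pos hn hk1 hkn
  have hL0 := lk_nonneg hn hk1 hkn
  have hx0 : 0 < x := lt_of_le_of_lt hL0 hx
  rw [MM]
  rcases eq_or_lt_of_le hkn with h | h
  · subst h
    simp only [Nat.sub_self, Nat.cast_zero, zero_mul, mul_zero, zero_sub, neg_neg]
    have hkinv : ((1:ℝ)/k) ≠ 0 := by
      have := kR_pos hn hk1 hkn; positivity
    have hLz : lk k k = 0 := by
      rw [lk, sub_self, zero_div, Real.zero_rpow hkinv]
    have hpow : x ^ (k-1) ≤ x := by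
      calc x ^ (k-1) ≤ x ^ 1 := pow_le_pow_of_le_one hx0.le hx1 (by omega)
        _ = x := pow_one x
    rw [hLz, sub_zero]
    have hk1' : (1:ℝ) ≤ (k:ℝ) := by exact_mod_cast hk1
    have hAk : 0 < A k k * (k:ℝ) := mul_pos hA (kR_pos hn hk1 hkn)
    calc A k k * ((k:ℝ) * x ^ (k-1)) ≤ A k k * ((k:ℝ) * x) := by nlinarith
      _ = A k k * (k:ℝ) * x := by ring
      _ ≤ A k k * (k:ℝ) * ((k:ℝ) * x) := by
          nlinarith [mul_nonneg (mul_pos hAk hx0).le (by linarith : (0:ℝ) ≤ (k:ℝ) - 1)]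
      _ = A k k * (k:ℝ) * (k:ℝ) * x := by ring
  · have e1 : x ^ (n-1) = x ^ (n-k-1) * x ^ k := by rw [← pow_add]; congr 1; omega
    have hcast : (((n:ℕ) - k : ℕ):ℝ) = (n:ℝ) - k := by push_cast [Nat.cast_sub hkn]; ring
    have hnlk : (n:ℝ) * lk n k ^ k = (n:ℝ) - k := by
      rw [lk_pow_k hn hk1 hkn, mul_comm, div_mul_cancel₀ _ (nR_pos hn hk1 hkn).ne']
    have hps : x ^ k - lk n k ^ k ≤ k * (x - lk n k) :=
      pow_sub_le_aux hn hk1 hkn k hL0 hx.le hx1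
    have hxp1 : x ^ (n-k-1) ≤ 1 := pow_le_one₀ hx0.le hx1
    have hxp0 : 0 < x ^ (n-k-1) := pow_pos hx0 _
    rw [hcast, e1]
    -- -(A*((n-k)*x^{n-k-1}) - A*(n*x^{n-k-1}x^k)) = A x^{n-k-1} (n x^k - (n-k)) = A x^{n-k-1} n (x^k - lk^k)
    have key : -(A n k * (((n:ℝ) - k) * x ^ (n-k-1)) - A n k * ((n:ℝ) * (x ^ (n-k-1) * x ^ k)))
        = A n k * x ^ (n-k-1) * ((n:ℝ) * (x ^ k - lk n k ^ k)) := by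
      rw [mul_sub (n:ℝ) (x^k) (lk n k ^ k), hnlk]
      ring
    rw [key]
    have hnn := nR_pos hn hk1 hkn
    have h0 : 0 ≤ (n:ℝ) * (x ^ k - lk n k ^ k) := by
      have hle : lk n k ^ k ≤ x ^ k := pow_le_pow_left₀ hL0 hx.le k
      nlinarith
    calc A n k * x ^ (n-k-1) * ((n:ℝ) * (x ^ k - lk n k ^ k))
        ≤ A n k * 1 * ((n:ℝ) * ((k:ℝ) * (x - lk n k))) := by
          apply mul_le_mul
          · exact mul_le_mul_of_nonneg_left hxp1 hA.le
          · exact mul_le_mul_of_nonneg_left hps hnn.le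
          · exact h0
          · positivity
      _ = A n k * (n:ℝ) * (k:ℝ) * (x - lk n k) := by ring


lemma ps_quad {x : ℝ} (hx : lk n k ≤ x) (hx1 : x ≤ 1) :
    1 ≤ A n k * x ^ (n-k) - A n k * x ^ n + MM n k / 2 * (x - lk n k) ^ 2 := by
  have hL1 := lk_lt_one hn hk1 hkn
  have hmono : MonotoneOn
      (fun y => A n k * y ^ (n-k) - A n k * y ^ n + MM n k / 2 * (y - lk n k) ^ 2)
      (Set.Icc (lk n k) 1) := by
    apply monotoneOn_of_deriv_nonneg (convex_Icc _ _)
    · exact Continuous.continuousOn (by continuity)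
    · intro y hy
      rw [interior_Icc] at hy
      exact (((hasDerivAt_ps hn hk1 hkn y).add
        (((hasDerivAt_id' y).sub_const (lk n k)).pow 2 |>.const_mul
          (MM n k / 2))).differentiableAt).differentiableWithinAt
    · intro y hy
      rw [interior_Icc] at hy
      have hder := ((hasDerivAt_ps hn hk1 hkn y).fun_add
        (((hasDerivAt_id' y).sub_const (lk n k)).fun_pow 2 |>.const_mul (MM n k / 2)))
      rw [hder.deriv]
      have := neg_psd_le hn hk1 hkn hy.1 hy.2.le
      push_cast
      norm_num
      linarith
  have h1 := hmono (Set.left_mem_Icc.2 (hL1.le)) (Set.mem_Icc.2 ⟨hx, hx1⟩) hx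
  have h0 := ps_at_lk hn hk1 hkn
  simp only [sub_self] at h1
  calc (1:ℝ) = A n k * lk n k ^ (n-k) - A n k * lk n k ^ n + MM n k / 2 * 0 ^ 2 := by
        rw [h0]; ring
    _ ≤ _ := h1

lemma hh_ge_ps {x : ℝ} (hx : lk n k < x) :
    A n k * x ^ (n-k) - A n k * x ^ n ≤ hh n k x := by
  have hx0 : 0 < x := lt_of_le_of_lt (lk_nonneg hn hk1 hkn) hx
  have hD := one_add_pos hn hk1 hkn hx0.le
  have hps := ps_lt_one hn hk1 hkn hx
  have hAx : 0 < A n k * x ^ n := by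
    have := A_pos hn hk1 hkn; positivity
  rw [hh, le_div_iff₀ hD]
  nlinarith [mul_nonneg (sub_nonneg.2 hps.le) hAx.le]

lemma gg_le_lin {x : ℝ} (hx : lk n k < x) (hx1 : x ≤ 1) :
    gg n k x ≤ Real.sqrt (MM n k) * (x - lk n k) := by
  have hH0 := hh_pos hn hk1 hkn hx
  have hH1 := hh_lt_one hn hk1 hkn hx
  have hMM := MM_pos hn hk1 hkn
  have h2k : (2:ℝ)/k ≤ 2 := by
    have hk1' : (1:ℝ) ≤ (k:ℝ) := by exact_mod_cast hk1
    rw [div_le_iff₀ (by linarith)]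
    nlinarith
  have hr : hh n k x ^ (2:ℝ) ≤ hh n k x ^ ((2:ℝ)/k) :=
    Real.rpow_le_rpow_of_exponent_ge hH0 hH1.le h2k
  have hsq : hh n k x ^ (2:ℝ) = hh n k x ^ (2:ℕ) := by
    rw [← Real.rpow_natCast (hh n k x) 2]; norm_num
  have hkey : 1 - hh n k x ^ ((2:ℝ)/k) ≤ MM n k * (x - lk n k) ^ 2 := by
    have hq := ps_quad hn hk1 hkn hx.le hx1
    have hge := hh_ge_ps hn hk1 hkn hx
    have : 1 - hh n k x ^ ((2:ℝ)/k) ≤ 1 - hh n k x ^ (2:ℕ) := by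
      rw [← hsq]; linarith
    have h2a : 1 - hh n k x ^ (2:ℕ) ≤ 2 * (1 - hh n k x) := by
      nlinarith [sq_nonneg (1 - hh n k x)]
    have h2b : 1 - hh n k x ≤ MM n k / 2 * (x - lk n k)^2 := by linarith
    calc 1 - hh n k x ^ ((2:ℝ)/k) ≤ 1 - hh n k x ^ (2:ℕ) := this
      _ ≤ 2*(1 - hh n k x) := h2a
      _ ≤ 2*(MM n k / 2 * (x - lk n k)^2) := by linarith
      _ = MM n k * (x - lk n k)^2 := by ring
  rw [gg]
  calc Real.sqrt (1 - hh n k x ^ ((2:ℝ)/k))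
      ≤ Real.sqrt (MM n k * (x - lk n k) ^ 2) := Real.sqrt_le_sqrt hkey
    _ = Real.sqrt (MM n k) * (x - lk n k) := by
        have hsq2 : MM n k * (x - lk n k)^2 = (Real.sqrt (MM n k) * (x - lk n k))^2 := by
          rw [mul_pow, Real.sq_sqrt hMM.le]
        rw [hsq2]
        exact Real.sqrt_sq (mul_nonneg (Real.sqrt_nonneg _) (by linarith))

lemma tendsto_tau_atBot : Tendsto (tau n k) (𝓝[>] (lk n k)) atBot := by
  have hMM := MM_pos hn hk1 hkn
  have hL1 := lk_lt_one hn hk1 hkn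
  set c : ℝ := (Real.sqrt (MM n k))⁻¹ with hc
  have hc0 : 0 < c := by positivity
  set r : ℝ → ℝ := fun x => tau n k x - c * Real.log (x - lk n k) with hrdef
  have hderiv : ∀ x ∈ Set.Ioo (lk n k) 1, HasDerivAt r
      ((gg n k x)⁻¹ - c * (x - lk n k)⁻¹) x := by
    intro x hx
    have hxL : 0 < x - lk n k := sub_pos.2 hx.1
    have hlog : HasDerivAt (fun y => Real.log (y - lk n k)) ((x - lk n k)⁻¹) x := by
      have := ((hasDerivAt_id' x).sub_const (lk n k)).log hxL.ne'
      simpa using this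
    exact (hasDerivAt_tau hn hk1 hkn hx.1).sub (hlog.const_mul c)
  have hmono : MonotoneOn r (Set.Ioc (lk n k) 1) := by
    apply monotoneOn_of_deriv_nonneg (convex_Ioc _ _)
    · intro x hx
      apply ContinuousWithinAt.sub
      · exact ((continuousOn_tau hn hk1 hkn).mono Set.Ioc_subset_Ioi_self) x hx
      · have hca : ContinuousAt (fun y => c * Real.log (y - lk n k)) x := by
          apply ContinuousAt.mul continuousAt_const
          have h1 : ContinuousAt (fun y : ℝ => y - lk n k) x :=
            (continuous_sub_right _).continuousAt
          exact ContinuousAt.log h1 (sub_pos.2 hx.1).ne'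
        exact hca.continuousWithinAt
    · intro x hx
      rw [interior_Ioc] at hx
      exact (hderiv x hx).differentiableAt.differentiableWithinAt
    · intro x hx
      rw [interior_Ioc] at hx
      rw [(hderiv x hx).deriv]
      have hxL : 0 < x - lk n k := sub_pos.2 hx.1
      have hgl := gg_le_lin hn hk1 hkn hx.1 hx.2.le
      have hg0 := gg_pos hn hk1 hkn hx.1
      have hs0 : 0 < Real.sqrt (MM n k) := Real.sqrt_pos.2 hMM
      have h1 : c * (x - lk n k)⁻¹ = (Real.sqrt (MM n k) * (x - lk n k))⁻¹ := by
        rw [mul_inv, hc]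
      rw [h1]
      have h2 : (Real.sqrt (MM n k) * (x - lk n k))⁻¹ ≤ (gg n k x)⁻¹ :=
        inv_anti₀ hg0 hgl
      linarith
  have hbound : ∀ x ∈ Set.Ioc (lk n k) 1,
      tau n k x ≤ (r 1) + c * Real.log (x - lk n k) := by
    intro x hx
    have := hmono hx (Set.right_mem_Ioc.2 hL1) hx.2
    rw [hrdef] at this
    simp only at this
    have hr1 : r 1 = tau n k 1 - c * Real.log (1 - lk n k) := by rw [hrdef]
    linarith
  have h1 : Tendsto (fun x => x - lk n k) (𝓝[>] (lk n k)) (𝓝[>] (0:ℝ)) := by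
    apply tendsto_nhdsWithin_iff.mpr
    constructor
    · have := (continuous_sub_right (lk n k)).tendsto (lk n k)
      simpa using this.mono_left nhdsWithin_le_nhds
    · filter_upwards [self_mem_nhdsWithin] with x hx
      simpa [sub_pos] using hx
  have h2 : Tendsto (fun x => Real.log (x - lk n k)) (𝓝[>] (lk n k)) atBot :=
    Real.tendsto_log_nhdsGT_zero.comp h1
  have h3 : Tendsto (fun x => (r 1) + c * Real.log (x - lk n k)) (𝓝[>] (lk n k)) atBot := by
    apply tendsto_atBot_add_const_left
    exact Tendsto.const_mul_atBot hc0 h2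
  apply tendsto_atBot_mono' _ ?_ h3
  filter_upwards [Ioc_mem_nhdsGT_of_mem (Set.mem_Ico.2 ⟨le_refl _, hL1⟩)] with x hx
  exact hbound x hx

lemma tau_surj (t : ℝ) : ∃ x, lk n k < x ∧ tau n k x = t := by
  have hL1 := lk_lt_one hn hk1 hkn
  obtain ⟨a, ha, haIoc⟩ :
      ∃ a, tau n k a ≤ t ∧ a ∈ Set.Ioc (lk n k) 1 := by
    have h1 := tendsto_tau_atBot hn hk1 hkn |>.eventually (eventually_le_atBot t)
    have h2 : Set.Ioc (lk n k) 1 ∈ 𝓝[>] (lk n k) :=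
      Ioc_mem_nhdsGT_of_mem (Set.mem_Ico.2 ⟨le_refl _, hL1⟩)
    rcases (h1.and (Filter.eventually_of_mem h2 (fun x hx => hx))).exists with ⟨a, ha1, ha2⟩
    exact ⟨a, ha1, ha2⟩
  set b : ℝ := max 1 (t+1) with hbdef
  have hab : a ≤ b := le_trans haIoc.2 (le_max_left _ _)
  have htb : t ≤ tau n k b := by
    have h1b : (1:ℝ) ≤ b := le_max_left _ _
    have := tau_ge hn hk1 hkn b h1b
    have : t + 1 ≤ b := le_max_right _ _
    have h2 := tau_ge hn hk1 hkn b h1b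
    linarith
  have hsub : Set.Icc a b ⊆ Set.Ioi (lk n k) := fun y hy => lt_of_lt_of_le haIoc.1 hy.1
  have hcont : ContinuousOn (tau n k) (Set.Icc a b) :=
    (continuousOn_tau hn hk1 hkn).mono hsub
  have := intermediate_value_Icc hab hcont
  have ht : t ∈ Set.Icc (tau n k a) (tau n k b) := ⟨ha, htb⟩
  rcases this ht with ⟨x, hxab, hx⟩
  exact ⟨x, lt_of_lt_of_le haIoc.1 hxab.1, hx⟩


end tau

open Classical in
noncomputable def XX (n k : ℕ) (t : ℝ) : ℝ :=
  if h : ∃ x, lk n k < x ∧ tau n k x = t then h.choose else 0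

noncomputable def phi (n k : ℕ) (x : ℝ) : ℝ := tau n k x - Real.sqrt (x^2 - 1)

noncomputable def C3 (n k : ℕ) : ℝ := 8 / (A n k * ((n:ℝ)+1))

noncomputable def chi (n k : ℕ) (x : ℝ) : ℝ := phi n k x - C3 n k * x ^ (-(n:ℝ)-1)

noncomputable def cc (n k : ℕ) : ℝ := sInf (phi n k '' Set.Ici 2)

section inverse

variable {n k : ℕ} (hn : 2 ≤ n) (hk1 : 1 ≤ k) (hkn : k ≤ n)
include hn hk1 hkn
set_option linter.unusedSectionVars false

lemma XX_spec (t : ℝ) : lk n k < XX n k t ∧ tau n k (XX n k t) = t := by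
  have h := tau_surj hn hk1 hkn t
  rw [XX, dif_pos h]
  exact h.choose_spec

lemma XX_gt (t : ℝ) : lk n k < XX n k t := (XX_spec hn hk1 hkn t).1

lemma tau_XX (t : ℝ) : tau n k (XX n k t) = t := (XX_spec hn hk1 hkn t).2

lemma XX_tau {x : ℝ} (hx : lk n k < x) : XX n k (tau n k x) = x := by
  apply (strictMonoOn_tau hn hk1 hkn).injOn (XX_gt hn hk1 hkn _) hx
  exact tau_XX hn hk1 hkn _

lemma strictMono_XX : StrictMono (XX n k) := by
  intro a b hab
  by_contra hcon
  push_neg at hcon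
  have : tau n k (XX n k b) ≤ tau n k (XX n k a) :=
    (strictMonoOn_tau hn hk1 hkn).monotoneOn (XX_gt hn hk1 hkn b) (XX_gt hn hk1 hkn a) hcon
  rw [tau_XX hn hk1 hkn, tau_XX hn hk1 hkn] at this
  linarith

lemma continuous_XX : Continuous (XX n k) := by
  rw [continuous_iff_continuousAt]
  intro t
  apply continuousAt_of_monotoneOn_of_image_mem_nhds
    (f := XX n k) (s := Set.univ) (a := t)
  · exact fun a _ b _ hab => ((strictMono_XX hn hk1 hkn).monotone hab)
  · exact Filter.univ_mem
  · apply Filter.mem_of_superset (Ioi_mem_nhds (XX_gt hn hk1 hkn t))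
    intro y hy
    exact ⟨tau n k y, Set.mem_univ _, XX_tau hn hk1 hkn hy⟩

lemma hasDerivAt_XX (t : ℝ) : HasDerivAt (XX n k) (gg n k (XX n k t)) t := by
  have h := hasDerivAt_tau hn hk1 hkn (XX_gt hn hk1 hkn t)
  have h2 := HasDerivAt.of_local_left_inverse
    ((continuous_XX hn hk1 hkn).continuousAt)
    h (inv_ne_zero (gg_pos hn hk1 hkn (XX_gt hn hk1 hkn t)).ne')
    (Filter.Eventually.of_forall (fun y => tau_XX hn hk1 hkn y))
  simpa [inv_inv] using h2

end inverse

section phi_sec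

variable {n k : ℕ} (hn : 2 ≤ n) (hk1 : 1 ≤ k) (hkn : k ≤ n)
include hn hk1 hkn
set_option linter.unusedSectionVars false

lemma hasDerivAt_sq1 {x : ℝ} (hx : 1 < x) :
    HasDerivAt (fun y : ℝ => Real.sqrt (y^2 - 1)) (x / Real.sqrt (x^2-1)) x := by
  have hpos : 0 < x^2 - 1 := by nlinarith
  have hin : HasDerivAt (fun y : ℝ => y^2 - 1) (2*x) x := by
    have := (hasDerivAt_pow 2 x).sub_const 1
    simpa using this
  have := hin.sqrt hpos.ne'
  convert this using 1
  rw [mul_comm]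
  rw [div_eq_div_iff (Real.sqrt_pos.2 hpos).ne' (by positivity)]
  ring

lemma theta_lt_one {x : ℝ} (hx : 0 < x) :
    A n k * x ^ n / (1 + A n k * x ^ n) < 1 := by
  have hD := one_add_pos hn hk1 hkn hx.le
  rw [div_lt_one hD]
  linarith

lemma theta_pos {x : ℝ} (hx : 0 < x) :
    0 < A n k * x ^ n / (1 + A n k * x ^ n) := by
  have hD := one_add_pos hn hk1 hkn hx.le
  have hA := A_pos hn hk1 hkn
  positivity

lemma xsq_mul_w {x : ℝ} (hx : 0 < x) (hxL : lk n k < x) :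
    x^2 * hh n k x ^ ((2:ℝ)/k)
      = (A n k * x ^ n / (1 + A n k * x ^ n)) ^ ((2:ℝ)/k) := by
  have hxk : (x:ℝ)^k * hh n k x = A n k * x ^ n / (1 + A n k * x ^ n) := by
    rw [hh, mul_div_assoc']
    congr 1
    rw [mul_comm, mul_assoc, ← pow_add]
    congr 2
    omega
  have hH0 := (hh_pos hn hk1 hkn hxL).le
  rw [← hxk, Real.mul_rpow (by positivity) hH0]
  congr 1
  rw [← Real.rpow_natCast x k, ← Real.rpow_mul hx.le]
  have : (k:ℝ) * ((2:ℝ)/k) = 2 := by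
    field_simp
  rw [this]
  rw [← Real.rpow_natCast x 2]
  norm_num

lemma w_lt_inv_sq {x : ℝ} (hxL : lk n k < x) (hx : 0 < x) :
    x^2 * hh n k x ^ ((2:ℝ)/k) < 1 := by
  rw [xsq_mul_w hn hk1 hkn hx hxL]
  exact Real.rpow_lt_one (theta_pos hn hk1 hkn hx).le (theta_lt_one hn hk1 hkn hx)
    (by have := kR_pos hn hk1 hkn; positivity)

lemma sq1_div_lt_gg {x : ℝ} (hx : 1 < x) :
    Real.sqrt (x^2-1) / x < gg n k x := by
  have hxL : lk n k < x := lt_trans (lk_lt_one hn hk1 hkn) hx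
  have hx0 : (0:ℝ) < x := by linarith
  have hpos : 0 < x^2 - 1 := by nlinarith
  have hs : Real.sqrt (x^2-1) ≥ 0 := Real.sqrt_nonneg _
  have hgg := gg_pos hn hk1 hkn hxL
  have hsq : (Real.sqrt (x^2-1)/x)^2 = 1 - 1/x^2 := by
    rw [div_pow, Real.sq_sqrt hpos.le]
    field_simp
  have hggsq := gg_sq hn hk1 hkn hxL
  have hw := w_lt_inv_sq hn hk1 hkn hxL hx0
  have h1 : (Real.sqrt (x^2-1)/x)^2 < gg n k x ^ 2 := by
    rw [hsq, hggsq]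
    have : hh n k x ^ ((2:ℝ)/k) < 1/x^2 := by
      rw [lt_div_iff₀ (by positivity)]
      linarith [hw]
    linarith
  have h2 : 0 ≤ Real.sqrt (x^2-1)/x := by positivity
  nlinarith

lemma strictAntiOn_phi : StrictAntiOn (phi n k) (Set.Ici 1) := by
  apply strictAntiOn_of_deriv_neg (convex_Ici _)
  · intro x hx
    apply ContinuousWithinAt.sub
    · exact ((continuousOn_tau hn hk1 hkn).mono
        (fun y (hy : y ∈ Set.Ici (1:ℝ)) => lt_of_lt_of_le (lk_lt_one hn hk1 hkn) hy)) x hx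
    · apply Continuous.continuousWithinAt
      continuity
  · intro x hx
    rw [interior_Ici] at hx
    have hx1 : (1:ℝ) < x := hx
    have hxL : lk n k < x := lt_trans (lk_lt_one hn hk1 hkn) hx1
    have hder := (hasDerivAt_tau hn hk1 hkn hxL).fun_sub (hasDerivAt_sq1 hn hk1 hkn hx1)
    rw [(show phi n k = fun y => tau n k y - Real.sqrt (y^2-1) from rfl)]
    rw [hder.deriv]
    have hpos : 0 < x^2 - 1 := by nlinarith
    have hs0 : 0 < Real.sqrt (x^2-1) := Real.sqrt_pos.2 hpos
    have hx0 : (0:ℝ) < x := by linarith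
    have hkey := sq1_div_lt_gg hn hk1 hkn hx
    have hgg := gg_pos hn hk1 hkn hxL
    have h1 : (gg n k x)⁻¹ < x / Real.sqrt (x^2-1) := by
      have h2 : (gg n k x)⁻¹ < (Real.sqrt (x^2-1)/x)⁻¹ := by
        apply inv_strictAnti₀ (by positivity) hkey
      rwa [inv_div] at h2
    linarith


lemma rpow_neg_cast {x : ℝ} (hx : 0 < x) (j : ℕ) : x ^ (-(j:ℝ)) = (x^j)⁻¹ := by
  rw [Real.rpow_neg hx.le, Real.rpow_natCast]

lemma aux_one_sub_sq {th w : ℝ} (hle : 1 - w ≤ 1 - th^(2:ℕ)) : 1 - w ≤ 2*(1-th) := by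
  nlinarith [sq_nonneg (1 - th)]

set_option maxHeartbeats 1000000 in
lemma D_bound {x : ℝ} (hx : 2 ≤ x) :
    x / Real.sqrt (x^2-1) - (gg n k x)⁻¹ ≤ (8 / A n k) * x ^ (-(n:ℝ)-2) := by
  have hx1 : (1:ℝ) < x := by linarith
  have hx0 : (0:ℝ) < x := by linarith
  have hxL : lk n k < x := lt_trans (lk_lt_one hn hk1 hkn) hx1
  have hA := A_pos hn hk1 hkn
  have hpos : 0 < x^2 - 1 := by nlinarith
  set s := Real.sqrt (x^2-1) with hsdef
  have hs2 : s^2 = x^2-1 := Real.sq_sqrt hpos.le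
  have hs0 : 0 < s := Real.sqrt_pos.2 hpos
  set G := s / x with hGdef
  have hG0 : 0 < G := by positivity
  clear_value s G
  have hG2 : G^2 = 1 - 1/x^2 := by
    rw [hGdef, div_pow, hs2]
    field_simp
  have hGhalf : 1/2 ≤ G := by
    have h34 : (3:ℝ)/4 ≤ G^2 := by
      rw [hG2]
      have : 1/x^2 ≤ 1/4 := by
        rw [div_le_div_iff₀ (by positivity) (by norm_num)]
        nlinarith
      linarith
    nlinarith
  have hGgg : G < gg n k x := by
    rw [hGdef, hsdef]; exact sq1_div_lt_gg hn hk1 hkn hx1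
  have hgg1 : gg n k x < 1 := gg_lt_one hn hk1 hkn hxL
  have hgg0 : 0 < gg n k x := gg_pos hn hk1 hkn hxL
  -- bound on gg² - G²
  have hE : gg n k x ^ 2 - G^2 ≤ 2 / (A n k * x^(n+2)) := by
    have hggsq := gg_sq hn hk1 hkn hxL
    obtain ⟨th, hthdef⟩ : ∃ th, th = A n k * x ^ n / (1 + A n k * x ^ n) := ⟨_, rfl⟩
    have hth0 : 0 < th := hthdef ▸ theta_pos hn hk1 hkn hx0
    have hth1 : th < 1 := hthdef ▸ theta_lt_one hn hk1 hkn hx0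
    have hxw : x ^ 2 * hh n k x ^ ((2:ℝ)/k) = th ^ ((2:ℝ)/k) := by
      rw [hthdef]; exact xsq_mul_w hn hk1 hkn hx0 hxL
    have hth2 : th ^ (2:ℝ) ≤ th ^ ((2:ℝ)/k) := by
      apply Real.rpow_le_rpow_of_exponent_ge hth0 hth1.le
      have hk1' : (1:ℝ) ≤ (k:ℝ) := by exact_mod_cast hk1
      rw [div_le_iff₀ (by linarith)]
      nlinarith
    have hthn : th ^ (2:ℝ) = th ^ (2:ℕ) := by
      rw [← Real.rpow_natCast th 2]; norm_num
    have h1mth : 1 - th = 1 / (1 + A n k * x ^ n) := by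
      rw [hthdef]
      have hD := one_add_pos hn hk1 hkn hx0.le
      field_simp
      ring
    have hchain : 1 - x^2 * hh n k x ^ ((2:ℝ)/k) ≤ 2 / (A n k * x ^ n) := by
      rw [hxw]
      have hstep : 1 - th ^ ((2:ℝ)/k) ≤ 2 * (1 - th) := by
        apply aux_one_sub_sq hn hk1 hkn
        rw [← hthn]; linarith
      have h2 : 2 * (1 - th) = 2 / (1 + A n k * x ^ n) := by
        rw [h1mth]; ring
      have h3 : 2 / (1 + A n k * x ^ n) ≤ 2 / (A n k * x ^ n) := by
        apply div_le_div_of_nonneg_left (by norm_num) (by positivity)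
        linarith
      linarith
    have hgmG : gg n k x ^ 2 - G^2 = (1 - x^2 * hh n k x ^ ((2:ℝ)/k))/x^2 := by
      rw [hggsq, hG2]
      field_simp
      ring
    rw [hgmG]
    have hxn2 : A n k * x^(n+2) = (A n k * x^n) * x^2 := by
      rw [pow_add]; ring
    rw [hxn2, div_le_div_iff₀ (by positivity) (by positivity)]
    have h5 : (1 - x ^ 2 * hh n k x ^ ((2:ℝ)/k)) * (A n k * x ^ n) ≤ 2 := by
      rw [le_div_iff₀ (by positivity)] at hchain
      linarith
    nlinarith [mul_le_mul_of_nonneg_right h5 (sq_nonneg x)]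
  -- now combine
  have hsum : 1 ≤ G + gg n k x := by linarith
  have hprod : 1/4 ≤ G * gg n k x := by nlinarith
  have hd0 : 0 ≤ gg n k x - G := by linarith
  have hdle : gg n k x - G ≤ gg n k x ^2 - G^2 := by nlinarith
  have hmain : x / s - (gg n k x)⁻¹ ≤ 4 * (gg n k x ^ 2 - G^2) := by
    have hxs : x / s = G⁻¹ := by rw [hGdef, inv_div]
    rw [hxs]
    have hfrac : G⁻¹ - (gg n k x)⁻¹ = (gg n k x - G)/(G * gg n k x) := by
      field_simp
    rw [hfrac]
    have h4 : (gg n k x - G)/(G * gg n k x) ≤ 4 * (gg n k x - G) := by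
      rw [div_le_iff₀ (by positivity)]
      nlinarith
    linarith
  have hfinal : (8 / A n k) * x ^ (-(n:ℝ)-2) = 8 / (A n k * x^(n+2)) := by
    have he : -(n:ℝ)-2 = -(((n+2:ℕ)):ℝ) := by push_cast; ring
    rw [he, rpow_neg_cast hn hk1 hkn hx0 (n+2)]
    field_simp
  rw [hfinal]
  calc x / s - (gg n k x)⁻¹ ≤ 4 * (gg n k x ^2 - G^2) := hmain
    _ ≤ 4 * (2 / (A n k * x^(n+2))) := by linarith
    _ = 8 / (A n k * x^(n+2)) := by ring

lemma C3_pos : 0 < C3 n k := by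
  have hA := A_pos hn hk1 hkn
  rw [C3]
  positivity

lemma monotoneOn_chi : MonotoneOn (chi n k) (Set.Ici 2) := by
  have hA := A_pos hn hk1 hkn
  have hchi : chi n k = fun y => tau n k y - Real.sqrt (y^2-1)
      - C3 n k * y ^ (-(n:ℝ)-1) := rfl
  rw [hchi]
  have hderiv : ∀ x : ℝ, 2 < x → HasDerivAt
      (fun y => tau n k y - Real.sqrt (y^2-1) - C3 n k * y ^ (-(n:ℝ)-1))
      ((gg n k x)⁻¹ - x / Real.sqrt (x^2-1)
        - C3 n k * ((-(n:ℝ)-1) * x ^ (-(n:ℝ)-1-1))) x := by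
    intro x hx2
    have hx0 : (0:ℝ) < x := by linarith
    have hxL : lk n k < x := lt_trans (lk_lt_one hn hk1 hkn) (by linarith)
    exact ((hasDerivAt_tau hn hk1 hkn hxL).sub (hasDerivAt_sq1 hn hk1 hkn (by linarith))).sub
      ((Real.hasDerivAt_rpow_const (Or.inl hx0.ne')).const_mul (C3 n k))
  apply monotoneOn_of_deriv_nonneg (convex_Ici _)
  · intro x hx
    have hx2 : (2:ℝ) ≤ x := hx
    have hx0 : (0:ℝ) < x := by linarith
    apply ContinuousWithinAt.sub
    · apply ContinuousWithinAt.sub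
      · refine ((continuousOn_tau hn hk1 hkn).mono ?_) x hx
        intro y hy
        exact lt_of_lt_of_le (lt_of_lt_of_le (lk_lt_one hn hk1 hkn) (by norm_num)) hy
      · exact (Continuous.continuousWithinAt (by continuity))
    · exact (continuousAt_const.mul
        (Real.continuousAt_rpow_const x _ (Or.inl hx0.ne'))).continuousWithinAt
  · intro x hx
    rw [interior_Ici] at hx
    exact (hderiv x hx).differentiableAt.differentiableWithinAt
  · intro x hx
    rw [interior_Ici] at hx
    have hx2 : (2:ℝ) < x := hx
    have hx0 : (0:ℝ) < x := by linarith
    rw [(hderiv x hx2).deriv]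
    have hDb := D_bound hn hk1 hkn hx2.le
    have hC3 : C3 n k * ((-(n:ℝ)-1) * x ^ (-(n:ℝ)-1-1)) = -((8 / A n k) * x ^ (-(n:ℝ)-2)) := by
      rw [C3]
      have he : (-(n:ℝ)-1-1) = -(n:ℝ)-2 := by ring
      rw [he]
      have hn1 : ((n:ℝ)+1) ≠ 0 := by positivity
      field_simp
      ring
    rw [hC3]
    linarith

lemma bddBelow_phi_im : BddBelow (phi n k '' Set.Ici 2) := by
  refine ⟨chi n k 2, ?_⟩
  rintro b ⟨y, hy, rfl⟩
  have hy2 : (2:ℝ) ≤ y := hy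
  have hy0 : (0:ℝ) < y := by linarith
  have h1 := monotoneOn_chi hn hk1 hkn (Set.self_mem_Ici) hy hy2
  have h2 : chi n k y ≤ phi n k y := by
    rw [chi]
    have := C3_pos hn hk1 hkn
    have : 0 < C3 n k * y ^ (-(n:ℝ)-1) := by
      have := C3_pos hn hk1 hkn
      positivity
    linarith
  linarith

lemma cc_le_phi {x : ℝ} (hx : 2 ≤ x) : cc n k ≤ phi n k x :=
  csInf_le (bddBelow_phi_im hn hk1 hkn) ⟨x, hx, rfl⟩

lemma phi_gt_cc {x : ℝ} (hx : 1 ≤ x) : cc n k < phi n k x := by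
  set y := max x 2 + 1 with hydef
  have hxy : x < y := by
    have := le_max_left x 2
    rw [hydef]; linarith
  have hy2 : (2:ℝ) ≤ y := by
    have := le_max_right x 2
    rw [hydef]; linarith
  have h1 := cc_le_phi hn hk1 hkn hy2
  have h2 := strictAntiOn_phi hn hk1 hkn (Set.mem_Ici.2 hx)
    (Set.mem_Ici.2 (by linarith : (1:ℝ) ≤ y)) hxy
  linarith

lemma chi_le_cc {x : ℝ} (hx : 2 ≤ x) : chi n k x ≤ cc n k := by
  apply le_csInf (⟨phi n k 2, Set.mem_image_of_mem _ Set.self_mem_Ici⟩ : (phi n k '' Set.Ici 2).Nonempty)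
  rintro b ⟨y, hy, rfl⟩
  have hy2 : (2:ℝ) ≤ y := hy
  rcases le_or_gt x y with hxy | hyx
  · have h1 := monotoneOn_chi hn hk1 hkn (Set.mem_Ici.2 hx) (Set.mem_Ici.2 hy2) hxy
    have h2 : chi n k y ≤ phi n k y := by
      rw [chi]
      have hy0 : (0:ℝ) < y := by linarith
      have : 0 < C3 n k * y ^ (-(n:ℝ)-1) := by
        have := C3_pos hn hk1 hkn
        positivity
      linarith
    linarith
  · have h1 : phi n k x < phi n k y := by
      by_contra hcon
      push_neg at hcon
      have := strictAntiOn_phi hn hk1 hkn (Set.mem_Ici.2 (by linarith : (1:ℝ) ≤ y))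
        (Set.mem_Ici.2 (by linarith : (1:ℝ) ≤ x)) hyx
      linarith
    have h2 : chi n k x ≤ phi n k x := by
      rw [chi]
      have hx0 : (0:ℝ) < x := by linarith
      have : 0 < C3 n k * x ^ (-(n:ℝ)-1) := by
        have := C3_pos hn hk1 hkn
        positivity
      linarith
    linarith

lemma sqrt_lt_self {z : ℝ} (hz : 1 ≤ z) : Real.sqrt (z^2-1) < z := by
  rw [Real.sqrt_lt' (by linarith)]
  nlinarith

lemma zeta_lt_cc {x : ℝ} (hx : lk n k < x) : tau n k x - x < cc n k := by
  set y := max x 2 + 1 with hydef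
  have hxy : x < y := by
    have := le_max_left x 2
    rw [hydef]; linarith
  have hy2 : (2:ℝ) ≤ y := by
    have := le_max_right x 2
    rw [hydef]; linarith
  have hyL : lk n k < y := lt_trans hx hxy
  have h1 : tau n k x - x < tau n k y - y :=
    strictMonoOn_zeta hn hk1 hkn hx hyL hxy
  have h2 : tau n k y - y ≤ cc n k := by
    apply le_csInf (⟨phi n k 2, Set.mem_image_of_mem _ Set.self_mem_Ici⟩ : (phi n k '' Set.Ici 2).Nonempty)
    rintro b ⟨z, hz, rfl⟩
    have hz2 : (2:ℝ) ≤ z := hz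
    have hzy : tau n k y - y < phi n k y := by
      rw [phi]
      have := sqrt_lt_self hn hk1 hkn (show (1:ℝ) ≤ y by linarith)
      linarith
    rcases le_or_gt y z with hyz | hzy2
    · rcases eq_or_lt_of_le hyz with rfl | hlt
      · linarith
      · have hmz : tau n k y - y < tau n k z - z :=
          strictMonoOn_zeta hn hk1 hkn hyL (lt_trans hyL hlt) hlt
        have : tau n k z - z < phi n k z := by
          rw [phi]
          have := sqrt_lt_self hn hk1 hkn (show (1:ℝ) ≤ z by linarith)
          linarith
        linarith
    · have := strictAntiOn_phi hn hk1 hkn (Set.mem_Ici.2 (by linarith : (1:ℝ) ≤ z))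
        (Set.mem_Ici.2 (by linarith : (1:ℝ) ≤ y)) hzy2
      linarith
  linarith

end phi_sec

noncomputable def ff (n k : ℕ) (t : ℝ) : ℝ := XX n k (t + cc n k)

section assemble

variable {n k : ℕ} (hn : 2 ≤ n) (hk1 : 1 ≤ k) (hkn : k ≤ n)
include hn hk1 hkn
set_option linter.unusedSectionVars false

lemma ff_gt (t : ℝ) : lk n k < ff n k t := XX_gt hn hk1 hkn _

lemma tau_ff (t : ℝ) : tau n k (ff n k t) = t + cc n k := tau_XX hn hk1 hkn _

lemma hasDerivAt_ff (t : ℝ) : HasDerivAt (ff n k) (gg n k (ff n k t)) t := by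
  have h := (hasDerivAt_XX hn hk1 hkn (t + cc n k)).comp t
    ((hasDerivAt_id' t).add_const (cc n k))
  rw [mul_one] at h
  exact h

lemma deriv_ff (t : ℝ) : deriv (ff n k) t = gg n k (ff n k t) :=
  (hasDerivAt_ff hn hk1 hkn t).deriv

lemma deriv_ff_fun : deriv (ff n k) = fun t => gg n k (ff n k t) :=
  funext (deriv_ff hn hk1 hkn)

lemma hasDerivAt_deriv_ff (t : ℝ) :
    HasDerivAt (deriv (ff n k)) (gd n k (ff n k t) * gg n k (ff n k t)) t := by
  rw [deriv_ff_fun hn hk1 hkn]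
  have h := (hasDerivAt_gg hn hk1 hkn (ff_gt hn hk1 hkn t)).comp t
    (hasDerivAt_ff hn hk1 hkn t)
  exact h

lemma deriv2_ff (t : ℝ) :
    deriv (deriv (ff n k)) t = gd n k (ff n k t) * gg n k (ff n k t) :=
  (hasDerivAt_deriv_ff hn hk1 hkn t).deriv

lemma continuousAt_gd {x : ℝ} (hx : lk n k < x) : ContinuousAt (gd n k) x := by
  have hx0 : 0 < x := lt_of_le_of_lt (lk_nonneg hn hk1 hkn) hx
  have hden : (0:ℝ) < 1 + A n k * x ^ n := one_add_pos hn hk1 hkn hx0.le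
  have hhh : ContinuousAt (hh n k) x := (hasDerivAt_hh hn hk1 hkn hx0).continuousAt
  have hhd : ContinuousAt (hd n k) x := by
    have : hd n k = fun y => (A n k * (((n : ℝ) - k) * y ^ (n - k - 1)) * (1 + A n k * y ^ n)
      - A n k * y ^ (n - k) * (A n k * ((n : ℝ) * y ^ (n - 1)))) / (1 + A n k * y ^ n) ^ 2 := rfl
    rw [this]
    apply ContinuousAt.div (by fun_prop) (by fun_prop)
    positivity
  have hgg : ContinuousAt (gg n k) x := (hasDerivAt_gg hn hk1 hkn hx).continuousAt
  have hw : ContinuousAt (fun y => hh n k y ^ ((2:ℝ)/k - 1)) x :=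
    hhh.rpow_const (Or.inl (hh_pos hn hk1 hkn hx).ne')
  have : gd n k = fun y => (-(hd n k y * ((2:ℝ)/k) * hh n k y ^ ((2:ℝ)/k - 1)))
      / (2 * gg n k y) := rfl
  rw [this]
  apply ContinuousAt.div
  · exact (hhd.mul continuousAt_const).mul hw |>.neg
  · exact continuousAt_const.mul hgg
  · have := gg_pos hn hk1 hkn hx
    positivity

lemma contDiff_ff : ContDiff ℝ 2 (ff n k) := by
  have h1 : Differentiable ℝ (ff n k) := fun t => (hasDerivAt_ff hn hk1 hkn t).differentiableAt
  have h2 : Differentiable ℝ (deriv (ff n k)) :=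
    fun t => (hasDerivAt_deriv_ff hn hk1 hkn t).differentiableAt
  have h3 : Continuous (deriv (deriv (ff n k))) := by
    have heq : deriv (deriv (ff n k)) = fun t => gd n k (ff n k t) * gg n k (ff n k t) :=
      funext (deriv2_ff hn hk1 hkn)
    rw [heq]
    rw [continuous_iff_continuousAt]
    intro t
    have hft : ContinuousAt (ff n k) t := (hasDerivAt_ff hn hk1 hkn t).continuousAt
    exact ((continuousAt_gd hn hk1 hkn (ff_gt hn hk1 hkn t)).comp hft).mul
      (((hasDerivAt_gg hn hk1 hkn (ff_gt hn hk1 hkn t)).continuousAt).comp hft)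
  have : (2 : WithTop ℕ∞) = 1 + 1 := by norm_num
  rw [this, contDiff_succ_iff_deriv]
  refine ⟨h1, by simp, ?_⟩
  rw [contDiff_one_iff_deriv]
  exact ⟨h2, h3⟩

lemma ff_ode (t : ℝ) :
    (k : ℝ) * deriv (deriv (ff n k)) t /
        (ff n k t ^ (k - 1) * (1 - deriv (ff n k) t ^ 2) ^ ((k : ℝ) / 2 + 1)) +
      ((n : ℝ) - k) / (ff n k t ^ k * (1 - deriv (ff n k) t ^ 2) ^ ((k : ℝ) / 2)) = n := by
  rw [deriv2_ff hn hk1 hkn, deriv_ff hn hk1 hkn]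
  exact ode_key hn hk1 hkn (ff_gt hn hk1 hkn t)

lemma ff_derivs (t : ℝ) :
    0 < deriv (ff n k) t ∧ deriv (ff n k) t < 1 ∧ 0 < deriv (deriv (ff n k)) t := by
  rw [deriv2_ff hn hk1 hkn, deriv_ff hn hk1 hkn]
  have h := ff_gt hn hk1 hkn t
  exact ⟨gg_pos hn hk1 hkn h, gg_lt_one hn hk1 hkn h,
    mul_pos (gd_pos hn hk1 hkn h) (gg_pos hn hk1 hkn h)⟩

lemma ff_tendsto : Tendsto (ff n k) atBot (nhds (lk n k)) := by
  rw [tendsto_order]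
  constructor
  · intro a ha
    exact Filter.Eventually.of_forall (fun t => lt_trans ha (ff_gt hn hk1 hkn t))
  · intro a ha
    set x' := (lk n k + min a 1) / 2 with hx'def
    have hL1 := lk_lt_one hn hk1 hkn
    have hx'1 : lk n k < x' := by
      rw [hx'def]
      have : lk n k < min a 1 := lt_min ha hL1
      linarith
    have hx'2 : x' < a := by
      rw [hx'def]
      have h1 : lk n k < min a 1 := lt_min ha hL1
      have h2 : min a 1 ≤ a := min_le_left _ _
      linarith
    filter_upwards [eventually_lt_atBot (tau n k x' - cc n k)] with t ht
    have : t + cc n k < tau n k x' := by linarith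
    have hmono := strictMono_XX hn hk1 hkn this
    rw [XX_tau hn hk1 hkn hx'1] at hmono
    exact lt_trans hmono hx'2

lemma ff_lt_t (t : ℝ) : t < ff n k t := by
  have := zeta_lt_cc hn hk1 hkn (ff_gt hn hk1 hkn t)
  rw [tau_ff hn hk1 hkn] at this
  linarith

lemma ff_lt_sqrt (t : ℝ) : ff n k t < Real.sqrt (1 + t ^ 2) := by
  set x := ff n k t with hxdef
  have hs1 : (1:ℝ) ≤ Real.sqrt (1 + t^2) := by
    nlinarith [Real.sq_sqrt (show (0:ℝ) ≤ 1+t^2 by positivity),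
      Real.sqrt_nonneg (1+t^2)]
  rcases lt_or_ge x 1 with hx1 | hx1
  · linarith
  · have hphi := phi_gt_cc hn hk1 hkn hx1
    rw [phi, tau_ff hn hk1 hkn] at hphi
    have hst : Real.sqrt (x^2 - 1) < t := by linarith
    have ht0 : 0 < t := lt_of_le_of_lt (Real.sqrt_nonneg _) hst
    have hx2 : x^2 - 1 < t^2 := by
      have h1 : x^2 - 1 = Real.sqrt (x^2-1) ^ 2 := (Real.sq_sqrt (by nlinarith)).symm
      rw [h1]
      exact pow_lt_pow_left₀ hst (Real.sqrt_nonneg _) (by norm_num)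
    rw [show (1:ℝ) + t^2 = t^2 + 1 from by ring,
      Real.lt_sqrt (by linarith : (0:ℝ) ≤ x)]
    linarith


lemma ff_estimate : ∀ t > (2:ℝ),
    |ff n k t - Real.sqrt (1 + t ^ 2)| < C3 n k * t ^ (-(n : ℝ) - 1) := by
  intro t ht
  set x := ff n k t with hxdef
  have hxt : t < x := ff_lt_t hn hk1 hkn t
  have hx2 : (2:ℝ) < x := lt_trans ht hxt
  have ht0 : (0:ℝ) < t := by linarith
  have hphi_lo := phi_gt_cc hn hk1 hkn (by linarith : (1:ℝ) ≤ x)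
  have hphi_hi := chi_le_cc hn hk1 hkn hx2.le
  rw [chi] at hphi_hi
  rw [phi, tau_ff hn hk1 hkn] at hphi_lo hphi_hi
  set e := t - Real.sqrt (x^2 - 1) with hedef
  have he0 : 0 < e := by rw [hedef]; linarith
  have heC : e ≤ C3 n k * x ^ (-(n:ℝ)-1) := by rw [hedef]; linarith
  have hrpow : C3 n k * x ^ (-(n:ℝ)-1) < C3 n k * t ^ (-(n:ℝ)-1) := by
    have := Real.rpow_lt_rpow_of_neg ht0 hxt (by
      have : (0:ℝ) ≤ (n:ℝ) := Nat.cast_nonneg n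
      linarith : -(n:ℝ)-1 < 0)
    exact mul_lt_mul_of_pos_left this (C3_pos hn hk1 hkn)
  have hxlt := ff_lt_sqrt hn hk1 hkn t
  rw [← hxdef] at hxlt
  have hsq : x^2 - 1 = (t - e)^2 := by
    rw [hedef]
    have : 0 ≤ x^2 - 1 := by nlinarith
    rw [show t - (t - Real.sqrt (x^2-1)) = Real.sqrt (x^2-1) from by ring]
    exact (Real.sq_sqrt this).symm
  have hkey : Real.sqrt (1 + t^2) - x < e := by
    have h1 : Real.sqrt (1 + t^2) < x + e := by
      rw [show (1:ℝ) + t^2 = t^2+1 from by ring, Real.sqrt_lt' (by linarith)]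
      nlinarith
    linarith
  rw [abs_of_neg (by linarith : x - Real.sqrt (1+t^2) < 0)]
  calc -(x - Real.sqrt (1+t^2)) = Real.sqrt (1+t^2) - x := by ring
    _ < e := hkey
    _ ≤ C3 n k * x ^ (-(n:ℝ)-1) := heC
    _ < C3 n k * t ^ (-(n:ℝ)-1) := hrpow

end assemble
end ST


/-- Existence of an admissible semitrough profile for every `n ≥ 2` and `1 ≤ k ≤ n`. -/
theorem exists_semitrough_profile (n k : ℕ) (hn : 2 ≤ n) (hk1 : 1 ≤ k) (hkn : k ≤ n) :
    ∃ f : ℝ → ℝ, IsAdmissibleProfile n k f := by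
  refine ⟨ST.ff n k, ST.contDiff_ff hn hk1 hkn, ST.ff_ode hn hk1 hkn,
    ST.ff_derivs hn hk1 hkn, ST.ff_tendsto hn hk1 hkn, ?_,
    ST.C3 n k, ST.C3_pos hn hk1 hkn, 2, two_pos, ST.ff_estimate hn hk1 hkn⟩
  intro t
  exact ⟨max_lt (ST.ff_gt hn hk1 hkn t) (ST.ff_lt_t hn hk1 hkn t),
    ST.ff_lt_sqrt hn hk1 hkn t⟩
end

section
/- Let n ≥ 2 and 1 ≤ k ≤ n be integers, let y₀ ∈ (0,1), let I ⊆ ℝ be an open interval containing 0, and let f : I → ℝ be twice continuously differentiable with f(t) > 0 and |f'(t)| < 1 for all t ∈ I, f(0) = y₀, f'(0) = 0, and satisfying k·f''(t)/(f(t)^(k-1)·(1-f'(t)²)^(k/2+1)) + (n-k)/(f(t)^k·(1-f'(t)²)^(k/2)) = n for all t ∈ I. Then for all t ∈ I one has the first-integral identity (1 - f'(t)²)^(-k/2) = f(t)^k + y₀^(n-k)·(1 - y₀^k)/f(t)^(n-k). -/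
open Filter Real Set

private lemma semitrough_key (n k : ℕ) (hk1 : 1 ≤ k) (hkn : k ≤ n) (u v w P : ℝ)
    (hu : u ≠ 0) (hP : 0 < P)
    (hODE : (k:ℝ) * w / (u ^ (k-1) * P ^ ((k:ℝ)/2 + 1)) + ((n:ℝ) - k) / (u ^ k * P ^ ((k:ℝ)/2)) = n) :
    ((n-k : ℕ):ℝ) * u ^ (n-k-1) * v * (P ^ (-(k:ℝ)/2) - u ^ k)
      + u ^ (n-k) * ((-(2 * v * w)) * (-(k:ℝ)/2) * P ^ (-(k:ℝ)/2 - 1) - (k:ℝ) * u ^ (k-1) * v) = 0 := by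
  set Q : ℝ := P ^ ((k:ℝ)/2) with hQdef
  have hQ : 0 < Q := rpow_pos_of_pos hP _
  have h1 : P ^ ((k:ℝ)/2 + 1) = Q * P := by rw [rpow_add hP, rpow_one]
  have h2 : P ^ (-(k:ℝ)/2) = Q⁻¹ := by rw [neg_div, rpow_neg hP.le]
  have h3 : P ^ (-(k:ℝ)/2 - 1) = (Q * P)⁻¹ := by
    rw [sub_eq_add_neg, rpow_add hP, neg_div, rpow_neg hP.le, rpow_neg_one, mul_inv]
  rw [h1] at hODE
  rw [h2, h3]
  have hQne : Q ≠ 0 := hQ.ne'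
  clear_value Q
  have hPne : P ≠ 0 := hP.ne'
  obtain ⟨k', rfl⟩ : ∃ k', k = k' + 1 := ⟨k - 1, by omega⟩
  have huk : (u : ℝ) ^ k' ≠ 0 := pow_ne_zero _ hu
  simp only [Nat.add_sub_cancel] at hODE ⊢
  rw [pow_succ] at hODE ⊢
  have hW : ((k':ℝ)+1) * w * u + ((n:ℝ) - (k'+1)) * P = n * (u ^ k' * u) * Q * P := by
    push_cast at hODE
    field_simp at hODE
    apply mul_left_cancel₀ (mul_ne_zero huk hQne)
    linear_combination (u ^ k' * Q) * hODE
  rcases eq_or_lt_of_le hkn with rfl | hlt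
  · simp only [Nat.sub_self, pow_zero, Nat.cast_zero]
    push_cast at hW ⊢
    apply mul_left_cancel₀ hu
    field_simp
    have hw' : ((k':ℝ)+1) * w = (k'+1) * (u^k') * Q * P := mul_right_cancel₀ hu (by linear_combination hW)
    linear_combination v * hw'
  · obtain ⟨m', hm'⟩ : ∃ m', n - (k'+1) = m' + 1 := ⟨n - (k'+1) - 1, by omega⟩
    rw [hm']
    have hcast : ((m' + 1 : ℕ):ℝ) = (n:ℝ) - (k'+1) := by
      rw [← hm', Nat.cast_sub hkn]; push_cast; ring
    simp only [Nat.add_sub_cancel]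
    rw [pow_succ, hcast]
    push_cast at hW ⊢
    field_simp
    linear_combination (u ^ m' * v) * hW

/-- The first-integral identity for the semitrough ODE: if `f` solves the constant
`σ_k` curvature ODE on an open interval `(a, b)` containing `0`, with `f > 0`,
`|f'| < 1`, `f 0 = y₀ ∈ (0,1)` and `f' 0 = 0`, then
`(1 - f'(t)²)^(-k/2) = f(t)^k + y₀^(n-k) (1 - y₀^k) / f(t)^(n-k)` on `(a, b)`. -/
theorem semitrough_first_integral (n k : ℕ) (hn : 2 ≤ n) (hk1 : 1 ≤ k) (hkn : k ≤ n)
    (y₀ : ℝ) (hy₀ : y₀ ∈ Set.Ioo (0 : ℝ) 1)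
    (a b : ℝ) (ha : a < 0) (hb : 0 < b)
    (f : ℝ → ℝ) (hf : ContDiffOn ℝ 2 f (Set.Ioo a b))
    (hfpos : ∀ t ∈ Set.Ioo a b, 0 < f t)
    (hfsp : ∀ t ∈ Set.Ioo a b, |deriv f t| < 1)
    (hf0 : f 0 = y₀) (hf'0 : deriv f 0 = 0)
    (hODE : ∀ t ∈ Set.Ioo a b,
      (k : ℝ) * deriv (deriv f) t /
          (f t ^ (k - 1) * (1 - deriv f t ^ 2) ^ ((k : ℝ) / 2 + 1)) +
        ((n : ℝ) - k) / (f t ^ k * (1 - deriv f t ^ 2) ^ ((k : ℝ) / 2)) = n) :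
    ∀ t ∈ Set.Ioo a b,
      (1 - deriv f t ^ 2) ^ (-(k : ℝ) / 2) =
        f t ^ k + y₀ ^ (n - k) * (1 - y₀ ^ k) / f t ^ (n - k) := by
  have hopen : IsOpen (Set.Ioo a b) := isOpen_Ioo
  have h0mem : (0:ℝ) ∈ Set.Ioo a b := ⟨ha, hb⟩
  -- derivative facts
  have hd1 : ∀ t ∈ Set.Ioo a b, HasDerivAt f (deriv f t) t := fun t ht =>
    ((hf.differentiableOn (by norm_num)).differentiableAt (hopen.mem_nhds ht)).hasDerivAt
  have hC1 : ContDiffOn ℝ 1 (deriv f) (Set.Ioo a b) := hf.deriv_of_isOpen hopen (by norm_num)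
  have hd2 : ∀ t ∈ Set.Ioo a b, HasDerivAt (deriv f) (deriv (deriv f) t) t := fun t ht =>
    ((hC1.differentiableOn (by norm_num)).differentiableAt (hopen.mem_nhds ht)).hasDerivAt
  have hP : ∀ t ∈ Set.Ioo a b, 0 < 1 - deriv f t ^ 2 := by
    intro t ht
    have h := hfsp t ht
    nlinarith [sq_abs (deriv f t), abs_nonneg (deriv f t)]
  set g : ℝ → ℝ := fun s =>
    f s ^ (n-k) * ((1 - deriv f s ^ 2) ^ (-(k:ℝ)/2) - f s ^ k) with hgdef
  have hg : ∀ t ∈ Set.Ioo a b, HasDerivAt g 0 t := by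
    intro t ht
    have hv := hd1 t ht
    have hw := hd2 t ht
    have hu : f t ≠ 0 := (hfpos t ht).ne'
    have hPt := hP t ht
    have hB : HasDerivAt (fun s => 1 - deriv f s ^ 2)
        (-(2 * deriv f t ^ 1 * deriv (deriv f) t)) t := (hw.pow 2).const_sub 1
    have hQ : HasDerivAt (fun s => (1 - deriv f s ^ 2) ^ (-(k:ℝ)/2))
        ((-(2 * deriv f t ^ 1 * deriv (deriv f) t)) * (-(k:ℝ)/2)
          * (1 - deriv f t ^ 2) ^ (-(k:ℝ)/2 - 1)) t :=
      hB.rpow_const (Or.inl hPt.ne')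
    have hder : HasDerivAt g
        (((n-k : ℕ):ℝ) * f t ^ (n-k-1) * deriv f t
            * ((1 - deriv f t ^ 2) ^ (-(k:ℝ)/2) - f t ^ k)
          + f t ^ (n-k) * ((-(2 * deriv f t ^ 1 * deriv (deriv f) t)) * (-(k:ℝ)/2)
              * (1 - deriv f t ^ 2) ^ (-(k:ℝ)/2 - 1)
            - (k:ℝ) * f t ^ (k-1) * deriv f t)) t :=
      (hv.pow (n-k)).mul (hQ.sub (hv.pow k))
    have hzero := semitrough_key n k hk1 hkn (f t) (deriv f t) (deriv (deriv f) t)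
      (1 - deriv f t ^ 2) hu hPt (hODE t ht)
    convert hder using 1
    rw [eq_comm]
    linear_combination hzero
  -- g is constant on (a, b)
  have hconst : ∀ x ∈ Set.Ioo a b, ∀ y ∈ Set.Ioo a b, x < y → g x = g y := by
    intro x hx y hy hxy
    have hsub : Set.Icc x y ⊆ Set.Ioo a b := fun z hz =>
      ⟨lt_of_lt_of_le hx.1 hz.1, lt_of_le_of_lt hz.2 hy.2⟩
    have hcont : ContinuousOn g (Set.Icc x y) := fun z hz =>
      (hg z (hsub hz)).continuousAt.continuousWithinAt
    obtain ⟨c, _, hc⟩ := exists_hasDerivAt_eq_slope g (fun _ => 0) hxy hcont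
      (fun z hz => hg z (hsub ⟨hz.1.le, hz.2.le⟩))
    have : g y - g x = 0 := by
      have hne : y - x ≠ 0 := sub_ne_zero.2 hxy.ne'
      field_simp at hc
      linarith [hc]
    linarith [this]
  have hg0 : g 0 = y₀ ^ (n-k) * (1 - y₀ ^ k) := by
    simp [hgdef, hf'0, hf0]
  intro t ht
  have hgt : g t = y₀ ^ (n-k) * (1 - y₀ ^ k) := by
    rcases lt_trichotomy t 0 with h | h | h
    · rw [hconst t ht 0 h0mem h, hg0]
    · rw [h, hg0]
    · rw [← hconst 0 h0mem t ht h, hg0]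
  have hu : f t ≠ 0 := (hfpos t ht).ne'
  have hukne : f t ^ (n-k) ≠ 0 := pow_ne_zero _ hu
  simp only [hgdef] at hgt
  rw [neg_div] at hgt
  field_simp
  linear_combination hgt
end

section
/- Let n ≥ 2 and 1 ≤ k ≤ n be integers, let f be an admissible semitrough profile for (n,k), and let z(x) = √(f(x₁)² + |x̄|²). Then for every unit vector θ ∈ 𝕊^{n-1}: if θ = (-1, 0, …, 0) then lim_{r→∞} ( z(rθ) - V₊(rθ) ) = l_k, and for every other θ ∈ 𝕊^{n-1} one has lim_{r→∞} ( z(rθ) - V₊(rθ) ) = 0. -/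
open Filter Real

/-- The semitrough height function `z(x) = √(f(x₁)² + |x̄|²)`. -/
noncomputable def zfun (n : ℕ) [NeZero n] (f : ℝ → ℝ) (x : EuclideanSpace ℝ (Fin n)) : ℝ :=
  Real.sqrt (f (x 0) ^ 2 + ∑ i ∈ Finset.univ.erase (0 : Fin n), x i ^ 2)

/-- `V₊(x) = sup { x·λ : λ ∈ 𝕊^{n-1}, λ₁ ≥ 0 }`; explicitly `|x|` if `x₁ ≥ 0`
and `|x̄|` if `x₁ < 0`. -/
noncomputable def Vplus (n : ℕ) [NeZero n] (x : EuclideanSpace ℝ (Fin n)) : ℝ :=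
  if 0 ≤ x 0 then ‖x‖ else Real.sqrt (∑ i ∈ Finset.univ.erase (0 : Fin n), x i ^ 2)

/-- Radial asymptotics of the semitrough: `z(rθ) - V₊(rθ) → l_k` as `r → ∞` in the single
direction `θ = -e₁`, and `z(rθ) - V₊(rθ) → 0` in every other unit direction. -/
theorem semitrough_radial_limits (n k : ℕ) [NeZero n]
    (hn : 2 ≤ n) (hk1 : 1 ≤ k) (hkn : k ≤ n)
    (f : ℝ → ℝ) (hf : IsAdmissibleProfile n k f)
    (θ : EuclideanSpace ℝ (Fin n)) (hθ : ‖θ‖ = 1) :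
    (θ = -(EuclideanSpace.single (0 : Fin n) (1 : ℝ)) →
      Tendsto (fun r : ℝ => zfun n f (r • θ) - Vplus n (r • θ)) atTop (nhds (lk n k))) ∧
    (θ ≠ -(EuclideanSpace.single (0 : Fin n) (1 : ℝ)) →
      Tendsto (fun r : ℝ => zfun n f (r • θ) - Vplus n (r • θ)) atTop (nhds 0)) := by
  obtain ⟨hreg, _heq, hderiv, hbot, hbounds, _hdecay⟩ := hf
  set a := θ 0 with ha
  set S := ∑ i ∈ Finset.univ.erase (0 : Fin n), θ i ^ 2 with hSdef
  have hS0 : 0 ≤ S := Finset.sum_nonneg fun i _ => sq_nonneg _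
  have hsum1 : ∑ i, θ i ^ 2 = 1 := by
    have h1 := EuclideanSpace.norm_eq θ
    rw [hθ] at h1
    have h2 : (∑ i, ‖θ i‖ ^ 2) = 1 := Real.sqrt_eq_one.mp h1.symm
    simpa [Real.norm_eq_abs, sq_abs] using h2
  have haS : a ^ 2 + S = 1 := by
    rw [hSdef, ha, add_comm, Finset.sum_erase_add _ _ (Finset.mem_univ 0)]
    exact hsum1
  have hlk0 : 0 ≤ lk n k :=
    Real.rpow_nonneg (div_nonneg (sub_nonneg.2 (by exact_mod_cast hkn)) (Nat.cast_nonneg n)) _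
  have hfpos : ∀ t, 0 < f t := fun t =>
    lt_of_le_of_lt (le_trans hlk0 (le_max_left _ t)) (hbounds t).1
  have hft : ∀ t, t < f t := fun t => lt_of_le_of_lt (le_max_right _ _) (hbounds t).1
  have hfsq : ∀ t, f t ^ 2 < 1 + t ^ 2 := fun t =>
    (Real.lt_sqrt (hfpos t).le).mp (hbounds t).2
  have hmono : StrictMono f := strictMono_of_deriv_pos fun t => (hderiv t).1
  have hcoord : ∀ (r : ℝ) (i : Fin n), (r • θ) i = r * θ i := fun r i => rfl
  have hsumsq : ∀ r : ℝ, ∑ i ∈ Finset.univ.erase (0 : Fin n), ((r • θ) i) ^ 2 = r ^ 2 * S := by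
    intro r
    simp_rw [hcoord, mul_pow, hSdef, Finset.mul_sum]
  have hz : ∀ r : ℝ, zfun n f (r • θ) = Real.sqrt (f (r * a) ^ 2 + r ^ 2 * S) := by
    intro r
    rw [zfun, hsumsq, hcoord]
  clear_value a S
  constructor
  · intro hθe
    have haval : a = -1 := by rw [ha, hθe]; simp
    have hSval : S = 0 := by
      rw [hSdef]
      apply Finset.sum_eq_zero
      intro i hi
      have hi0 : i ≠ 0 := (Finset.mem_erase.mp hi).1
      rw [hθe]
      simp [EuclideanSpace.single_apply, hi0]
    have hTend : Tendsto (fun r : ℝ => f (-r)) atTop (nhds (lk n k)) :=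
      hbot.comp tendsto_neg_atTop_atBot
    refine hTend.congr' ?_
    filter_upwards [eventually_gt_atTop (0 : ℝ)] with r hr
    have hra : r * a = -r := by rw [haval]; ring
    have hz' : zfun n f (r • θ) = f (-r) := by
      rw [hz, hra, hSval, mul_zero, add_zero, Real.sqrt_sq (hfpos _).le]
    have hV : Vplus n (r • θ) = 0 := by
      rw [Vplus, if_neg, hsumsq, hSval, mul_zero, Real.sqrt_zero]
      rw [hcoord, ← ha, hra]
      push_neg
      linarith
    rw [hz', hV, sub_zero]
  · intro hne
    rcases le_or_gt 0 a with hA | hA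
    · -- case a ≥ 0
      apply squeeze_zero' ?_ ?_
        (show Tendsto (fun r : ℝ => 1 / r) atTop (nhds 0) from
          tendsto_const_nhds.div_atTop tendsto_id)
      · filter_upwards [eventually_ge_atTop (1 : ℝ)] with r hr
        have hr0 : (0:ℝ) < r := lt_of_lt_of_le one_pos hr
        have hV : Vplus n (r • θ) = r := by
          rw [Vplus, if_pos]
          · rw [norm_smul, hθ, mul_one, Real.norm_eq_abs, abs_of_nonneg hr0.le]
          · rw [hcoord, ← ha]; exact mul_nonneg hr0.le hA
        rw [hz, hV, sub_nonneg]
        have hfa : (r * a) ^ 2 ≤ f (r * a) ^ 2 := by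
          have := hft (r * a)
          nlinarith [mul_nonneg hr0.le hA]
        have h2 : r ^ 2 ≤ f (r * a) ^ 2 + r ^ 2 * S := by nlinarith [haS]
        calc r = Real.sqrt (r ^ 2) := (Real.sqrt_sq hr0.le).symm
          _ ≤ _ := Real.sqrt_le_sqrt h2
      · filter_upwards [eventually_ge_atTop (1 : ℝ)] with r hr
        have hr0 : (0:ℝ) < r := lt_of_lt_of_le one_pos hr
        have hV : Vplus n (r • θ) = r := by
          rw [Vplus, if_pos]
          · rw [norm_smul, hθ, mul_one, Real.norm_eq_abs, abs_of_nonneg hr0.le]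
          · rw [hcoord, ← ha]; exact mul_nonneg hr0.le hA
        rw [hz, hV, sub_le_iff_le_add']
        have hb : f (r * a) ^ 2 + r ^ 2 * S ≤ (r + 1 / r) ^ 2 := by
          have h1 := hfsq (r * a)
          have hexp : (r + 1 / r) ^ 2 = r ^ 2 + 2 + (1 / r) ^ 2 := by
            field_simp
            ring
          rw [hexp]
          have h2 : r ^ 2 * (a ^ 2 + S) = r ^ 2 * 1 := by rw [haS]
          nlinarith [sq_nonneg (1 / r), mul_pow r a 2]
        calc Real.sqrt (f (r * a) ^ 2 + r ^ 2 * S) ≤ Real.sqrt ((r + 1 / r) ^ 2) :=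
              Real.sqrt_le_sqrt hb
          _ = r + 1 / r := Real.sqrt_sq (le_of_lt (add_pos hr0 (one_div_pos.mpr hr0)))
    · -- case a < 0
      have hSpos : 0 < S := by
        rcases lt_or_eq_of_le hS0 with h | h
        · exact h
        · exfalso
          have hS0' : S = 0 := h.symm
          have ha2 : a ^ 2 = 1 := by linarith
          have haneg : a = -1 := by
            have hfac : (a - 1) * (a + 1) = 0 := by nlinarith
            rcases mul_eq_zero.mp hfac with h' | h'
            · linarith
            · linarith
          apply hne
          apply PiLp.ext
          intro i
          by_cases hi : i = 0
          · subst hi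
            rw [← ha, haneg]
            simp
          · have hmem : i ∈ Finset.univ.erase (0 : Fin n) :=
              Finset.mem_erase.mpr ⟨hi, Finset.mem_univ i⟩
            have hzi : θ i ^ 2 = 0 := by
              have hall := (Finset.sum_eq_zero_iff_of_nonneg
                (fun j _ => sq_nonneg (θ j))).mp (hSdef.symm.trans hS0')
              exact hall i hmem
            have : θ i = 0 := by
              exact pow_eq_zero_iff (by norm_num) |>.mp hzi
            rw [this]
            simp [EuclideanSpace.single_apply, hi]
      set M := f 0 ^ 2 with hMdef
      have hM0 : 0 < M := pow_pos (hfpos 0) 2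
      have hsS : 0 < Real.sqrt S := Real.sqrt_pos.mpr hSpos
      set C := M / Real.sqrt S with hCdef
      have hC0 : 0 < C := div_pos hM0 hsS
      clear_value M C
      apply squeeze_zero' ?_ ?_
        (show Tendsto (fun r : ℝ => C / r) atTop (nhds 0) from
          tendsto_const_nhds.div_atTop tendsto_id)
      · filter_upwards [eventually_ge_atTop (1 : ℝ)] with r hr
        have hr0 : (0:ℝ) < r := lt_of_lt_of_le one_pos hr
        have hra : r * a < 0 := mul_neg_of_pos_of_neg hr0 hA
        have hV : Vplus n (r • θ) = r * Real.sqrt S := by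
          rw [Vplus, if_neg, hsumsq]
          · rw [Real.sqrt_mul (sq_nonneg r), Real.sqrt_sq hr0.le]
          · rw [hcoord, ← ha]; push_neg; exact hra
        rw [hz, hV, sub_nonneg]
        have h2 : r ^ 2 * S ≤ f (r * a) ^ 2 + r ^ 2 * S := by nlinarith [sq_nonneg (f (r * a))]
        calc r * Real.sqrt S = Real.sqrt (r ^ 2 * S) := by
              rw [Real.sqrt_mul (sq_nonneg r), Real.sqrt_sq hr0.le]
          _ ≤ _ := Real.sqrt_le_sqrt h2
      · filter_upwards [eventually_ge_atTop (1 : ℝ)] with r hr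
        have hr0 : (0:ℝ) < r := lt_of_lt_of_le one_pos hr
        have hra : r * a < 0 := mul_neg_of_pos_of_neg hr0 hA
        have hV : Vplus n (r • θ) = r * Real.sqrt S := by
          rw [Vplus, if_neg, hsumsq]
          · rw [Real.sqrt_mul (sq_nonneg r), Real.sqrt_sq hr0.le]
          · rw [hcoord, ← ha]; push_neg; exact hra
        rw [hz, hV, sub_le_iff_le_add']
        have hfM : f (r * a) ^ 2 ≤ M := by
          have h1 : f (r * a) < f 0 := hmono hra
          have h2 : 0 < f (r * a) := hfpos _
          nlinarith
        have hSC : Real.sqrt S * C = M := by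
          rw [hCdef]
          field_simp
        have hsq : Real.sqrt S ^ 2 = S := Real.sq_sqrt hSpos.le
        have hD : r * (C / r) = C := by field_simp
        have h3 : Real.sqrt S * (r * (C / r)) = M := by rw [hD, hSC]
        have hb : f (r * a) ^ 2 + r ^ 2 * S ≤ (r * Real.sqrt S + C / r) ^ 2 := by
          have hexpand : (r * Real.sqrt S + C / r) ^ 2
              = r ^ 2 * Real.sqrt S ^ 2 + 2 * (Real.sqrt S * (r * (C / r))) + (C / r) ^ 2 := by
            ring
          rw [hexpand, hsq, h3]
          have := sq_nonneg (C / r)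
          linarith
        have hrhs : 0 ≤ r * Real.sqrt S + C / r :=
          add_nonneg (mul_nonneg hr0.le hsS.le) (le_of_lt (div_pos hC0 hr0))
        calc Real.sqrt (f (r * a) ^ 2 + r ^ 2 * S)
              ≤ Real.sqrt ((r * Real.sqrt S + C / r) ^ 2) := Real.sqrt_le_sqrt hb
          _ = r * Real.sqrt S + C / r := Real.sqrt_sq hrhs
end

section
/- Let n ≥ 2 and 1 ≤ k ≤ n be integers, let f be an admissible semitrough profile for (n,k), and let z(x) = √(f(x₁)² + |x̄|²). Then for every compact set K ⊂ ℝⁿ there exists υ ∈ (0,1] (depending on K, n, k and f) such that for all x, y ∈ K one has |z(x) - z(y)| ≤ (1 - υ)·|x - y|. -/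
open Filter Real

lemma cs2 (α β γ δ : ℝ) (h1 : 0 ≤ α*γ + β*δ) :
    α*γ + β*δ ≤ Real.sqrt (α^2+β^2) * Real.sqrt (γ^2+δ^2) := by
  rw [← Real.sqrt_mul (by positivity)]
  exact (Real.le_sqrt h1 (by positivity)).2 (by nlinarith [sq_nonneg (α*δ - β*γ)])

lemma semitrough_aux (m R L a b p q d w : ℝ) (hm : 0 < m) (hR : 0 ≤ R) (hL0 : 0 ≤ L)
    (hL1 : L < 1) (ha : m ≤ a) (hb : m ≤ b) (hp0 : 0 ≤ p) (hpR : p ≤ R)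
    (hq0 : 0 ≤ q) (hqR : q ≤ R) (hd : 0 ≤ d) (hw : 0 ≤ w)
    (hab : |a - b| ≤ L * d) (hpq : |p - q| ≤ w) :
    Real.sqrt (a^2+p^2) - Real.sqrt (b^2+q^2) ≤
      Real.sqrt (1 - (1-L^2)*m^2/(m^2+R^2)) * Real.sqrt (d^2+w^2) := by
  have hden : (0:ℝ) < m^2+R^2 := by positivity
  have hL2 : (0:ℝ) < 1 - L^2 := by
    have := mul_self_lt_mul_self hL0 hL1
    have hsq : L^2 = L*L := sq L
    linarith
  have hδ1 : (1-L^2)*m^2/(m^2+R^2) ≤ 1 := by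
    rw [div_le_one hden]
    have h1 : 0 ≤ L^2*m^2 := by positivity
    have h2 : 0 ≤ R^2 := sq_nonneg R
    linarith [h1, h2]
  set θ := Real.sqrt (1 - (1-L^2)*m^2/(m^2+R^2)) with hθdef
  have hθ0 : 0 ≤ θ := Real.sqrt_nonneg _
  have hθsq : θ^2 = 1 - (1-L^2)*m^2/(m^2+R^2) := Real.sq_sqrt (by linarith)
  set Zx := Real.sqrt (a^2+p^2) with hZxdef
  set Zy := Real.sqrt (b^2+q^2) with hZydef
  set D := Real.sqrt (d^2+w^2) with hDdef
  have hZx2 : Zx^2 = a^2+p^2 := Real.sq_sqrt (by positivity)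
  have hZy2 : Zy^2 = b^2+q^2 := Real.sq_sqrt (by positivity)
  have hD0 : 0 ≤ D := Real.sqrt_nonneg _
  have ha0 : 0 < a := lt_of_lt_of_le hm ha
  have hb0 : 0 < b := lt_of_lt_of_le hm hb
  have hZxa : a ≤ Zx :=
    (Real.le_sqrt ha0.le (by positivity)).2 (by linarith [sq_nonneg p])
  have hZyb : b ≤ Zy :=
    (Real.le_sqrt hb0.le (by positivity)).2 (by linarith [sq_nonneg q])
  have hsum : 0 < Zx + Zy := by linarith
  have habs := abs_le.1 hab
  have hpqs := abs_le.1 hpq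
  have h1 : Zx^2 - Zy^2 ≤ (L*(a+b))*d + (p+q)*w := by
    rw [hZx2, hZy2]
    have e1 : (a+b)*(a-b) ≤ (a+b)*(L*d) :=
      mul_le_mul_of_nonneg_left habs.2 (by linarith)
    have e2 : (p+q)*(p-q) ≤ (p+q)*w :=
      mul_le_mul_of_nonneg_left hpqs.2 (by linarith)
    linarith [e1, e2]
  have h2 : (L*(a+b))*d + (p+q)*w ≤ Real.sqrt ((L*(a+b))^2+(p+q)^2) * D := by
    apply cs2; positivity
  have hAP : m^2*(p+q)^2 ≤ (a+b)^2*R^2 := by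
    have hstep : m*(p+q) ≤ (a+b)*R := by
      calc m*(p+q) ≤ m*(2*R) := mul_le_mul_of_nonneg_left (by linarith) hm.le
        _ = (2*m)*R := by ring
        _ ≤ (a+b)*R := mul_le_mul_of_nonneg_right (by linarith) hR
    calc m^2*(p+q)^2 = (m*(p+q))^2 := by ring
      _ ≤ ((a+b)*R)^2 := by
          apply pow_le_pow_left₀ (by positivity) hstep
      _ = (a+b)^2*R^2 := by ring
  have hkey : (L*(a+b))^2+(p+q)^2 ≤ θ^2 * ((a+b)^2+(p+q)^2) := by
    rw [hθsq]
    have h6 : (1-L^2)*m^2/(m^2+R^2) * ((a+b)^2+(p+q)^2) ≤ (1-L^2)*(a+b)^2 := by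
      rw [div_mul_eq_mul_div, div_le_iff₀ hden]
      have h7 := mul_le_mul_of_nonneg_left hAP hL2.le
      linarith [h7]
    linarith [h6]
  have h3 : Real.sqrt ((L*(a+b))^2+(p+q)^2) ≤ θ * Real.sqrt ((a+b)^2+(p+q)^2) := by
    rw [show θ * Real.sqrt ((a+b)^2+(p+q)^2) = Real.sqrt (θ^2 * ((a+b)^2+(p+q)^2)) by
      rw [Real.sqrt_mul (by positivity), Real.sqrt_sq hθ0]]
    exact Real.sqrt_le_sqrt hkey
  have h4 : Real.sqrt ((a+b)^2+(p+q)^2) ≤ Zx + Zy := by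
    have hcs : a*b + p*q ≤ Zx * Zy := by
      rw [hZxdef, hZydef]; exact cs2 a p b q (by positivity)
    rw [show Zx + Zy = Real.sqrt ((Zx+Zy)^2) from (Real.sqrt_sq hsum.le).symm]
    apply Real.sqrt_le_sqrt
    linarith [hZx2, hZy2, hcs]
  have h5 : Zx^2 - Zy^2 ≤ (θ * D) * (Zx+Zy) := by
    calc Zx^2 - Zy^2 ≤ (L*(a+b))*d + (p+q)*w := h1
      _ ≤ Real.sqrt ((L*(a+b))^2+(p+q)^2) * D := h2
      _ ≤ (θ * Real.sqrt ((a+b)^2+(p+q)^2)) * D := mul_le_mul_of_nonneg_right h3 hD0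
      _ = (θ * D) * Real.sqrt ((a+b)^2+(p+q)^2) := by ring
      _ ≤ (θ * D) * (Zx+Zy) := mul_le_mul_of_nonneg_left h4 (mul_nonneg hθ0 hD0)
  have h7 : (Zx - Zy)*(Zx+Zy) ≤ (θ*D)*(Zx+Zy) := by linarith [h5]
  exact le_of_mul_le_mul_right h7 hsum

/-- On every compact set `K` the semitrough is uniformly strictly spacelike: there is
`υ ∈ (0, 1]` with `|z(x) - z(y)| ≤ (1 - υ)|x - y|` for all `x, y ∈ K`. -/
theorem semitrough_locally_uniformly_spacelike (n k : ℕ) [NeZero n]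
    (hn : 2 ≤ n) (hk1 : 1 ≤ k) (hkn : k ≤ n)
    (f : ℝ → ℝ) (hf : IsAdmissibleProfile n k f) :
    ∀ K : Set (EuclideanSpace ℝ (Fin n)), IsCompact K →
      ∃ υ : ℝ, υ ∈ Set.Ioc (0 : ℝ) 1 ∧
        ∀ x ∈ K, ∀ y ∈ K, |zfun n f x - zfun n f y| ≤ (1 - υ) * ‖x - y‖ := by
  intro K hK
  -- positivity of f
  have hlk0 : 0 ≤ lk n k :=
    Real.rpow_nonneg (div_nonneg (sub_nonneg.2 (by exact_mod_cast hkn)) (Nat.cast_nonneg n)) _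
  have hfpos : ∀ t : ℝ, 0 < f t := fun t =>
    lt_of_le_of_lt (hlk0.trans (le_max_left _ t)) (hf.2.2.2.2.1 t).1
  obtain ⟨R₀, hR₀⟩ := hK.isBounded.exists_norm_le
  set R : ℝ := max R₀ 0 with hRdef
  have hR0 : (0:ℝ) ≤ R := le_max_right _ _
  have hxR : ∀ x ∈ K, ‖x‖ ≤ R := fun x hx => (hR₀ x hx).trans (le_max_left _ _)
  have hIcc : (Set.Icc (-R) R).Nonempty := Set.nonempty_Icc.2 (by linarith)
  -- min of f
  obtain ⟨t₀, ht₀mem, hmin⟩ := isCompact_Icc.exists_isMinOn hIcc hf.1.continuous.continuousOn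
  set m : ℝ := f t₀ with hmdef
  have hm : 0 < m := hfpos t₀
  -- max of deriv f
  have hdc : Continuous (deriv f) := hf.1.continuous_deriv (by norm_num)
  obtain ⟨t₁, ht₁mem, hmax⟩ := isCompact_Icc.exists_isMaxOn hIcc hdc.continuousOn
  set L : ℝ := deriv f t₁ with hLdef
  have hL0 : 0 < L := (hf.2.2.1 t₁).1
  have hL1 : L < 1 := (hf.2.2.1 t₁).2.1
  set θ : ℝ := Real.sqrt (1 - (1-L^2)*m^2/(m^2+R^2)) with hθdef
  have hden : (0:ℝ) < m^2+R^2 := by positivity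
  have hδ0 : 0 < (1-L^2)*m^2/(m^2+R^2) :=
    div_pos (mul_pos (by nlinarith) (pow_pos hm 2)) hden
  have hδ1 : (1-L^2)*m^2/(m^2+R^2) ≤ 1 := by
    rw [div_le_one hden]
    have h1 : 0 ≤ L^2*m^2 := by positivity
    have h2 : 0 ≤ R^2 := sq_nonneg R
    nlinarith
  have hθ0 : 0 ≤ θ := Real.sqrt_nonneg _
  have hθ1 : θ < 1 := by
    have h := Real.sqrt_lt_sqrt (show (0:ℝ) ≤ 1 - (1-L^2)*m^2/(m^2+R^2) by linarith)
      (show 1 - (1-L^2)*m^2/(m^2+R^2) < 1 by linarith)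
    rw [Real.sqrt_one] at h
    exact h
  refine ⟨1 - θ, ⟨by linarith, by linarith⟩, ?_⟩
  have hcoord : ∀ x : EuclideanSpace ℝ (Fin n), |x 0| ≤ ‖x‖ := by
    intro x
    rw [EuclideanSpace.norm_eq, show |x 0| = Real.sqrt ((x 0)^2) from (Real.sqrt_sq_eq_abs _).symm]
    apply Real.sqrt_le_sqrt
    have := Finset.single_le_sum (f := fun i => ‖x i‖^2) (fun i _ => by positivity)
      (Finset.mem_univ (0 : Fin n))
    simpa [Real.norm_eq_abs, sq_abs] using this
  have hmem : ∀ x ∈ K, x 0 ∈ Set.Icc (-R) R := by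
    intro x hx
    have := (hcoord x).trans (hxR x hx)
    exact ⟨by cases abs_le.1 this with | intro h1 h2 => linarith,
           by cases abs_le.1 this with | intro h1 h2 => linarith⟩
  have hlip : ∀ u ∈ Set.Icc (-R) R, ∀ v ∈ Set.Icc (-R) R, |f u - f v| ≤ L * |u - v| := by
    intro u hu v hv
    have := Convex.norm_image_sub_le_of_norm_deriv_le (f := f) (s := Set.Icc (-R) R)
      (fun z _ => (hf.1.differentiable (by norm_num)).differentiableAt)
      (fun z hz => by rw [Real.norm_eq_abs, abs_of_pos (hf.2.2.1 z).1]; exact hmax hz)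
      (convex_Icc _ _) hv hu
    simpa [Real.norm_eq_abs] using this
  have key : ∀ x ∈ K, ∀ y ∈ K, zfun n f x - zfun n f y ≤ θ * ‖x - y‖ := by
    intro x hx y hy
    set Sx := ∑ i ∈ Finset.univ.erase (0 : Fin n), x i ^ 2 with hSxdef
    set Sy := ∑ i ∈ Finset.univ.erase (0 : Fin n), y i ^ 2 with hSydef
    set W := ∑ i ∈ Finset.univ.erase (0 : Fin n), (x i - y i) ^ 2 with hWdef
    set I := ∑ i ∈ Finset.univ.erase (0 : Fin n), x i * y i with hIdef
    have hSx0 : 0 ≤ Sx := Finset.sum_nonneg fun i _ => sq_nonneg _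
    have hSy0 : 0 ≤ Sy := Finset.sum_nonneg fun i _ => sq_nonneg _
    have hW0 : 0 ≤ W := Finset.sum_nonneg fun i _ => sq_nonneg _
    -- norm of x - y
    have hsub : ∀ i, (x - y) i = x i - y i := fun i => rfl
    have hnormxy : ‖x - y‖ = Real.sqrt ((x 0 - y 0)^2 + W) := by
      rw [EuclideanSpace.norm_eq]
      congr 1
      rw [← Finset.add_sum_erase _ _ (Finset.mem_univ (0 : Fin n))]
      simp [hsub, Real.norm_eq_abs, sq_abs, hWdef]
    -- sqrt Sx ≤ R
    have hnormsq : ∀ z : EuclideanSpace ℝ (Fin n), (z 0)^2 + (∑ i ∈ Finset.univ.erase (0 : Fin n), z i ^ 2) = ‖z‖^2 := by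
      intro z
      rw [EuclideanSpace.norm_eq, Real.sq_sqrt (Finset.sum_nonneg fun i _ => by positivity)]
      rw [← Finset.add_sum_erase _ _ (Finset.mem_univ (0 : Fin n))]
      simp [Real.norm_eq_abs, sq_abs]
    have hSxR : Real.sqrt Sx ≤ R := by
      rw [show R = Real.sqrt (R^2) from (Real.sqrt_sq hR0).symm]
      apply Real.sqrt_le_sqrt
      have h1 := hnormsq x
      have h2 : ‖x‖^2 ≤ R^2 := pow_le_pow_left₀ (norm_nonneg _) (hxR x hx) 2
      nlinarith [sq_nonneg (x 0)]
    have hSyR : Real.sqrt Sy ≤ R := by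
      rw [show R = Real.sqrt (R^2) from (Real.sqrt_sq hR0).symm]
      apply Real.sqrt_le_sqrt
      have h1 := hnormsq y
      have h2 : ‖y‖^2 ≤ R^2 := pow_le_pow_left₀ (norm_nonneg _) (hxR y hy) 2
      nlinarith [sq_nonneg (y 0)]
    -- |sqrt Sx - sqrt Sy| ≤ sqrt W
    have hW : W = Sx + Sy - 2*I := by
      rw [hWdef, hSxdef, hSydef, hIdef, Finset.mul_sum, ← Finset.sum_add_distrib,
        ← Finset.sum_sub_distrib]
      exact Finset.sum_congr rfl fun i _ => by ring
    have hI : I ≤ Real.sqrt Sx * Real.sqrt Sy := by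
      rw [← Real.sqrt_mul hSx0]
      rcases le_or_gt I 0 with h | h
      · exact h.trans (Real.sqrt_nonneg _)
      · exact (Real.le_sqrt h.le (mul_nonneg hSx0 hSy0)).2 (Finset.sum_mul_sq_le_sq_mul_sq _ _ _)
    have hpq : |Real.sqrt Sx - Real.sqrt Sy| ≤ Real.sqrt W := by
      rw [← Real.sqrt_sq_eq_abs]
      apply Real.sqrt_le_sqrt
      linarith [Real.sq_sqrt hSx0, Real.sq_sqrt hSy0, hI, hW, sq_nonneg (Real.sqrt Sx - Real.sqrt Sy)]
    -- Lipschitz bound on f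
    have hab : |f (x 0) - f (y 0)| ≤ L * |x 0 - y 0| :=
      hlip _ (hmem x hx) _ (hmem y hy)
    have haux := semitrough_aux m R L (f (x 0)) (f (y 0)) (Real.sqrt Sx) (Real.sqrt Sy)
      (|x 0 - y 0|) (Real.sqrt W) hm hR0 hL0.le hL1
      (hmin (hmem x hx)) (hmin (hmem y hy))
      (Real.sqrt_nonneg _) hSxR (Real.sqrt_nonneg _) hSyR
      (abs_nonneg _) (Real.sqrt_nonneg _) hab hpq
    rw [Real.sq_sqrt hSx0, Real.sq_sqrt hSy0, Real.sq_sqrt hW0, sq_abs] at haux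
    rw [hnormxy]
    exact haux
  intro x hx y hy
  have h1 := key x hx y hy
  have h2 := key y hy x hx
  rw [norm_sub_rev] at h2
  rw [show (1 : ℝ) - (1 - θ) = θ by ring]
  rw [abs_sub_le_iff]
  exact ⟨h1, h2⟩
end

section
/- Let n ≥ 2 and 2 ≤ k ≤ n be integers. Let f₁ be an admissible semitrough profile for (n,1) and let f_k be an admissible semitrough profile for (n,k). Then f₁(t) > f_k(t) for every t ∈ ℝ. -/
open Filter Real
open Set

lemma amgm_nonstrict : ∀ (k : ℕ), 1 ≤ k → ∀ x : ℝ, 0 ≤ x → (k:ℝ) * x ≤ x ^ k + ((k:ℝ) - 1) := by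
  intro k
  induction k with
  | zero => intro h; omega
  | succ m ih =>
    intro _ x hx
    rcases Nat.eq_zero_or_pos m with hm | hm
    · subst hm; simp
    · have h := ih hm x hx
      have hm' : (0:ℝ) ≤ m := by positivity
      push_cast
      nlinarith [pow_succ x m, sq_nonneg (x-1)]

lemma amgm_strict (k : ℕ) (hk : 2 ≤ k) (x : ℝ) (hx : 0 ≤ x) (hx1 : x ≠ 1) :
    (k:ℝ) * x < x ^ k + ((k:ℝ) - 1) := by
  have h := amgm_nonstrict (k-1) (by omega) x hx
  have hpow : x ^ k = x * x ^ (k-1) := by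
    rw [← pow_succ']; congr 1; omega
  have hc : ((k-1 : ℕ) : ℝ) = (k:ℝ) - 1 := by
    push_cast [Nat.cast_sub (by omega : 1 ≤ k)]; ring
  rw [hc] at h
  have hk1 : (1:ℝ) ≤ (k:ℝ) - 1 := by
    have : (2:ℝ) ≤ k := by exact_mod_cast hk
    linarith
  have hsq : 0 < (x-1)^2 := lt_of_le_of_ne (sq_nonneg _) (Ne.symm (pow_ne_zero 2 (sub_ne_zero.mpr hx1)))
  nlinarith
lemma bernoulli_strict : ∀ (k : ℕ), 2 ≤ k → ∀ y : ℝ, 0 < y → y < 1 → 1 - (k:ℝ)*y < (1-y)^k := by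
  intro k
  induction k with
  | zero => omega
  | succ m ih =>
    intro hm y hy hy1
    rcases Nat.lt_or_ge m 2 with hm2 | hm2
    · interval_cases m
      · omega
      · push_cast; nlinarith
    · have h := ih hm2 y hy hy1
      push_cast
      nlinarith [pow_succ (1-y) m, mul_lt_mul_of_pos_right h (by linarith : (0:ℝ) < 1 - y), mul_nonneg (by positivity : (0:ℝ) ≤ (m:ℝ)) (sq_nonneg y)]

lemma lk_lt (n k : ℕ) (hn : 2 ≤ n) (hk2 : 2 ≤ k) (hkn : k ≤ n) : lk n k < lk n 1 := by
  have hn0 : (0:ℝ) < n := by positivity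
  have h1 : lk n 1 = ((n:ℝ) - 1) / n := by
    simp [lk]
  have hb : ((n:ℝ) - k) / n < (((n:ℝ) - 1)/n) ^ k := by
    have hy : (0:ℝ) < 1/n := by positivity
    have hy1 : (1:ℝ)/n < 1 := by
      rw [div_lt_one hn0]; exact_mod_cast hn
    have := bernoulli_strict k hk2 (1/(n:ℝ)) hy hy1
    have e1 : (1:ℝ) - 1/n = ((n:ℝ)-1)/n := by field_simp
    have e2 : ((n:ℝ) - k)/n = 1 - (k:ℝ)*(1/n) := by field_simp
    rw [e1] at this; rw [e2]; linarith
  have hnk0 : (0:ℝ) ≤ ((n:ℝ) - k)/n := by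
    apply div_nonneg _ hn0.le
    have : (k:ℝ) ≤ n := by exact_mod_cast hkn
    linarith
  have hk0 : (0:ℝ) < 1/(k:ℝ) := by positivity
  calc lk n k = (((n:ℝ) - k) / n) ^ ((1:ℝ)/k) := rfl
    _ < ((((n:ℝ)-1)/n) ^ k) ^ ((1:ℝ)/k) := Real.rpow_lt_rpow hnk0 hb hk0
    _ = ((n:ℝ)-1)/n := by
        rw [← Real.rpow_natCast (((n:ℝ)-1)/n) k, ← Real.rpow_mul (by
          have h2 : (2:ℝ) ≤ n := by exact_mod_cast hn
          apply div_nonneg <;> linarith)]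
        rw [mul_one_div, div_self (Nat.cast_ne_zero.mpr (by omega) : (k:ℝ) ≠ 0), Real.rpow_one]
    _ = lk n 1 := h1.symm

lemma lk_nonneg (n k : ℕ) (hkn : k ≤ n) : 0 ≤ lk n k := by
  apply Real.rpow_nonneg
  apply div_nonneg _ (by positivity : (0:ℝ) ≤ n)
  have : (k:ℝ) ≤ n := by exact_mod_cast hkn
  linarith

lemma lk_lt_one (n k : ℕ) (hn : 1 ≤ n) (hk : 1 ≤ k) (hkn : k ≤ n) : lk n k < 1 := by
  have hn0 : (0:ℝ) < n := by exact_mod_cast hn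
  have hk0 : (k:ℝ) ≠ 0 := by positivity
  rcases eq_or_lt_of_le hkn with rfl | h
  · have : ((k:ℝ) - k)/k = 0 := by simp
    rw [lk, this, Real.zero_rpow (by positivity : (1:ℝ)/k ≠ 0)]; norm_num
  · apply Real.rpow_lt_one (by
      apply div_nonneg _ hn0.le
      have : (k:ℝ) ≤ n := by exact_mod_cast hkn
      linarith)
    · rw [div_lt_one hn0]
      have : (0:ℝ) < k := by positivity
      linarith
    · positivity

lemma contdiff2_deriv {g : ℝ → ℝ} (hg : ContDiff ℝ 2 g) : ContDiff ℝ 1 (deriv g) := by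
  have hg' := hg
  rw [show (2:WithTop ℕ∞) = 1+1 from by norm_num] at hg'
  exact (contDiff_succ_iff_deriv.mp hg').2.2

lemma second_deriv_nonneg_of_isLocalMin {g : ℝ → ℝ} (hg : ContDiff ℝ 2 g) {t : ℝ}
    (h : IsLocalMin g t) : 0 ≤ deriv (deriv g) t := by
  by_contra hneg
  push_neg at hneg
  have hg1 : ContDiff ℝ 1 (deriv g) := contdiff2_deriv hg
  have hdg : Differentiable ℝ (deriv g) := hg1.differentiable one_ne_zero
  have hcont : Continuous (deriv (deriv g)) := hg1.continuous_deriv le_rfl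
  have hd0 : deriv g t = 0 := h.deriv_eq_zero
  have hev : ∀ᶠ s in nhds t, deriv (deriv g) s < 0 :=
    hcont.continuousAt.eventually_lt continuous_const.continuousAt hneg
  obtain ⟨ε, hε, hball⟩ := Metric.eventually_nhds_iff_ball.mp hev
  have hsub : Icc t (t + ε/2) ⊆ Metric.ball t ε := by
    intro s hs
    rw [Metric.mem_ball, Real.dist_eq, abs_lt]
    constructor <;> [linarith [hs.1]; linarith [hs.2]]
  have hanti : StrictAntiOn (deriv g) (Icc t (t + ε/2)) := by
    apply strictAntiOn_of_deriv_neg (convex_Icc _ _) (hdg.continuous.continuousOn)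
    intro s hs
    exact hball s (hsub (interior_subset hs))
  have hanti2 : StrictAntiOn g (Icc t (t + ε/2)) := by
    apply strictAntiOn_of_deriv_neg (convex_Icc _ _)
      ((hg.differentiable (by norm_num)).continuous.continuousOn)
    intro s hs
    rw [interior_Icc] at hs
    have := hanti (left_mem_Icc.mpr (by linarith [hs.1, hs.2])) (Ioo_subset_Icc_self hs) hs.1
    rw [hd0] at this
    exact this
  have h' : ∀ᶠ x in nhds t, g t ≤ g x := h
  obtain ⟨δ, hδ, hloc⟩ := Metric.eventually_nhds_iff_ball.mp h'
  obtain ⟨m, hm, hmε, hmδ⟩ : ∃ m : ℝ, 0 < m ∧ m ≤ ε/2 ∧ m < δ :=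
    ⟨min (ε/2) (δ/2), lt_min (by linarith) (by linarith),
      min_le_left _ _, lt_of_le_of_lt (min_le_right _ _) (by linarith)⟩
  have h1 : g (t + m) < g t := by
    have := hanti2 (left_mem_Icc.mpr (by linarith))
      (by constructor <;> linarith) (by linarith : t < t + m)
    exact this
  have h2 : g t ≤ g (t + m) := by
    apply hloc
    rw [Metric.mem_ball, Real.dist_eq, abs_lt]
    constructor <;> linarith
  linarith

lemma rpow_half_pow {W : ℝ} (hW : 0 < W) (k : ℕ) : W ^ ((k:ℝ)/2) = Real.sqrt W ^ k := by
  rw [Real.sqrt_eq_rpow, ← Real.rpow_natCast (W ^ (1/(2:ℝ))) k, ← Real.rpow_mul hW.le]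
  ring_nf

lemma rpow_half_pow' {W : ℝ} (hW : 0 < W) (k : ℕ) :
    W ^ ((k:ℝ)/2 + 1) = Real.sqrt W ^ k * W := by
  rw [Real.rpow_add hW, Real.rpow_one, rpow_half_pow hW]

lemma eq_poly (n k : ℕ) (hk : 1 ≤ k) {f A W : ℝ} (hf : 0 < f) (hW : 0 < W)
    (E : (k:ℝ) * A / (f ^ (k-1) * W ^ ((k:ℝ)/2+1)) + ((n:ℝ) - k)/(f^k * W^((k:ℝ)/2)) = n) :
    (k:ℝ) * A * f + ((n:ℝ)-(k:ℝ)) * W = (n:ℝ) * (f * Real.sqrt W)^k * W := by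
  set s := Real.sqrt W with hs
  have hs0 : 0 < s := Real.sqrt_pos.mpr hW
  have hs2 : s^2 = W := Real.sq_sqrt hW.le
  rw [rpow_half_pow hW, rpow_half_pow' hW, ← hs] at E
  have hfk : f ^ (k-1) * f = f ^ k := by rw [← pow_succ]; congr 1; omega
  have h1 : f ^ (k-1) ≠ 0 := by positivity
  have h2 : s ^ k ≠ 0 := by positivity
  have h3 : f ^ k ≠ 0 := by positivity
  field_simp at E
  rw [mul_pow]
  have key : (f^(k-1)*s^k) * ((k:ℝ)*A*f + ((n:ℝ)-(k:ℝ))*W)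
      = (f^(k-1)*s^k) * ((n:ℝ)*(f^k*s^k)*W) := by
    linear_combination s^k * E + ((k:ℝ)*A*s^k) * hfk
  exact mul_left_cancel₀ (by positivity) key

lemma psi_deriv_alg (n k : ℕ) (hk : 1 ≤ k) {f p A W : ℝ} (hf : 0 < f) (hW : 0 < W)
    (heq : (k:ℝ)*A*f + ((n:ℝ)-(k:ℝ))*W = (n:ℝ)*(f*Real.sqrt W)^k*W) :
    2*f*p*W - 2*f^2*p*A =
      (2*(n:ℝ)*f*p*W*(∑ i ∈ Finset.range k, (f*Real.sqrt W)^i))/((k:ℝ)*(1+f*Real.sqrt W))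
        * (1 - f^2*W) := by
  set x := f * Real.sqrt W with hxdef
  set S := ∑ i ∈ Finset.range k, x ^ i with hSdef
  have hx0 : 0 ≤ x := by positivity
  have hx2 : x^2 = f^2*W := by
    rw [hxdef, mul_pow, Real.sq_sqrt hW.le]
  have hgeo : (x-1)*S = x^k - 1 := by
    have := geom_sum_mul x k
    linear_combination this
  have hne : (k:ℝ)*(1+x) ≠ 0 := by
    apply mul_ne_zero (Nat.cast_ne_zero.mpr (by omega))
    positivity
  rw [div_mul_eq_mul_div, eq_div_iff hne]
  linear_combination (-(2*p*f)*(1+x)) * heq + (2*(n:ℝ)*f*p*W*(1+x)) * hgeo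
    - (2*(n:ℝ)*f*p*W*S) * hx2


set_option maxHeartbeats 2000000 in
/-- Comparison of semitrough profiles: the mean curvature (`k = 1`) profile dominates
the `σ_k` profile for every `2 ≤ k ≤ n`. -/
theorem semitrough_profile_comparison (n k : ℕ) (hn : 2 ≤ n) (hk2 : 2 ≤ k) (hkn : k ≤ n)
    (f₁ fk : ℝ → ℝ)
    (h₁ : IsAdmissibleProfile n 1 f₁) (hk : IsAdmissibleProfile n k fk) :
    ∀ t : ℝ, f₁ t > fk t := by
  obtain ⟨hC1, hE1, hD1, hL1, hB1, hA1⟩ := h₁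
  obtain ⟨hCk, hEk, hDk, hLk, hBk, hAk⟩ := hk
  have hd1 : Differentiable ℝ f₁ := hC1.differentiable (by norm_num)
  have hdk : Differentiable ℝ fk := hCk.differentiable (by norm_num)
  have hd1' : Differentiable ℝ (deriv f₁) := (contdiff2_deriv hC1).differentiable one_ne_zero
  have hdk' : Differentiable ℝ (deriv fk) := (contdiff2_deriv hCk).differentiable one_ne_zero
  have hf1pos : ∀ t, 0 < f₁ t := fun t =>
    lt_of_le_of_lt (le_trans (lk_nonneg n 1 (by omega)) (le_max_left _ _)) (hB1 t).1
  have hfkpos : ∀ t, 0 < fk t := fun t =>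
    lt_of_le_of_lt (le_trans (lk_nonneg n k hkn) (le_max_left _ _)) (hBk t).1
  by_contra hcon
  push_neg at hcon
  obtain ⟨t₀, ht₀⟩ := hcon
  set h : ℝ → ℝ := fun t => f₁ t - fk t with hdef
  have hCh : ContDiff ℝ 2 h := hC1.sub hCk
  have hcont : Continuous h := (hd1.continuous).sub (hdk.continuous)
  have hderivh : deriv h = fun t => deriv f₁ t - deriv fk t := by
    funext t; exact deriv_sub (hd1 t) (hdk t)
  have hderiv2h : ∀ t, deriv (deriv h) t = deriv (deriv f₁) t - deriv (deriv fk) t := by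
    intro t; rw [hderivh]; exact deriv_sub (hd1' t) (hdk' t)
  -- Step 1: find a local min w with h w ≤ 0
  obtain ⟨w, hwloc, hwle⟩ : ∃ w, IsLocalMin h w ∧ h w ≤ 0 := by
    by_cases hpos : ∀ s, 0 ≤ h s
    · refine ⟨t₀, ?_, by simpa [hdef] using ht₀⟩
      have h0 : h t₀ ≤ 0 := by simpa [hdef] using ht₀
      exact Filter.Eventually.of_forall fun s => le_trans h0 (hpos s)
    · push_neg at hpos
      obtain ⟨t₁, ht₁⟩ := hpos
      have hlimbot : Tendsto h atBot (nhds (lk n 1 - lk n k)) := hL1.sub hLk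
      have hgap : (0:ℝ) < lk n 1 - lk n k := by
        have := lk_lt n k hn hk2 hkn; linarith
      have hev_bot : ∀ᶠ t in atBot, h t₁ < h t :=
        hlimbot.eventually (eventually_gt_nhds (by linarith))
      obtain ⟨Aend, hAend⟩ := eventually_atBot.mp hev_bot
      -- top end
      obtain ⟨C₁, hC₁, T₁, hT₁, hA1'⟩ := hA1
      obtain ⟨Ck, hCk', Tk, hTk, hAk'⟩ := hAk
      have hrpow : Tendsto (fun t:ℝ => (C₁+Ck) * t ^ (-(n:ℝ)-1)) atTop (nhds 0) := by
        have h0 : Tendsto (fun t:ℝ => t ^ (-((n:ℝ)+1))) atTop (nhds 0) :=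
          tendsto_rpow_neg_atTop (by positivity)
        have : Tendsto (fun t:ℝ => (C₁+Ck) * t ^ (-((n:ℝ)+1))) atTop (nhds ((C₁+Ck)*0)) :=
          h0.const_mul _
        rw [mul_zero] at this
        convert this using 2
        ring_nf
      have hev1 : ∀ᶠ t in atTop, (C₁+Ck) * t ^ (-(n:ℝ)-1) < -h t₁ :=
        hrpow.eventually (eventually_lt_nhds (by linarith))
      have hev2 : ∀ᶠ t in atTop, max T₁ Tk < t := eventually_gt_atTop _
      have hev_top : ∀ᶠ t in atTop, h t₁ < h t := by
        filter_upwards [hev1, hev2] with t hlt hmt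
        have ht1 : t > T₁ := lt_of_le_of_lt (le_max_left _ _) hmt
        have htk : t > Tk := lt_of_le_of_lt (le_max_right _ _) hmt
        have e1 := abs_lt.mp (hA1' t ht1)
        have e2 := abs_lt.mp (hAk' t htk)
        have : h t = (f₁ t - Real.sqrt (1+t^2)) - (fk t - Real.sqrt (1+t^2)) := by
          simp [hdef]
        rw [this]
        linarith [e1.1, e2.2]
      obtain ⟨Bend, hBend⟩ := eventually_atTop.mp hev_top
      set a' := min Aend (t₁ - 1) with ha'
      set b' := max Bend (t₁ + 1) with hb'
      have hab' : a' < t₁ := lt_of_le_of_lt (min_le_right _ _) (by linarith)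
      have hba' : t₁ < b' := lt_of_lt_of_le (by linarith) (le_max_right _ _)
      obtain ⟨w, hwmem, hwmin⟩ :=
        isCompact_Icc.exists_isMinOn (nonempty_Icc.mpr (by linarith))
          (hcont.continuousOn (s := Icc a' b'))
      have hwt₁ : h w ≤ h t₁ := hwmin (mem_Icc.mpr ⟨hab'.le, hba'.le⟩)
      have hwa : h t₁ < h a' := hAend a' (min_le_left _ _)
      have hwb : h t₁ < h b' := hBend b' (le_max_left _ _)
      have hwa' : a' < w := by
        rcases lt_or_eq_of_le hwmem.1 with h' | h'
        · exact h'
        · exfalso; rw [← h'] at hwt₁; linarith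
      have hwb' : w < b' := by
        rcases lt_or_eq_of_le hwmem.2 with h' | h'
        · exact h'
        · exfalso; rw [h'] at hwt₁; linarith
      exact ⟨w, hwmin.isLocalMin (Icc_mem_nhds hwa' hwb'), by linarith⟩
  -- Step 2
  have hd0 : deriv h w = 0 := hwloc.deriv_eq_zero
  have hpp : deriv f₁ w = deriv fk w := by
    have := hd0
    rw [hderivh] at this
    simpa [sub_eq_zero] using this
  have hsec : 0 ≤ deriv (deriv f₁) w - deriv (deriv fk) w := by
    have := second_deriv_nonneg_of_isLocalMin hCh hwloc
    rwa [hderiv2h w] at this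
  -- Step 3: algebra at w
  set a := f₁ w with hadef
  set b := fk w with hbdef
  set p := deriv fk w with hpdef
  set A := deriv (deriv f₁) w with hAdef
  set B := deriv (deriv fk) w with hBdef
  have hp0 : 0 < p := (hDk w).1
  have hp1 : p < 1 := (hDk w).2.1
  have hW : 0 < 1 - p^2 := by nlinarith
  set q := Real.sqrt (1 - p^2) with hqdef
  have hq0 : 0 < q := Real.sqrt_pos.mpr hW
  have hq2 : q^2 = 1 - p^2 := Real.sq_sqrt hW.le
  have ha : 0 < a := hf1pos w
  have hb : 0 < b := hfkpos w
  have hab : a ≤ b := by simpa [hdef, sub_nonpos] using hwle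
  have hApos : 0 < A := (hD1 w).2.2
  have E1w := hE1 w
  rw [hpp] at E1w
  have P1 := eq_poly n 1 le_rfl ha hW E1w
  have P2 := eq_poly n k (by omega) hb hW (hEk w)
  rw [← hAdef, ← hqdef, pow_one] at P1
  rw [← hBdef, ← hqdef] at P2
  push_cast at P1 P2
  have hn2 : (2:ℝ) ≤ n := by exact_mod_cast hn
  have hk2' : (2:ℝ) ≤ k := by exact_mod_cast hk2
  have hnW : 0 < (n:ℝ) * (1-p^2) := by positivity
  have hx1 : b * q = 1 := by
    by_contra hx
    have hstrict := amgm_strict k hk2 (b*q) (by positivity) hx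
    -- k B b > k (n W q b - (n-1) W)
    have h5 : (k:ℝ) * B * b > (k:ℝ)*((n:ℝ)*(1-p^2)*q*b - ((n:ℝ)-1)*(1-p^2)) := by
      have hmul := mul_lt_mul_of_pos_left hstrict hnW
      linarith [P2, hmul]
    have hA' : A * a = (n:ℝ)*a*q*(1-p^2) - ((n:ℝ)-1)*(1-p^2) := by linarith [P1]
    have h8 : A * b ≤ (n:ℝ)*(1-p^2)*q*b - ((n:ℝ)-1)*(1-p^2) := by
      have hmono : ((n:ℝ)-1)*(1-p^2)*a ≤ ((n:ℝ)-1)*(1-p^2)*b :=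
        mul_le_mul_of_nonneg_left hab (by nlinarith : (0:ℝ) ≤ ((n:ℝ)-1)*(1-p^2))
      have habA : A * b * a = ((n:ℝ)*a*q*(1-p^2) - ((n:ℝ)-1)*(1-p^2)) * b := by
        rw [← hA']; ring
      have h8a : (A*b)*a ≤ ((n:ℝ)*(1-p^2)*q*b - ((n:ℝ)-1)*(1-p^2))*a := by
        linarith [habA, hmono]
      exact le_of_mul_le_mul_right h8a ha
    have h9 : B * b ≤ A * b := by linarith [mul_nonneg hsec hb.le]
    linarith [mul_le_mul_of_nonneg_left h8 (by positivity : (0:ℝ) ≤ (k:ℝ)),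
      mul_le_mul_of_nonneg_left h9 (by positivity : (0:ℝ) ≤ (k:ℝ)), h5]
  -- Step 4: Gronwall contradiction
  have hq1 : q < 1 := by nlinarith [hq2, hq0, hp0]
  have hb1 : 1 < b := by nlinarith [mul_lt_mul_of_pos_left hq1 hb]
  set u : ℝ → ℝ := fun t => 1 - fk t ^ 2 * (1 - deriv fk t ^ 2) with hudef
  have huw : u w = 0 := by
    show 1 - b ^ 2 * (1 - p ^ 2) = 0
    nlinarith [hq2, hx1]
  set c : ℝ → ℝ := fun t =>
    (2*(n:ℝ)*fk t*deriv fk t*(1 - deriv fk t^2) *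
      (∑ i ∈ Finset.range k, (fk t * Real.sqrt (1 - deriv fk t^2))^i))
      /((k:ℝ)*(1+fk t*Real.sqrt (1 - deriv fk t^2))) with hcdef
  have hWt : ∀ t, 0 < 1 - deriv fk t ^ 2 := by
    intro t; nlinarith [(hDk t).1, (hDk t).2.1]
  have hu' : ∀ t, HasDerivAt u (-(c t * u t)) t := by
    intro t
    have d1 : HasDerivAt fk (deriv fk t) t := (hdk t).hasDerivAt
    have d2 : HasDerivAt (deriv fk) (deriv (deriv fk) t) t := (hdk' t).hasDerivAt
    have e1 : HasDerivAt (fun s => fk s^2) (2*fk t*deriv fk t) t := by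
      have := d1.fun_pow 2
      refine this.congr_deriv ?_
      push_cast
      ring
    have e2 : HasDerivAt (fun s => 1 - deriv fk s^2)
        (-(2*deriv fk t*deriv (deriv fk) t)) t := by
      have := (d2.fun_pow 2).const_sub 1
      refine this.congr_deriv ?_
      push_cast
      ring
    have dψ : HasDerivAt (fun s => fk s^2*(1 - deriv fk s^2))
        (2*fk t*deriv fk t*(1 - deriv fk t^2)
          - 2*(fk t)^2*deriv fk t*deriv (deriv fk) t) t := by
      have := e1.fun_mul e2
      refine this.congr_deriv ?_
      ring
    have dU : HasDerivAt u
        (-(2*fk t*deriv fk t*(1 - deriv fk t^2)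
          - 2*(fk t)^2*deriv fk t*deriv (deriv fk) t)) t := by
      exact dψ.const_sub 1
    convert dU using 1
    have heqt := eq_poly n k (by omega) (hfkpos t) (hWt t) (hEk t)
    have halg := psi_deriv_alg n k (by omega) (p := deriv fk t) (hfkpos t) (hWt t) heqt
    have : c t * u t = (2*fk t*deriv fk t*(1 - deriv fk t^2)
          - 2*(fk t)^2*deriv fk t*deriv (deriv fk) t) := by
      rw [hcdef, hudef]
      dsimp only
      rw [div_mul_eq_mul_div] at halg ⊢
      linarith [halg]
    rw [this]
  -- continuity
  have hdkcont : Continuous (deriv fk) := hCk.continuous_deriv (by norm_num)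
  have hdk2cont : Continuous (deriv (deriv fk)) := (contdiff2_deriv hCk).continuous_deriv le_rfl
  have hfkc : Continuous fk := hdk.continuous
  have hsqc : Continuous (fun t => 1 - deriv fk t^2) :=
    continuous_const.sub (hdkcont.pow 2)
  have hxcont : Continuous (fun t => fk t * Real.sqrt (1 - deriv fk t^2)) :=
    hfkc.mul (Real.continuous_sqrt.comp hsqc)
  have hxnn : ∀ t, 0 ≤ fk t * Real.sqrt (1 - deriv fk t^2) := fun t =>
    mul_nonneg (hfkpos t).le (Real.sqrt_nonneg _)
  have hccont : Continuous c := by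
    rw [hcdef]
    apply Continuous.div
    · exact ((((continuous_const.mul hfkc).mul hdkcont).mul hsqc).mul
        (continuous_finset_sum _ (fun i _ => hxcont.pow i)))
    · exact continuous_const.mul (continuous_const.add hxcont)
    · intro t
      exact ne_of_gt (mul_pos (by exact_mod_cast Nat.lt_of_lt_of_le Nat.zero_lt_two hk2 : (0:ℝ) < k)
        (by linarith [hxnn t]))
  have hucont : Continuous u := by
    rw [hudef]
    exact continuous_const.sub ((hfkc.pow 2).mul hsqc)
  -- pick t₁ with fk t₁ < 1
  have hlk1 : lk n k < 1 := lk_lt_one n k (by omega) (by omega) hkn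
  have hev : ∀ᶠ t in atBot, fk t < 1 := hLk.eventually (eventually_lt_nhds hlk1)
  obtain ⟨t₁, ht₁⟩ := hev.exists
  have hu1 : 0 < u t₁ := by
    show 0 < 1 - fk t₁ ^ 2 * (1 - deriv fk t₁ ^ 2)
    nlinarith [hfkpos t₁, ht₁, sq_nonneg (fk t₁ * deriv fk t₁), sq_nonneg (deriv fk t₁)]
  have hmono : StrictMono fk := strictMono_of_deriv_pos (fun t => (hDk t).1)
  have ht₁w : t₁ < w := by
    have : fk t₁ < fk w := by
      show fk t₁ < b
      linarith
    exact hmono.lt_iff_lt.mp this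
  -- Gronwall on v
  obtain ⟨M, hM⟩ := (isCompact_Icc (a := t₁) (b := w)).exists_bound_of_continuousOn
    hccont.continuousOn
  set v : ℝ → ℝ := fun s => u (t₁ + w - s) with hvdef
  have hv' : ∀ s, HasDerivAt v (c (t₁+w-s) * u (t₁+w-s)) s := by
    intro s
    have hinner : HasDerivAt (fun s : ℝ => t₁ + w - s) (-1) s := by
      simpa using (hasDerivAt_const s (t₁+w)).fun_sub (hasDerivAt_id s)
    have := (hu' (t₁+w-s)).comp s hinner
    refine this.congr_deriv ?_
    ring
  have hgron := norm_le_gronwallBound_of_norm_deriv_right_le (δ := 0) (K := M) (ε := 0)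
    (a := t₁) (b := w) (f := v) (f' := fun s => c (t₁+w-s) * u (t₁+w-s))
    (hucont.comp (continuous_const.sub continuous_id)).continuousOn
    (fun s _ => (hv' s).hasDerivWithinAt)
    (by
      show ‖v t₁‖ ≤ 0
      have : v t₁ = u w := by rw [hvdef]; simp
      rw [this, huw]; simp)
    (by
      intro s hs
      have hmem : t₁ + w - s ∈ Icc t₁ w := by
        constructor <;> [linarith [hs.2]; linarith [hs.1]]
      have hb' := hM _ hmem
      calc ‖c (t₁+w-s) * u (t₁+w-s)‖ = ‖c (t₁+w-s)‖ * ‖u (t₁+w-s)‖ := norm_mul _ _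
        _ ≤ M * ‖u (t₁+w-s)‖ := mul_le_mul_of_nonneg_right hb' (norm_nonneg _)
        _ = M * ‖v s‖ + 0 := by rw [hvdef]; simp)
  have hfin := hgron w (right_mem_Icc.mpr ht₁w.le)
  rw [gronwallBound_ε0_δ0] at hfin
  have : v w = u t₁ := by rw [hvdef]; simp
  rw [this] at hfin
  have : u t₁ = 0 := by
    have := norm_nonneg (u t₁)
    have habs : |u t₁| ≤ 0 := hfin
    rw [abs_le] at habs
    linarith [habs.1, habs.2]
  linarith
end

section
/- Let n ≥ 2 and let q : ℝⁿ \ {0} → ℝ be homogeneous of degree zero (q(x) = q(x/|x|)), twice continuously differentiable with locally Lipschitz second derivatives, and satisfy q(y) = 0 for every y with y₁ ≤ 0. Then there exist constants a₀, a₁, a₄ > 0 such that for every y ∈ 𝕊^{n-1} with y₁ ≥ 0: |q(y)| ≤ a₀·y₁², |Dq(y)| ≤ a₁·y₁, and |∂q/∂x_i(y)| ≤ a₄·y₁² for each i ∈ {2, …, n}. -/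
open Filter Real
open scoped RealInnerProductSpace

open Metric Set Topology

section Aux

variable {n : ℕ} [NeZero n]

local notation "E" => EuclideanSpace ℝ (Fin n)

lemma aux_abs_coord_le_norm (v : E) (i : Fin n) : |v i| ≤ ‖v‖ := by
  have h := abs_real_inner_le_norm (EuclideanSpace.single i (1:ℝ)) v
  rw [EuclideanSpace.inner_single_left] at h
  simpa using h

lemma aux_norm_gradient (q : E → ℝ) (y : E) : ‖gradient q y‖ = ‖fderiv ℝ q y‖ := by
  rw [gradient]
  exact LinearIsometryEquiv.norm_map _ _

end Aux
section Aux2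
set_option linter.unusedSectionVars false

variable {n : ℕ} [NeZero n]

local notation "E" => EuclideanSpace ℝ (Fin n)

lemma aux_contDiffAt (q : E → ℝ) (hq2 : ContDiffOn ℝ 2 q {x : E | x ≠ 0}) :
    ∀ x : E, x ≠ 0 → ContDiffAt ℝ 2 q x := fun x hx =>
  hq2.contDiffAt (isOpen_ne.mem_nhds hx)

lemma aux_vanish (q : E → ℝ) (hq2 : ContDiffOn ℝ 2 q {x : E | x ≠ 0})
    (hqzero : ∀ x : E, x ≠ 0 → x 0 ≤ 0 → q x = 0) :
    ∀ z : E, z ≠ 0 → z 0 ≤ 0 →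
      q z = 0 ∧ fderiv ℝ q z = 0 ∧ fderiv ℝ (fderiv ℝ q) z = 0 := by
  have contAt := aux_contDiffAt q hq2
  set f := fderiv ℝ q with hf
  set g := fderiv ℝ f with hg
  have hUopen : IsOpen {x : E | x 0 < 0} :=
    isOpen_lt (EuclideanSpace.proj (0 : Fin n)).continuous continuous_const
  have hUne : ∀ x : E, x 0 < 0 → x ≠ 0 := by
    intro x hx h0
    rw [h0] at hx
    simp at hx
  have hQU : ∀ x : E, x 0 < 0 → q x = 0 := fun x hx => hqzero x (hUne x hx) hx.le
  have hfU : ∀ x : E, x 0 < 0 → f x = 0 := by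
    intro x hx
    have hev : q =ᶠ[𝓝 x] fun _ => (0 : ℝ) :=
      eventually_of_mem (hUopen.mem_nhds hx) fun y hy => hQU y hy
    rw [hf, hev.fderiv_eq, fderiv_fun_const]
    rfl
  have hgU : ∀ x : E, x 0 < 0 → g x = 0 := by
    intro x hx
    have hev : f =ᶠ[𝓝 x] fun _ => (0 : E →L[ℝ] ℝ) :=
      eventually_of_mem (hUopen.mem_nhds hx) fun y hy => hfU y hy
    rw [hg, hev.fderiv_eq, fderiv_fun_const]
    rfl
  intro z hz hz0
  rcases lt_or_eq_of_le hz0 with h | h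
  · exact ⟨hQU z h, hfU z h, hgU z h⟩
  -- boundary case : z 0 = 0
  set e₀ : E := EuclideanSpace.single (0 : Fin n) (1:ℝ) with he₀
  set γ : ℝ → E := fun t => z - t • e₀ with hγdef
  have hγ : Tendsto γ (𝓝[>] (0:ℝ)) (𝓝 z) := by
    have hc : Continuous γ := continuous_const.sub (continuous_id.smul continuous_const)
    have := hc.tendsto 0
    simp only [hγdef, zero_smul, sub_zero] at this
    exact this.mono_left nhdsWithin_le_nhds
  have hγU : ∀ t ∈ Set.Ioi (0:ℝ), (γ t) 0 < 0 := by
    intro t ht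
    have : (γ t) 0 = z 0 - t * (e₀ 0) := rfl
    rw [this, ← h]
    have : e₀ 0 = 1 := by simp [he₀, EuclideanSpace.single_apply]
    rw [this]
    simpa using ht
  have hcq : ContinuousAt q z := (contAt z hz).continuousAt
  have hcf : ContinuousAt f z := by
    have h1 : ContDiffAt ℝ 1 f z := (contAt z hz).fderiv_right (by norm_num)
    exact h1.continuousAt
  have hcg : ContinuousAt g z := by
    have h1 : ContDiffAt ℝ 1 f z := (contAt z hz).fderiv_right (by norm_num)
    have h2 : ContDiffAt ℝ 0 g z := h1.fderiv_right (by norm_num)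
    exact h2.continuousAt
  have limit : ∀ {β : Type} [TopologicalSpace β] [T2Space β] (F : E → β) (b : β),
      ContinuousAt F z → (∀ t ∈ Set.Ioi (0:ℝ), F (γ t) = b) → F z = b := by
    intro β _ _ F b hc hv
    have h1 : Tendsto (F ∘ γ) (𝓝[>](0:ℝ)) (𝓝 (F z)) := hc.tendsto.comp hγ
    have h2 : (F ∘ γ) =ᶠ[𝓝[>](0:ℝ)] fun _ => b := eventually_nhdsWithin_of_forall hv
    exact tendsto_nhds_unique (h1.congr' h2) tendsto_const_nhds
  exact ⟨limit q 0 hcq fun t ht => hQU _ (hγU t ht),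
    limit f 0 hcf fun t ht => hfU _ (hγU t ht),
    limit g 0 hcg fun t ht => hgU _ (hγU t ht)⟩
end Aux2

section Aux3
set_option linter.unusedSectionVars false

lemma aux_unif_lip {X : Type*} [NormedAddCommGroup X] {Y : Type*} [NormedAddCommGroup Y]
    (g : X → Y) (C : Set X) (hC : IsCompact C)
    (hlip : ∀ z ∈ C, ∃ ε > (0:ℝ), ∃ K : NNReal, LipschitzOnWith K g (Metric.ball z ε))
    (hg0 : ∀ z ∈ C, g z = 0) :
    ∃ δ > (0:ℝ), ∃ L : ℝ, 0 ≤ L ∧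
      ∀ z ∈ C, ∀ s : X, dist s z < δ → ‖g s‖ ≤ L * ‖s - z‖ := by
  rcases C.eq_empty_or_nonempty with hemp | hne
  · exact ⟨1, one_pos, 0, le_refl _, by simp [hemp]⟩
  have h' : ∀ z : X, ∃ ε > (0:ℝ), ∃ K : NNReal,
      z ∈ C → LipschitzOnWith K g (Metric.ball z ε) := by
    intro z
    by_cases hz : z ∈ C
    · obtain ⟨ε, hε, K, hK⟩ := hlip z hz
      exact ⟨ε, hε, K, fun _ => hK⟩
    · exact ⟨1, one_pos, 0, fun h => absurd h hz⟩
  choose ε hε K hK using h'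
  obtain ⟨t, htC, hcov⟩ := hC.elim_nhds_subcover (fun z => Metric.ball z (ε z / 2))
    (fun z _ => Metric.ball_mem_nhds z (by have := hε z; positivity))
  have htne : t.Nonempty := by
    rcases hne with ⟨x, hx⟩
    rcases Set.mem_iUnion₂.1 (hcov hx) with ⟨j, hj, _⟩
    exact ⟨j, hj⟩
  set δ : ℝ := t.inf' htne fun z => ε z / 2 with hδdef
  have hδpos : 0 < δ := by
    rw [hδdef, Finset.lt_inf'_iff]
    intro z _
    have := hε z; positivity
  set L : NNReal := t.sup fun z => K z with hLdef
  refine ⟨δ, hδpos, L, L.coe_nonneg, ?_⟩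
  intro z hz s hs
  rcases Set.mem_iUnion₂.1 (hcov hz) with ⟨j, hj, hzj⟩
  have hδj : δ ≤ ε j / 2 := Finset.inf'_le _ hj
  have hzball : z ∈ Metric.ball j (ε j) := by
    rw [Metric.mem_ball] at hzj ⊢
    linarith [hε j]
  have hsball : s ∈ Metric.ball j (ε j) := by
    rw [Metric.mem_ball] at hzj ⊢
    have := dist_triangle s z j
    linarith
  have hlipj := hK j (htC j hj)
  have := hlipj.dist_le_mul s hsball z hzball
  rw [dist_eq_norm, dist_eq_norm] at this
  rw [hg0 z hz, sub_zero] at this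
  calc ‖g s‖ ≤ (K j : ℝ) * ‖s - z‖ := this
    _ ≤ (L : ℝ) * ‖s - z‖ := by
        gcongr
        exact_mod_cast Finset.le_sup (f := fun z => K z) hj
end Aux3

set_option maxHeartbeats 4000000 in
/-- For a degree-zero homogeneous `C^{2,1}` perturbation `q` vanishing on the half
space `{y₁ ≤ 0}`, on the upper unit hemisphere one has the quadratic decay estimates
`|q(y)| ≤ a₀ y₁²`, `|Dq(y)| ≤ a₁ y₁`, and `|∂q/∂x_i(y)| ≤ a₄ y₁²` for `i ≥ 2`. -/
theorem perturbation_decay_estimates (n : ℕ) [NeZero n] (hn : 2 ≤ n)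
    (q : EuclideanSpace ℝ (Fin n) → ℝ)
    (hq2 : ContDiffOn ℝ 2 q {x : EuclideanSpace ℝ (Fin n) | x ≠ 0})
    (hq21 : ∀ x : EuclideanSpace ℝ (Fin n), x ≠ 0 →
      ∃ ε > (0 : ℝ), ∃ K : NNReal,
        LipschitzOnWith K (fderiv ℝ (fderiv ℝ q)) (Metric.ball x ε))
    (hqhom : ∀ x : EuclideanSpace ℝ (Fin n), x ≠ 0 → q x = q (‖x‖⁻¹ • x))
    (hqzero : ∀ x : EuclideanSpace ℝ (Fin n), x ≠ 0 → x 0 ≤ 0 → q x = 0) :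
    ∃ a₀ > (0 : ℝ), ∃ a₁ > (0 : ℝ), ∃ a₄ > (0 : ℝ),
      ∀ y : EuclideanSpace ℝ (Fin n), ‖y‖ = 1 → 0 ≤ y 0 →
        |q y| ≤ a₀ * (y 0) ^ 2 ∧
        ‖gradient q y‖ ≤ a₁ * y 0 ∧
        ∀ i : Fin n, i ≠ 0 → |gradient q y i| ≤ a₄ * (y 0) ^ 2 := by
  set f := fderiv ℝ q with hfdef
  set g := fderiv ℝ f with hgdef
  have contAt := aux_contDiffAt q hq2
  have vanish := aux_vanish q hq2 hqzero
  set C : Set (EuclideanSpace ℝ (Fin n)) :=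
    {x | x 0 = 0 ∧ 1/2 ≤ ‖x‖ ∧ ‖x‖ ≤ 1} with hCdef
  have hCne : ∀ z ∈ C, z ≠ (0 : EuclideanSpace ℝ (Fin n)) := by
    intro z hz h0
    rw [hCdef, h0] at hz
    have h2 : (1:ℝ)/2 ≤ ‖(0:EuclideanSpace ℝ (Fin n))‖ := hz.2.1
    simp at h2
    linarith
  have hCcompact : IsCompact C := by
    apply Metric.isCompact_of_isClosed_isBounded
    · exact (isClosed_eq (EuclideanSpace.proj (0 : Fin n)).continuous continuous_const).inter
        ((isClosed_le continuous_const continuous_norm).inter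
          (isClosed_le continuous_norm continuous_const))
    · exact (Metric.isBounded_closedBall (x := (0:EuclideanSpace ℝ (Fin n))) (r := 1)).subset
        fun x hx => by
          rw [Metric.mem_closedBall, dist_zero_right]
          exact hx.2.2
  have hg0C : ∀ z ∈ C, g z = 0 := fun z hz =>
    (vanish z (hCne z hz) (le_of_eq hz.1)).2.2
  obtain ⟨δ, hδ, L, hL0, hLip⟩ :=
    aux_unif_lip g C hCcompact (fun z hz => hq21 z (hCne z hz)) hg0C
  -- sup bounds on the sphere
  have hsph : IsCompact (Metric.sphere (0 : EuclideanSpace ℝ (Fin n)) 1) := isCompact_sphere 0 1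
  have hne_sph : ∀ x ∈ Metric.sphere (0 : EuclideanSpace ℝ (Fin n)) 1,
      x ≠ (0 : EuclideanSpace ℝ (Fin n)) := by
    intro x hx h0
    rw [mem_sphere_zero_iff_norm] at hx
    rw [h0] at hx
    simp at hx
  have hcq : ContinuousOn q (Metric.sphere 0 1) := fun x hx =>
    ((contAt x (hne_sph x hx)).continuousAt).continuousWithinAt
  have hcf : ContinuousOn f (Metric.sphere 0 1) := fun x hx =>
    (((contAt x (hne_sph x hx)).fderiv_right (m := 1) (by norm_num)).continuousAt).continuousWithinAt
  obtain ⟨M₀, hM₀⟩ := hsph.exists_bound_of_continuousOn hcq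
  obtain ⟨M₁, hM₁⟩ := hsph.exists_bound_of_continuousOn hcf
  set M : ℝ := max (max M₀ M₁) 0 with hMdef
  have hM0 : 0 ≤ M := le_max_right _ _
  set c : ℝ := min (δ/2) (1/2) with hcdef
  have hc : 0 < c := lt_min (by linarith) (by norm_num)
  have hc12 : c ≤ 1/2 := min_le_right _ _
  set A : ℝ := max L (M / c^2) + 1 with hAdef
  have hLA : L ≤ A := by
    have h := le_max_left L (M / c^2); rw [hAdef]; linarith
  have hMA : M / c^2 ≤ A := by
    have h := le_max_right L (M / c^2); rw [hAdef]; linarith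
  have hA : 0 < A := by
    have h1 : (0:ℝ) ≤ max L (M / c^2) := le_trans hL0 (le_max_left _ _)
    rw [hAdef]; linarith
  refine ⟨A, hA, A, hA, A, hA, ?_⟩
  intro y hy hy0
  have hysph : y ∈ Metric.sphere (0 : EuclideanSpace ℝ (Fin n)) 1 := by
    rw [mem_sphere_zero_iff_norm]; exact hy
  have hy0le1 : y 0 ≤ 1 := le_trans (le_abs_self _)
    (le_trans (aux_abs_coord_le_norm y 0) (le_of_eq hy))
  have key : |q y| ≤ A * (y 0)^2 ∧ ‖f y‖ ≤ A * (y 0)^2 := by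
    rcases le_or_gt c (y 0) with hbig | hsmall
    · have hcy : c^2 ≤ (y 0)^2 := by nlinarith
      have hMy : M ≤ A * (y 0)^2 := by
        have : M = (M / c^2) * c^2 := by field_simp
        rw [this]
        calc (M / c^2) * c^2 ≤ A * c^2 := by
              apply mul_le_mul_of_nonneg_right hMA (by positivity)
          _ ≤ A * (y 0)^2 := by
              apply mul_le_mul_of_nonneg_left hcy hA.le
      constructor
      · calc |q y| = ‖q y‖ := (Real.norm_eq_abs _).symm
          _ ≤ M₀ := hM₀ y hysph
          _ ≤ M := le_trans (le_max_left _ _) (le_max_left _ _)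
          _ ≤ A * (y 0)^2 := hMy
      · calc ‖f y‖ ≤ M₁ := hM₁ y hysph
          _ ≤ M := le_trans (le_max_right _ _) (le_max_left _ _)
          _ ≤ A * (y 0)^2 := hMy
    · -- small first coordinate: Taylor estimates from the equator point z
      set e₀ : EuclideanSpace ℝ (Fin n) := EuclideanSpace.single (0 : Fin n) (1:ℝ) with he₀
      set z : EuclideanSpace ℝ (Fin n) := y - (y 0) • e₀ with hzdef
      have hz0 : z 0 = 0 := by
        have : z 0 = y 0 - (y 0) * (e₀ 0) := rfl
        rw [this]
        have : e₀ 0 = 1 := by simp [he₀, EuclideanSpace.single_apply]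
        rw [this]; ring
      have hinner : ⟪z, e₀⟫ = 0 := by
        rw [he₀, EuclideanSpace.inner_single_right]
        simp [hz0]
      have hyz : y - z = (y 0) • e₀ := by rw [hzdef]; abel
      have he₀norm : ‖e₀‖ = 1 := by rw [he₀]; simp
      have hz2 : ‖z‖^2 = 1 - (y 0)^2 := by
        have hzy : z + (y 0) • e₀ = y := by rw [hzdef]; abel
        have h4 := norm_add_sq_real z ((y 0) • e₀)
        rw [hzy, hy, real_inner_smul_right, hinner, norm_smul, he₀norm, mul_one,
          Real.norm_eq_abs, abs_of_nonneg hy0] at h4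
        nlinarith [h4]
      have hznorm_ub : ‖z‖ ≤ 1 := by
        have h5 : ‖z‖^2 ≤ 1^2 := by rw [hz2]; nlinarith [sq_nonneg (y 0)]
        exact le_of_pow_le_pow_left₀ two_ne_zero zero_le_one h5
      have hznorm_lb : 1/2 ≤ ‖z‖ := by
        have hyc : y 0 ≤ 1/2 := le_trans hsmall.le hc12
        have h5 : (1/2:ℝ)^2 ≤ ‖z‖^2 := by rw [hz2]; nlinarith [sq_nonneg (y 0)]
        exact le_of_pow_le_pow_left₀ two_ne_zero (norm_nonneg z) h5
      have hzC : z ∈ C := ⟨hz0, hznorm_lb, hznorm_ub⟩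
      obtain ⟨hqz, hfz, -⟩ := vanish z (hCne z hzC) (le_of_eq hz0)
      set S : Set (EuclideanSpace ℝ (Fin n)) := segment ℝ z y with hSdef
      have hconv : Convex ℝ S := convex_segment z y
      have hzS : z ∈ S := left_mem_segment ℝ z y
      have hyS : y ∈ S := right_mem_segment ℝ z y
      have hdistyz : ‖y - z‖ = y 0 := by
        rw [hyz, norm_smul, he₀norm]
        simp [abs_of_nonneg hy0]
      have hseg_dist : ∀ s ∈ S, ‖s - z‖ ≤ y 0 := by
        intro s hs
        have hsub : S ⊆ Metric.closedBall z (y 0) := by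
          apply (convex_closedBall z (y 0)).segment_subset
          · exact Metric.mem_closedBall_self hy0
          · rw [Metric.mem_closedBall, dist_eq_norm, hdistyz]
        have := hsub hs
        rw [Metric.mem_closedBall, dist_eq_norm] at this
        exact this
      have hseg_perp : ∀ s ∈ S, ⟪z, s - z⟫ = 0 := by
        intro s hs
        obtain ⟨a, b, ha, hb, hab, hsum⟩ := hs
        have hsz : s - z = b • (y - z) := by
          rw [← hsum]
          have haa : a = 1 - b := by linarith
          rw [haa]
          module
        rw [hsz, real_inner_smul_right, hyz, real_inner_smul_right, hinner]
        ring
      have hseg_norm : ∀ s ∈ S, 1/2 ≤ ‖s‖ := by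
        intro s hs
        have h1 : ‖s‖^2 = ‖z‖^2 + ‖s - z‖^2 := by
          have h2 := norm_add_sq_real z (s - z)
          rw [hseg_perp s hs] at h2
          have h3 : z + (s - z) = s := by abel
          rw [h3] at h2
          linarith
        nlinarith [norm_nonneg s, sq_nonneg ‖s - z‖]
      have hseg_ne : ∀ s ∈ S, s ≠ (0 : EuclideanSpace ℝ (Fin n)) := by
        intro s hs h0
        have := hseg_norm s hs
        rw [h0] at this
        simp at this
        linarith
      have hdiffq : ∀ s ∈ S, DifferentiableAt ℝ q s := fun s hs =>
        (contAt s (hseg_ne s hs)).differentiableAt (by norm_num)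
      have hdifff : ∀ s ∈ S, DifferentiableAt ℝ f s := fun s hs =>
        ((contAt s (hseg_ne s hs)).fderiv_right (m := 1) (by norm_num)).differentiableAt one_ne_zero
      have hgbound : ∀ s ∈ S, ‖fderiv ℝ f s‖ ≤ L * (y 0) := by
        intro s hs
        have hd : dist s z < δ := by
          rw [dist_eq_norm]
          calc ‖s - z‖ ≤ y 0 := hseg_dist s hs
            _ ≤ c := hsmall.le
            _ ≤ δ/2 := min_le_left _ _
            _ < δ := by linarith
        calc ‖fderiv ℝ f s‖ = ‖g s‖ := by rw [hgdef]
          _ ≤ L * ‖s - z‖ := hLip z hzC s hd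
          _ ≤ L * (y 0) := mul_le_mul_of_nonneg_left (hseg_dist s hs) hL0
      have hfbound : ∀ s ∈ S, ‖f s‖ ≤ L * (y 0) * (y 0) := by
        intro s hs
        have hfz2 : f z = 0 := by rw [hfdef]; exact hfz
        have := hconv.norm_image_sub_le_of_norm_fderiv_le hdifff hgbound hzS hs
        rw [hfz2, sub_zero] at this
        calc ‖f s‖ ≤ L * (y 0) * ‖s - z‖ := this
          _ ≤ L * (y 0) * (y 0) :=
            mul_le_mul_of_nonneg_left (hseg_dist s hs) (by positivity)
      have hfy2 : ‖f y‖ ≤ A * (y 0)^2 := by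
        have := hfbound y hyS
        calc ‖f y‖ ≤ L * (y 0) * (y 0) := this
          _ = L * (y 0)^2 := by ring
          _ ≤ A * (y 0)^2 := mul_le_mul_of_nonneg_right hLA (by positivity)
      have hqy2 : |q y| ≤ A * (y 0)^2 := by
        have hqbound : ∀ s ∈ S, ‖fderiv ℝ q s‖ ≤ L * (y 0) * (y 0) := by
          intro s hs
          have : fderiv ℝ q s = f s := by rw [hfdef]
          rw [this]
          exact hfbound s hs
        have hmvt := hconv.norm_image_sub_le_of_norm_fderiv_le hdiffq hqbound hzS hyS
        rw [hqz, sub_zero, hdistyz] at hmvt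
        have hy01 : y 0 ≤ 1 := hy0le1
        calc |q y| = ‖q y‖ := (Real.norm_eq_abs _).symm
          _ ≤ L * (y 0) * (y 0) * (y 0) := hmvt
          _ ≤ L * (y 0)^2 := by
              nlinarith [mul_nonneg (mul_nonneg hL0 hy0) hy0, hy01]
          _ ≤ A * (y 0)^2 := mul_le_mul_of_nonneg_right hLA (by positivity)
      exact ⟨hqy2, hfy2⟩
  refine ⟨key.1, ?_, ?_⟩
  · rw [aux_norm_gradient]
    have h1 : ‖fderiv ℝ q y‖ = ‖f y‖ := by rw [hfdef]
    rw [h1]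
    calc ‖f y‖ ≤ A * (y 0)^2 := key.2
      _ ≤ A * (y 0) := by
          nlinarith [mul_nonneg (mul_nonneg hA.le hy0) (sub_nonneg.mpr hy0le1)]
  · intro i _
    calc |gradient q y i| ≤ ‖gradient q y‖ := aux_abs_coord_le_norm _ i
      _ = ‖f y‖ := by rw [aux_norm_gradient, hfdef]
      _ ≤ A * (y 0)^2 := key.2
end

section
/- Let n ≥ 2, l > 0, M > 0, and δ ∈ (0, π/2). Then for every y ∈ 𝕊^{n-1} with arccos(-y₁) < δ (i.e. y lies in the geodesic ball of radius δ around -e₁) and every x_n ≥ 0, one has M·V₊(y) + √( l² + (x_n - M·y_n)² + M²·(1 - y₁² - y_n²) ) ≥ -M + √( l² + (x_n + M)² ). -/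
open Filter Real

set_option maxHeartbeats 1000000

/-- Comparison inequality between the supersolution and subsolution in the perpendicular
directions: for `y` in the geodesic ball of radius `δ < π/2` about `-e₁` and `xₙ ≥ 0`,
`M·V₊(y) + √(l² + (xₙ - M yₙ)² + M²(1 - y₁² - yₙ²)) ≥ -M + √(l² + (xₙ + M)²)`. -/
theorem supersolution_dominates_subsolution (n : ℕ) [NeZero n] (hn : 2 ≤ n)
    (l M δ : ℝ) (hl : 0 < l) (hM : 0 < M) (hδ : δ ∈ Set.Ioo 0 (Real.pi / 2)) :
    ∀ y : EuclideanSpace ℝ (Fin n), ‖y‖ = 1 → Real.arccos (-(y 0)) < δ →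
      ∀ xn : ℝ, 0 ≤ xn →
        M * Vplus n y +
            Real.sqrt (l ^ 2 + (xn - M * y ⟨n - 1, by omega⟩) ^ 2 +
              M ^ 2 * (1 - (y 0) ^ 2 - (y ⟨n - 1, by omega⟩) ^ 2)) ≥
          -M + Real.sqrt (l ^ 2 + (xn + M) ^ 2) := by
  intro y hy harc xn hxn
  -- y₀ < 0
  have hy0 : y 0 < 0 := by
    have h1 : Real.arccos (-(y 0)) < Real.pi / 2 := lt_trans harc hδ.2
    have := Real.arccos_lt_pi_div_two.mp h1
    linarith
  -- sum of squares is 1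
  have hsum : ∑ i, y i ^ 2 = 1 := by
    have h := EuclideanSpace.norm_eq y
    rw [hy] at h
    have hnn : 0 ≤ ∑ i, ‖y i‖ ^ 2 := Finset.sum_nonneg fun i _ => sq_nonneg _
    have h1 : ∑ i, ‖y i‖ ^ 2 = 1 := by
      nlinarith [Real.sq_sqrt hnn]
    simpa [Real.norm_eq_abs, sq_abs] using h1
  set k : Fin n := ⟨n - 1, by omega⟩ with hk
  have hkne : k ≠ 0 := by
    have h0 : ((0 : Fin n) : ℕ) = 0 := Fin.val_zero n
    simp only [hk, Ne, Fin.ext_iff, h0]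
    omega
  have hkmem : k ∈ Finset.univ.erase (0 : Fin n) :=
    Finset.mem_erase.mpr ⟨hkne, Finset.mem_univ _⟩
  have hErase : ∑ i ∈ Finset.univ.erase (0 : Fin n), y i ^ 2 = 1 - y 0 ^ 2 := by
    have h := Finset.sum_erase_add Finset.univ (fun i => y i ^ 2) (Finset.mem_univ (0 : Fin n))
    simp only at h
    linarith [hsum, h]
  have hak : (y k) ^ 2 ≤ 1 - y 0 ^ 2 := by
    rw [← hErase]
    exact Finset.single_le_sum (fun i _ => sq_nonneg (y i)) hkmem
  set s : ℝ := Real.sqrt (1 - y 0 ^ 2) with hs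
  have hsnn : 0 ≤ s := Real.sqrt_nonneg _
  have h1y : 0 ≤ 1 - y 0 ^ 2 := le_trans (sq_nonneg _) hak
  have hs2 : s ^ 2 = 1 - y 0 ^ 2 := Real.sq_sqrt h1y
  have hVp : Vplus n y = s := by
    rw [Vplus, if_neg (not_le.mpr hy0), hErase]
  have has : y k ≤ s := by
    nlinarith [sq_nonneg (s - y k), sq_nonneg (s + y k)]
  -- lower bound on the first sqrt
  set A : ℝ := Real.sqrt (l ^ 2 + (xn - M * s) ^ 2) with hA
  have hAnn : 0 ≤ A := Real.sqrt_nonneg _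
  have hA2 : A ^ 2 = l ^ 2 + (xn - M * s) ^ 2 :=
    Real.sq_sqrt (by positivity)
  have hAge : xn - M * s ≤ A := by
    have h2 := Real.sqrt_le_sqrt (show (xn - M * s) ^ 2 ≤ l ^ 2 + (xn - M * s) ^ 2 by nlinarith)
    calc xn - M * s ≤ |xn - M * s| := le_abs_self _
      _ = Real.sqrt ((xn - M * s) ^ 2) := (Real.sqrt_sq_eq_abs _).symm
      _ ≤ A := h2
  have hinner : l ^ 2 + (xn - M * s) ^ 2 ≤
      l ^ 2 + (xn - M * y k) ^ 2 + M ^ 2 * (1 - (y 0) ^ 2 - (y k) ^ 2) := by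
    nlinarith [mul_nonneg (mul_nonneg hM.le hxn) (sub_nonneg.mpr has)]
  have hsqrt1 : A ≤ Real.sqrt (l ^ 2 + (xn - M * y k) ^ 2 +
      M ^ 2 * (1 - (y 0) ^ 2 - (y k) ^ 2)) := Real.sqrt_le_sqrt hinner
  -- Lipschitz bound
  have hB : Real.sqrt (l ^ 2 + (xn + M) ^ 2) ≤ A + M + M * s := by
    rw [show A + M + M * s = Real.sqrt ((A + M + M * s) ^ 2) from
      (Real.sqrt_sq (by positivity)).symm]
    apply Real.sqrt_le_sqrt
    have key : 0 ≤ 2 * M * (1 + s) * (A - (xn - M * s)) :=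
      mul_nonneg (by positivity) (sub_nonneg.mpr hAge)
    nlinarith [key, hA2]
  rw [hVp]
  have hgoal : -M + Real.sqrt (l ^ 2 + (xn + M) ^ 2) ≤ M * s + Real.sqrt (l ^ 2 + (xn - M * y k) ^ 2 + M ^ 2 * (1 - (y 0) ^ 2 - (y k) ^ 2)) := by
    linarith [hsqrt1, hB]
  exact hgoal
end

section
/- Let n ≥ 1, let F be a nonempty closed subset of the unit sphere 𝕊^{n-1} ⊂ ℝⁿ, define V_F(x) = sup_{λ ∈ F} x·λ, and let u : ℝⁿ → ℝ be strictly convex (hence continuous) with |u(x) - V_F(x)| ≤ C for all x ∈ ℝⁿ, for some constant C > 0. Then for every ξ in the interior of the convex hull of F, the supremum sup_{x ∈ ℝⁿ}( ξ·x - u(x) ) is finite and attained at a unique point x₀ ∈ ℝⁿ, i.e. there exists exactly one x₀ with ξ·x₀ - u(x₀) = sup_{x ∈ ℝⁿ}( ξ·x - u(x) ). -/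
open Filter Real
open scoped RealInnerProductSpace

/-- For a strictly convex `u` at bounded distance from `V_F`, and any `ξ` in the interior
of the convex hull of `F`, the supremum defining the Legendre transform `u*(ξ)` is
attained at exactly one point. -/
theorem legendre_sup_attained_unique (n : ℕ) (hn : 1 ≤ n)
    (F : Set (EuclideanSpace ℝ (Fin n))) (hFne : F.Nonempty) (hFcl : IsClosed F)
    (hFsph : F ⊆ Metric.sphere (0 : EuclideanSpace ℝ (Fin n)) 1)
    (u : EuclideanSpace ℝ (Fin n) → ℝ)
    (hconv : StrictConvexOn ℝ Set.univ u)
    (C : ℝ) (hC : 0 < C)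
    (hu : ∀ x : EuclideanSpace ℝ (Fin n),
      |u x - sSup ((fun l : EuclideanSpace ℝ (Fin n) => ⟪x, l⟫) '' F)| ≤ C) :
    ∀ ξ ∈ interior (convexHull ℝ F),
      ∃! x₀ : EuclideanSpace ℝ (Fin n),
        ∀ x : EuclideanSpace ℝ (Fin n), ⟪ξ, x⟫ - u x ≤ ⟪ξ, x₀⟫ - u x₀ := by
  intro ξ hξ
  -- continuity of u
  have hucont : Continuous u := by
    have := ConvexOn.continuousOn isOpen_univ hconv.convexOn
    rwa [continuousOn_univ] at this
  -- the objective function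
  set f : EuclideanSpace ℝ (Fin n) → ℝ := fun x => ⟪ξ, x⟫ - u x with hf
  have hfc : Continuous f :=
    (continuous_const.inner continuous_id).sub hucont
  -- ε-ball inside convex hull
  obtain ⟨ε, hε, hball⟩ : ∃ ε > 0, Metric.ball ξ ε ⊆ convexHull ℝ F := by
    rcases Metric.mem_nhds_iff.1 (mem_interior_iff_mem_nhds.1 hξ) with ⟨ε, hε, h⟩
    exact ⟨ε, hε, h⟩
  -- bddAbove of the image sets
  have hFbdd : ∀ x : EuclideanSpace ℝ (Fin n),
      BddAbove ((fun l : EuclideanSpace ℝ (Fin n) => ⟪x, l⟫) '' F) := by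
    intro x
    refine ⟨‖x‖, ?_⟩
    rintro _ ⟨l, hl, rfl⟩
    have hl1 : ‖l‖ = 1 := by simpa using hFsph hl
    calc ⟪x, l⟫ ≤ ‖x‖ * ‖l‖ := real_inner_le_norm x l
      _ = ‖x‖ := by rw [hl1, mul_one]
  -- for y in convexHull F, ⟪x,y⟫ ≤ sSup image
  have hhull : ∀ x : EuclideanSpace ℝ (Fin n), ∀ y ∈ convexHull ℝ F,
      ⟪x, y⟫ ≤ sSup ((fun l : EuclideanSpace ℝ (Fin n) => ⟪x, l⟫) '' F) := by
    intro x y hy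
    have hconvset : Convex ℝ {w : EuclideanSpace ℝ (Fin n) |
        ⟪x, w⟫ ≤ sSup ((fun l : EuclideanSpace ℝ (Fin n) => ⟪x, l⟫) '' F)} := by
      exact convex_halfSpace_le ⟨fun a b => inner_add_right x a b, fun c a => real_inner_smul_right x a c⟩ _
    have hsub : F ⊆ {w : EuclideanSpace ℝ (Fin n) |
        ⟪x, w⟫ ≤ sSup ((fun l : EuclideanSpace ℝ (Fin n) => ⟪x, l⟫) '' F)} := by
      intro w hw
      exact le_csSup (hFbdd x) ⟨w, hw, rfl⟩
    exact convexHull_min hsub hconvset hy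
  -- key coercivity bound : f x ≤ C - (ε/2) ‖x‖
  have hbound : ∀ x : EuclideanSpace ℝ (Fin n), f x ≤ C - (ε / 2) * ‖x‖ := by
    intro x
    have hS : sSup ((fun l : EuclideanSpace ℝ (Fin n) => ⟪x, l⟫) '' F) ≤ u x + C := by
      have := (abs_le.1 (hu x)).1
      linarith
    rcases eq_or_ne x 0 with rfl | hx0
    · obtain ⟨l, hl⟩ := hFne
      have h0 : (0:ℝ) ≤ sSup ((fun l : EuclideanSpace ℝ (Fin n) =>
          ⟪(0 : EuclideanSpace ℝ (Fin n)), l⟫) '' F) := by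
        refine le_csSup (hFbdd 0) ⟨l, hl, ?_⟩
        simp
      simp only [hf]
      simp only [inner_zero_right, norm_zero, mul_zero]
      linarith
    · set c : ℝ := (ε / 2) / ‖x‖ with hc
      have hxn : (0:ℝ) < ‖x‖ := norm_pos_iff.2 hx0
      have hp : ξ + c • x ∈ Metric.ball ξ ε := by
        have : dist (ξ + c • x) ξ = c * ‖x‖ := by
          rw [dist_eq_norm]
          simp [norm_smul, abs_of_nonneg (by positivity : (0:ℝ) ≤ c)]
        rw [Metric.mem_ball, this, hc, div_mul_cancel₀ _ hxn.ne']
        linarith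
      have hle := hhull x _ (hball hp)
      have hinner : ⟪x, ξ + c • x⟫ = ⟪x, ξ⟫ + (ε / 2) * ‖x‖ := by
        rw [inner_add_right, real_inner_smul_right, real_inner_self_eq_norm_sq, hc]
        field_simp
      rw [hinner] at hle
      have hsymm : ⟪ξ, x⟫ = ⟪x, ξ⟫ := real_inner_comm x ξ
      simp only [hf]
      linarith
  -- existence of maximizer
  have htend : Tendsto f (cocompact (EuclideanSpace ℝ (Fin n))) atBot := by
    have h2 : Tendsto (fun x : EuclideanSpace ℝ (Fin n) => (ε / 2) * ‖x‖)
        (cocompact (EuclideanSpace ℝ (Fin n))) atTop :=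
      tendsto_norm_cocompact_atTop.const_mul_atTop (by linarith : (0:ℝ) < ε / 2)
    have h3 := tendsto_neg_atTop_atBot.comp h2
    have h4 := tendsto_atBot_add_const_left _ C h3
    refine tendsto_atBot_mono hbound ?_
    simpa [Function.comp, sub_eq_add_neg] using h4
  obtain ⟨x₀, hx₀⟩ : ∃ x₀, ∀ y, f y ≤ f x₀ := by
    have hnegc : Continuous fun x => -f x := hfc.neg
    have hnegt : Tendsto (fun x => -f x) (cocompact (EuclideanSpace ℝ (Fin n))) atTop := by
      exact tendsto_neg_atBot_atTop.comp htend
    obtain ⟨x₀, hx₀⟩ := hnegc.exists_forall_le hnegt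
    exact ⟨x₀, fun y => by linarith [hx₀ y]⟩
  refine ⟨x₀, fun x => hx₀ x, ?_⟩
  -- uniqueness by strict convexity
  intro y hy
  by_contra hne
  have heq : f y = f x₀ := le_antisymm (hx₀ y) (hy x₀)
  have hum : u ((1/2 : ℝ) • y + (1/2 : ℝ) • x₀) < (1/2 : ℝ) * u y + (1/2 : ℝ) * u x₀ :=
    hconv.2 (Set.mem_univ y) (Set.mem_univ x₀) hne (by norm_num) (by norm_num) (by norm_num)
  have hlin : ⟪ξ, (1/2 : ℝ) • y + (1/2 : ℝ) • x₀⟫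
      = (1/2 : ℝ) * ⟪ξ, y⟫ + (1/2 : ℝ) * ⟪ξ, x₀⟫ := by
    rw [inner_add_right, real_inner_smul_right, real_inner_smul_right]
  have hfm : f x₀ < f ((1/2 : ℝ) • y + (1/2 : ℝ) • x₀) := by
    simp only [hf] at heq ⊢
    rw [hlin]
    linarith
  exact absurd (hx₀ ((1/2 : ℝ) • y + (1/2 : ℝ) • x₀)) (not_le.2 hfm)
end

section
/- Let v : ℝⁿ → ℝ be convex and globally Lipschitz, and suppose v is differentiable on an open set U ⊆ ℝⁿ with gradient ∇v continuous on U. For ε > 0 define the inf-convolution (Moreau envelope) g_ε(ξ) = inf_{η ∈ ℝⁿ} ( v(η) + |ξ - η|²/(2ε) ). Then for every compact set K ⊂ U and every δ > 0 there exists ε > 0 such that g_ε is differentiable at every point of K and |∇g_ε(ξ) - ∇v(ξ)| ≤ δ for all ξ ∈ K. -/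
open Filter Real
open scoped RealInnerProductSpace

theorem infConv_aux (n : ℕ) (v : EuclideanSpace ℝ (Fin n) → ℝ)
    (hconv : ConvexOn ℝ Set.univ v)
    (L : NNReal) (hlip : LipschitzWith L v)
    (ε : ℝ) (hε : 0 < ε) (ξ : EuclideanSpace ℝ (Fin n))
    (hdiff : ∀ x ∈ Metric.closedBall ξ (2 * ε * L), DifferentiableAt ℝ v x) :
    ∃ η₀ ∈ Metric.closedBall ξ (2 * ε * L),
      HasGradientAt (fun ζ : EuclideanSpace ℝ (Fin n) =>
          ⨅ η : EuclideanSpace ℝ (Fin n), (v η + ‖ζ - η‖ ^ 2 / (2 * ε)))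
        (gradient v η₀) ξ := by
  set f : EuclideanSpace ℝ (Fin n) → ℝ := fun η => v η + ‖ξ - η‖ ^ 2 / (2 * ε) with hf
  have hLnn : (0:ℝ) ≤ (L:ℝ) := L.coe_nonneg
  have hrad : (0:ℝ) ≤ 2 * ε * L := by positivity
  have hcont : Continuous f := by
    have := hlip.continuous
    fun_prop
  -- minimizer on closed ball
  obtain ⟨η₀, hη₀B, hmin⟩ :=
    (isCompact_closedBall ξ (2 * ε * L)).exists_isMinOn
      ⟨ξ, Metric.mem_closedBall_self hrad⟩ hcont.continuousOn
  -- global minimizer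
  have hglobal : ∀ η, f η₀ ≤ f η := by
    intro η
    by_cases hη : η ∈ Metric.closedBall ξ (2 * ε * L)
    · exact hmin hη
    · have hd : 2 * ε * L < ‖ξ - η‖ := by
        rw [Metric.mem_closedBall, dist_comm] at hη
        push_neg at hη
        rwa [dist_eq_norm] at hη
      have hlb : v ξ - L * ‖ξ - η‖ ≤ v η := by
        have := hlip.dist_le_mul ξ η
        rw [Real.dist_eq, dist_eq_norm] at this
        have := abs_le.mp this
        linarith [this.1, this.2]
      have : f ξ < f η := by
        simp only [hf, sub_self, norm_zero, ne_eq, OfNat.ofNat_ne_zero,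
          not_false_eq_true, zero_pow, zero_div]
        have h1 : (0:ℝ) < ‖ξ - η‖ := lt_of_le_of_lt hrad hd
        have : (L:ℝ) * ‖ξ - η‖ < ‖ξ - η‖ ^ 2 / (2 * ε) := by
          rw [lt_div_iff₀ (by positivity)]
          nlinarith
        nlinarith
      exact le_of_lt (lt_of_le_of_lt (hmin (Metric.mem_closedBall_self hrad)) this)
  set p : EuclideanSpace ℝ (Fin n) := ε⁻¹ • (ξ - η₀) with hp
  -- p is a subgradient of v at η₀
  have hsub : ∀ η, v η₀ + ⟪p, η - η₀⟫ ≤ v η := by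
    intro η
    set b := η - η₀ with hb
    have hC : (0:ℝ) ≤ ‖b‖ ^ 2 / (2 * ε) := by positivity
    have key : ∀ t : ℝ, 0 < t → t ≤ 1 →
        ⟪p, b⟫ ≤ (v η - v η₀) + t * (‖b‖ ^ 2 / (2 * ε)) := by
      intro t ht0 ht1
      have hconvineq : v (η₀ + t • b) ≤ v η₀ + t * (v η - v η₀) := by
        have h2 := hconv.2 (Set.mem_univ η₀) (Set.mem_univ η)
          (by linarith : (0:ℝ) ≤ 1 - t) ht0.le (by ring)
        have heq : (1 - t) • η₀ + t • η = η₀ + t • b := by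
          rw [hb]; module
        rw [heq, smul_eq_mul, smul_eq_mul] at h2
        linarith [h2]
      set I : ℝ := ⟪ξ - η₀, b⟫ with hI
      have hminineq : f η₀ ≤ f (η₀ + t • b) := hglobal _
      have hnorm : ‖ξ - (η₀ + t • b)‖ ^ 2
          = ‖ξ - η₀‖ ^ 2 - 2 * t * ⟪ξ - η₀, b⟫ + t ^ 2 * ‖b‖ ^ 2 := by
        have heq2 : ξ - (η₀ + t • b) = (ξ - η₀) - t • b := by module
        rw [heq2, norm_sub_sq_real, real_inner_smul_right, norm_smul]
        simp [abs_of_pos ht0]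
        ring
      have hip : ⟪p, b⟫ = ε⁻¹ * I := real_inner_smul_left _ _ _
      simp only [hf] at hminineq
      rw [hnorm] at hminineq
      rw [hip]
      have hε' : ε ≠ 0 := ne_of_gt hε
      have hmm : t * I / ε ≤ t * (v η - v η₀) + t ^ 2 * ‖b‖ ^ 2 / (2 * ε) := by
        have hsplit : (‖ξ - η₀‖ ^ 2 - 2 * t * I + t ^ 2 * ‖b‖ ^ 2) / (2 * ε)
            = ‖ξ - η₀‖ ^ 2 / (2 * ε) - t * I / ε + t ^ 2 * ‖b‖ ^ 2 / (2 * ε) := by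
          field_simp
        rw [hsplit] at hminineq
        linarith
      have h3 : t * (ε⁻¹ * I) ≤ t * ((v η - v η₀) + t * (‖b‖ ^ 2 / (2 * ε))) := by
        have e1 : t * (ε⁻¹ * I) = t * I / ε := by ring
        have e2 : t * ((v η - v η₀) + t * (‖b‖ ^ 2 / (2 * ε)))
            = t * (v η - v η₀) + t ^ 2 * ‖b‖ ^ 2 / (2 * ε) := by ring
        rw [e1, e2]
        exact hmm
      exact (mul_le_mul_iff_right₀ ht0).mp h3
    refine le_of_sub_nonneg ?_
    have : ⟪p, b⟫ ≤ v η - v η₀ := by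
      refine le_of_forall_pos_le_add ?_
      intro s hs
      set C := ‖b‖ ^ 2 / (2 * ε) with hCdef
      have ht0 : 0 < min 1 (s / (C + 1)) := lt_min one_pos (by positivity)
      have := key _ ht0 (min_le_left _ _)
      have htc : min 1 (s / (C + 1)) * C ≤ s := by
        calc min 1 (s / (C + 1)) * C ≤ (s / (C + 1)) * C :=
              mul_le_mul_of_nonneg_right (min_le_right _ _) hC
          _ ≤ s := by
              rw [div_mul_eq_mul_div, div_le_iff₀ (by positivity)]
              nlinarith
      linarith
    linarith
  -- the subgradient equals the gradient at η₀
  have hGat : HasGradientAt v (gradient v η₀) η₀ := (hdiff η₀ hη₀B).hasGradientAt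
  have hpG : gradient v η₀ = p := by
    apply ext_inner_left ℝ
    intro w
    suffices hkey : ⟪gradient v η₀, w⟫ = ⟪p, w⟫ by
      rw [real_inner_comm w (gradient v η₀), real_inner_comm w p] at * <;> exact hkey
    have hφd : HasDerivAt (fun t : ℝ => v (η₀ + t • w) - v η₀ - t * ⟪p, w⟫)
        (⟪gradient v η₀, w⟫ - ⟪p, w⟫) 0 := by
      have h1 : HasDerivAt (fun t : ℝ => η₀ + t • w) w 0 := by
        simpa using ((hasDerivAt_id (0 : ℝ)).smul_const w).const_add η₀
      have h2 : HasDerivAt (fun t : ℝ => v (η₀ + t • w)) ⟪gradient v η₀, w⟫ 0 := by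
        have hfd : HasFDerivAt v
            ((InnerProductSpace.toDual ℝ (EuclideanSpace ℝ (Fin n))) (gradient v η₀))
            ((fun t : ℝ => η₀ + t • w) 0) := by
          simpa using hasGradientAt_iff_hasFDerivAt.mp hGat
        have h3 := hfd.comp_hasDerivAt 0 h1
        exact h3
      have h4 : HasDerivAt (fun t : ℝ => t * ⟪p, w⟫) ⟪p, w⟫ 0 := by
        simpa using (hasDerivAt_id (0 : ℝ)).mul_const ⟪p, w⟫
      exact (h2.sub_const (v η₀)).sub h4
    have hloc : IsLocalMin (fun t : ℝ => v (η₀ + t • w) - v η₀ - t * ⟪p, w⟫) 0 := by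
      apply Filter.Eventually.of_forall
      intro t
      have h5 := hsub (η₀ + t • w)
      have h6 : (η₀ + t • w) - η₀ = t • w := by abel
      rw [h6, real_inner_smul_right] at h5
      simp only [zero_smul, add_zero, zero_mul]
      linarith
    have h7 := hloc.hasDerivAt_eq_zero hφd
    linarith [h7]
  -- key lower bound for the inf-convolution
  have hlow : ∀ h η : EuclideanSpace ℝ (Fin n),
      v η₀ + ‖ξ - η₀‖ ^ 2 / (2 * ε) + ⟪p, h⟫ ≤ v η + ‖ξ + h - η‖ ^ 2 / (2 * ε) := by
    intro h η
    have h1 := hsub η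
    set a := ξ - η₀ with ha
    set w := ξ + h - η with hw
    have hη : η - η₀ = a + h - w := by rw [ha, hw]; abel
    have hexp : ‖a - w‖ ^ 2 = ‖a‖ ^ 2 - 2 * ⟪a, w⟫ + ‖w‖ ^ 2 := by
      rw [@norm_sub_sq_real]
    have hsq : (0:ℝ) ≤ ‖a - w‖ ^ 2 := sq_nonneg _
    rw [hexp] at hsq
    have hpa : ⟪p, a⟫ = ε⁻¹ * ‖a‖ ^ 2 := by
      rw [hp, real_inner_smul_left, real_inner_self_eq_norm_sq]
    have hpw : ⟪p, w⟫ = ε⁻¹ * ⟪a, w⟫ := real_inner_smul_left _ _ _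
    have hph : ⟪p, η - η₀⟫ = ⟪p, a⟫ + ⟪p, h⟫ - ⟪p, w⟫ := by
      rw [hη, inner_sub_right, inner_add_right]
    have hε2 : (0:ℝ) < 2 * ε := by linarith
    rw [hph, hpa, hpw] at h1
    have key : ‖a‖ ^ 2 / (2 * ε) - ε⁻¹ * ‖a‖ ^ 2 + ε⁻¹ * ⟪a, w⟫ ≤ ‖w‖ ^ 2 / (2 * ε) := by
      have e : ‖a‖ ^ 2 / (2 * ε) - ε⁻¹ * ‖a‖ ^ 2 + ε⁻¹ * ⟪a, w⟫
          = (‖a‖ ^ 2 - 2 * ‖a‖ ^ 2 + 2 * ⟪a, w⟫) / (2 * ε) := by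
        field_simp
      rw [e]
      exact div_le_div_of_nonneg_right (by linarith) hε2.le
    linarith
  have hbdd : ∀ h : EuclideanSpace ℝ (Fin n),
      BddBelow (Set.range fun η => v η + ‖ξ + h - η‖ ^ 2 / (2 * ε)) := by
    intro h
    refine ⟨v η₀ + ‖ξ - η₀‖ ^ 2 / (2 * ε) + ⟪p, h⟫, ?_⟩
    rintro y ⟨η, rfl⟩
    exact hlow h η
  set g : EuclideanSpace ℝ (Fin n) → ℝ :=
    fun ζ => ⨅ η : EuclideanSpace ℝ (Fin n), (v η + ‖ζ - η‖ ^ 2 / (2 * ε)) with hg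
  have hgval : g ξ = v η₀ + ‖ξ - η₀‖ ^ 2 / (2 * ε) := by
    apply le_antisymm
    · have hb0 : BddBelow (Set.range fun η => v η + ‖ξ - η‖ ^ 2 / (2 * ε)) := by
        simpa using hbdd 0
      simpa using ciInf_le hb0 η₀
    · refine le_ciInf fun η => ?_
      have h9 := hlow 0 η
      simp only [inner_zero_right, add_zero] at h9
      simpa using h9
  have hup : ∀ h : EuclideanSpace ℝ (Fin n),
      g (ξ + h) ≤ v (η₀ + h) + ‖ξ - η₀‖ ^ 2 / (2 * ε) := by
    intro h
    have h10 := ciInf_le (hbdd h) (η₀ + h)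
    have e : ξ + h - (η₀ + h) = ξ - η₀ := by abel
    rw [e] at h10
    exact h10
  have hlow' : ∀ h : EuclideanSpace ℝ (Fin n), g ξ + ⟪p, h⟫ ≤ g (ξ + h) := by
    intro h
    rw [hgval]
    exact le_ciInf fun η => hlow h η
  refine ⟨η₀, hη₀B, ?_⟩
  rw [hpG, hasGradientAt_iff_isLittleO_nhds_zero]
  have hvlit := hasGradientAt_iff_isLittleO_nhds_zero.mp (hpG ▸ hGat)
  refine (Asymptotics.isBigO_of_le _ ?_).trans_isLittleO hvlit
  intro h
  have e0 : 0 ≤ g (ξ + h) - g ξ - ⟪p, h⟫ := by linarith [hlow' h]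
  have h3 := hsub (η₀ + h)
  have h6 : (η₀ + h) - η₀ = h := by abel
  rw [h6] at h3
  have e1 : g (ξ + h) - g ξ - ⟪p, h⟫ ≤ v (η₀ + h) - v η₀ - ⟪p, h⟫ := by
    have := hup h
    linarith [hgval]
  rw [Real.norm_eq_abs, Real.norm_eq_abs, abs_of_nonneg e0, abs_of_nonneg (by linarith : (0:ℝ) ≤ v (η₀ + h) - v η₀ - ⟪p, h⟫)]
  exact e1


/-- Gradient convergence of the Moreau envelope (inf-convolution): for a convex globally
Lipschitz `v`, differentiable with continuous gradient on an open set `U`, on every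
compact `K ⊆ U` the inf-convolution `g_ε` is differentiable and its gradient is
uniformly `δ`-close to that of `v`, provided `ε` is small enough. -/
theorem infConvolution_gradient_close (n : ℕ)
    (v : EuclideanSpace ℝ (Fin n) → ℝ)
    (hconv : ConvexOn ℝ Set.univ v)
    (L : NNReal) (hlip : LipschitzWith L v)
    (U : Set (EuclideanSpace ℝ (Fin n))) (hU : IsOpen U)
    (hdiff : ∀ x ∈ U, DifferentiableAt ℝ v x)
    (hgradcont : ContinuousOn (fun x => gradient v x) U) :
    ∀ K : Set (EuclideanSpace ℝ (Fin n)), IsCompact K → K ⊆ U →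
      ∀ δ > (0 : ℝ), ∃ ε > (0 : ℝ),
        ∀ ξ ∈ K,
          DifferentiableAt ℝ
            (fun ζ : EuclideanSpace ℝ (Fin n) =>
              ⨅ η : EuclideanSpace ℝ (Fin n), (v η + ‖ζ - η‖ ^ 2 / (2 * ε))) ξ ∧
          ‖gradient
              (fun ζ : EuclideanSpace ℝ (Fin n) =>
                ⨅ η : EuclideanSpace ℝ (Fin n), (v η + ‖ζ - η‖ ^ 2 / (2 * ε))) ξ -
            gradient v ξ‖ ≤ δ := by
  intro K hK hKU δ hδ
  obtain ⟨r, hr, hKr⟩ := hK.exists_cthickening_subset_open hU hKU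
  have hK' : IsCompact (Metric.cthickening r K) := hK.cthickening
  have hGC : ContinuousOn (fun x => gradient v x) (Metric.cthickening r K) :=
    hgradcont.mono hKr
  have hUC := hK'.uniformContinuousOn_of_continuous hGC
  obtain ⟨τ, hτ, hmod⟩ := Metric.uniformContinuousOn_iff.mp hUC δ hδ
  set c := min r τ with hc
  have hc0 : 0 < c := lt_min hr hτ
  have hLnn : (0:ℝ) ≤ (L:ℝ) := L.coe_nonneg
  refine ⟨c / (4 * L + 2), by positivity, ?_⟩
  intro ξ hξ
  set ε : ℝ := c / (4 * L + 2) with hε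
  have hε0 : 0 < ε := by positivity
  have hεL : 2 * ε * L ≤ c / 2 := by
    have h4 : (0:ℝ) < 4 * (L:ℝ) + 2 := by positivity
    rw [hε, show 2 * (c / (4 * (L:ℝ) + 2)) * (L:ℝ) = (2 * (L:ℝ) * c) / (4 * (L:ℝ) + 2) by ring,
      div_le_div_iff₀ h4 two_pos]
    nlinarith
  have hball : ∀ x ∈ Metric.closedBall ξ (2 * ε * L), x ∈ Metric.cthickening r K := by
    intro x hx
    refine Metric.mem_cthickening_of_dist_le x ξ r K hξ ?_
    have := Metric.mem_closedBall.mp hx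
    have hcr : c ≤ r := min_le_left _ _
    linarith
  obtain ⟨η₀, hη₀, hgrad⟩ := infConv_aux n v hconv L hlip ε hε0 ξ
    (fun x hx => hdiff x (hKr (hball x hx)))
  constructor
  · exact hgrad.differentiableAt
  · rw [hgrad.gradient]
    have hd : dist η₀ ξ ≤ 2 * ε * L := Metric.mem_closedBall.mp hη₀
    have hcτ : c ≤ τ := min_le_right _ _
    have h1 : dist η₀ ξ < τ := by linarith
    have hξ' : ξ ∈ Metric.cthickening r K :=
      Metric.mem_cthickening_of_dist_le ξ ξ r K hξ (by simpa using hr.le)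
    have h2 := hmod η₀ (hball η₀ hη₀) ξ hξ' h1
    rw [dist_eq_norm] at h2
    exact le_of_lt h2
end
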